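/- arXiv:1605.08322 — 3 statements merged into one kernel-verified Lean document; each statement's English description precedes it below -/
import Mathlib

section
/- Let μ̂ be a mixing ergodic σ-invariant local weak Gibbs measure with potential φ ∈ L¹(μ̂) and summable variations on a topological Markov chain. Fix 0-cylinders P₁, P₂ and ε > 0. Let Good(M,ε) be the set of z with e^{−(j+1)(P−∫φdμ̂+ε)} < μ̂(C(j,z)) < e^{−(j+1)(P−∫φdμ̂−ε)} for all j ≥ M, and let S_N(M,ε) be the union of the N-cylinders C(N,z) ⊆ P₁ with z ∈ Good(M,ε) and σ^N(C(N,z)) = P₂. Then for all M large enough (depending on P₁ and ε) and all N large enough (depending on P₁, P₂), μ̂(S_N(M,ε)) ≥ (1/2) μ̂(P₁) μ̂(P₂). -/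
open MeasureTheory Filter Finset ENNReal

open Topology

set_option linter.unusedSectionVars false
set_option linter.unusedVariables false
set_option maxHeartbeats 1000000

def lshift {I : Type*} : (ℕ → I) → (ℕ → I) := fun x n => x (n + 1)

def cyl {I : Type*} (n : ℕ) (z : ℕ → I) : Set (ℕ → I) := {x | ∀ s ≤ n, x s = z s}

/-- The set of `(M,ε)`-good points: those whose cylinder measures obey the
Shannon–McMillan–Breiman bounds with error `ε` from level `M` on. -/
def goodSet {I : Type*} [MeasurableSpace I] (μ : Measure (ℕ → I))
    (P : ℝ) (intφ : ℝ) (M : ℕ) (ε : ℝ) : Set (ℕ → I) :=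
  {z | ∀ j : ℕ, M ≤ j →
    Real.exp (-((j : ℝ) + 1) * (P - intφ + ε)) < (μ (cyl j z)).toReal ∧
    (μ (cyl j z)).toReal < Real.exp (-((j : ℝ) + 1) * (P - intφ - ε))}



section Atom

variable {I : Type*} [MeasurableSpace I]

/-- The measurable atom of a point. -/
def matom (i : I) : Set I := {j | ∀ S : Set I, MeasurableSet S → (i ∈ S ↔ j ∈ S)}

lemma matom_self (i : I) : i ∈ matom i := fun _ _ => Iff.rfl

lemma matom_symm {i j : I} (h : j ∈ matom i) : i ∈ matom j :=
  fun S hS => (h S hS).symm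

lemma matom_eq_of_mem {i j : I} (h : j ∈ matom i) : matom j = matom i := by
  ext k
  exact ⟨fun hk S hS => (h S hS).trans (hk S hS),
         fun hk S hS => ((h S hS).symm).trans (hk S hS)⟩

lemma measurableSet_matom [Countable I] (i : I) : MeasurableSet (matom i) := by
  classical
  have hsep : ∀ j : I, j ∉ matom i → ∃ S : Set I, MeasurableSet S ∧ i ∈ S ∧ j ∉ S := by
    intro j hj
    simp only [matom, Set.mem_setOf_eq, not_forall] at hj
    obtain ⟨S, hS, hiff⟩ := hj
    by_cases hi : i ∈ S
    · exact ⟨S, hS, hi, fun hjS => hiff ⟨fun _ => hjS, fun _ => hi⟩⟩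
    · refine ⟨Sᶜ, hS.compl, hi, fun hjc => ?_⟩
      have hjS : j ∈ S := by
        by_contra hjS
        exact hiff ⟨fun h => absurd h hi, fun h => absurd h hjS⟩
      exact hjc hjS
  choose! S hSm hSi hSj using hsep
  have heq : matom i = ⋂ (j : I), ⋂ (_ : j ∉ matom i), S j := by
    ext x
    constructor
    · intro hx
      refine Set.mem_iInter.2 fun j => Set.mem_iInter.2 fun hj => ?_
      exact (hx (S j) (hSm j hj)).mp (hSi j hj)
    · intro hx
      by_contra hxa
      have : x ∈ S x := Set.mem_iInter.1 (Set.mem_iInter.1 hx x) hxa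
      exact hSj x hxa this
  rw [heq]
  exact MeasurableSet.iInter fun j => MeasurableSet.iInter fun hj => hSm j hj

/-- Every measurable set in a product of countable measurable spaces is saturated with
respect to coordinatewise measurable atoms. -/
lemma mem_iff_of_matom_rel {E : Set (ℕ → I)} (hE : MeasurableSet E)
    {x y : ℕ → I} (h : ∀ s, y s ∈ matom (x s)) : x ∈ E ↔ y ∈ E := by
  let m' : MeasurableSpace (ℕ → I) :=
    { MeasurableSet' := fun A => ∀ u v : ℕ → I, (∀ s, v s ∈ matom (u s)) → (u ∈ A ↔ v ∈ A)
      measurableSet_empty := fun _ _ _ => Iff.rfl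
      measurableSet_compl := fun A hA u v huv => not_congr (hA u v huv)
      measurableSet_iUnion := fun f hf u v huv => by
        simp only [Set.mem_iUnion]
        exact exists_congr fun i => hf i u v huv }
  have hle : (MeasurableSpace.pi : MeasurableSpace (ℕ → I)) ≤ m' := by
    refine iSup_le fun s => ?_
    rintro A ⟨S, hS, rfl⟩
    intro u v huv
    exact huv s S hS
  exact hle E hE x y h

/-- The measurable hull of a "cylinder-like" set is the corresponding atomic cylinder. -/
lemma measure_cylinderLike (μ : Measure (ℕ → I)) (T : Set ℕ) (v : ℕ → I) :
    μ {x | ∀ s ∈ T, x s = v s} = μ {x | ∀ s ∈ T, x s ∈ matom (v s)} := by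
  classical
  apply le_antisymm
  · refine measure_mono fun x hx s hs => ?_
    rw [hx s hs]
    exact matom_self _
  · set D := {x : ℕ → I | ∀ s ∈ T, x s = v s}
    have hsub : {x : ℕ → I | ∀ s ∈ T, x s ∈ matom (v s)} ⊆ toMeasurable μ D := by
      intro x hx
      set x' : ℕ → I := fun s => if s ∈ T then v s else x s with hx'def
      have hx'D : x' ∈ D := fun s hs => by simp [hx'def, if_pos hs]
      have hrel : ∀ s, x' s ∈ matom (x s) := by
        intro s
        by_cases hs : s ∈ T
        · simpa [hx'def, hs] using matom_symm (hx s hs)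
        · simpa [hx'def, hs] using matom_self (x s)
      exact (mem_iff_of_matom_rel (measurableSet_toMeasurable μ D) hrel).mpr
        (subset_toMeasurable μ D hx'D)
    calc μ {x : ℕ → I | ∀ s ∈ T, x s ∈ matom (v s)} ≤ μ (toMeasurable μ D) :=
          measure_mono hsub
      _ = μ D := measure_toMeasurable D

end Atom



section Maximal

variable {α : Type*} [MeasurableSpace α] {μ : Measure α} [IsProbabilityMeasure μ]
  {T : α → α} {g : α → ℝ}

/-- running maximum `max_{1 ≤ n ≤ N+1} S_n g x`. -/
def maxS (T : α → α) (g : α → ℝ) : ℕ → α → ℝ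
  | 0 => fun x => birkhoffSum T g 1 x
  | N + 1 => fun x => max (maxS T g N x) (birkhoffSum T g (N + 2) x)

lemma measurable_birkhoffSum (hT : Measurable T) (hg : Measurable g) (n : ℕ) :
    Measurable (birkhoffSum T g n) :=
  Finset.measurable_sum _ fun j _ => hg.comp (hT.iterate j)

lemma integrable_birkhoffSum (hT : MeasurePreserving T μ μ) (hg : Integrable g μ) (n : ℕ) :
    Integrable (birkhoffSum T g n) μ := by
  refine integrable_finset_sum _ fun j _ => ?_
  exact ((hT.iterate j).integrable_comp hg.aestronglyMeasurable).mpr hg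

lemma measurable_maxS (hT : Measurable T) (hg : Measurable g) (N : ℕ) :
    Measurable (maxS T g N) := by
  induction N with
  | zero => exact measurable_birkhoffSum hT hg 1
  | succ N ih => exact ih.max (measurable_birkhoffSum hT hg (N + 2))

lemma integrable_maxS (hT : MeasurePreserving T μ μ) (hg : Integrable g μ) (N : ℕ) :
    Integrable (maxS T g N) μ := by
  induction N with
  | zero => exact integrable_birkhoffSum hT hg 1
  | succ N ih => exact ih.sup (integrable_birkhoffSum hT hg (N + 2))

lemma birkhoffSum_le_maxS (x : α) {n N : ℕ} (h : n ≤ N) :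
    birkhoffSum T g (n + 1) x ≤ maxS T g N x := by
  induction N with
  | zero => rw [Nat.le_zero.mp h]; exact le_refl _
  | succ N ih =>
    rcases Nat.le_succ_iff.mp h with h' | h'
    · exact le_trans (ih h') (le_max_left _ _)
    · rw [h']; exact le_max_right _ _

lemma maxS_le_succ (x : α) (N : ℕ) : maxS T g N x ≤ maxS T g (N + 1) x := le_max_left _ _

lemma pos_maxS_iff (x : α) (N : ℕ) :
    0 < maxS T g N x ↔ ∃ n ≤ N, 0 < birkhoffSum T g (n + 1) x := by
  induction N with
  | zero =>
    constructor
    · intro h; exact ⟨0, le_refl _, h⟩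
    · rintro ⟨n, hn, h⟩; rw [Nat.le_zero.mp hn] at h; exact h
  | succ N ih =>
    constructor
    · intro h
      rcases lt_max_iff.mp h with h' | h'
      · obtain ⟨n, hn, h''⟩ := ih.mp h'
        exact ⟨n, hn.trans (Nat.le_succ _), h''⟩
      · exact ⟨N + 1, le_refl _, h'⟩
    · rintro ⟨n, hn, h⟩
      rcases Nat.le_succ_iff.mp hn with h' | h'
      · exact lt_max_iff.mpr (Or.inl (ih.mpr ⟨n, h', h⟩))
      · rw [h'] at h; exact lt_max_iff.mpr (Or.inr h)

lemma maxS_le {x : α} {N : ℕ} {C : ℝ} (h : ∀ n ≤ N, birkhoffSum T g (n + 1) x ≤ C) :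
    maxS T g N x ≤ C := by
  induction N with
  | zero => exact h 0 (le_refl _)
  | succ N ih =>
    exact max_le (ih fun n hn => h n (hn.trans (Nat.le_succ _))) (h (N + 1) (le_refl _))

lemma maxS_key (x : α) (N : ℕ) :
    maxS T g N x ≤ g x + max (maxS T g N (T x)) 0 := by
  refine maxS_le fun n hn => ?_
  rw [birkhoffSum_succ']
  rcases Nat.eq_zero_or_pos n with rfl | hpos
  · simp only [birkhoffSum_zero]
    exact add_le_add le_rfl (le_max_right _ _)
  · obtain ⟨m, rfl⟩ := Nat.exists_eq_add_of_lt hpos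
    have h1 : birkhoffSum T g (m + 1) (T x) ≤ maxS T g N (T x) :=
      birkhoffSum_le_maxS (T x) (by omega)
    have h2 : birkhoffSum T g (0 + m + 1) (T x) ≤ max (maxS T g N (T x)) 0 := by
      refine le_trans ?_ (le_max_left _ _)
      simpa using h1
    exact add_le_add le_rfl h2

end Maximal

section MaxErgodic

variable {α : Type*} [MeasurableSpace α] {μ : Measure α} [IsProbabilityMeasure μ]
  {T : α → α} {g : α → ℝ}

theorem maximal_ergodic (hT : MeasurePreserving T μ μ) (hgm : Measurable g)
    (hgi : Integrable g μ) :
    0 ≤ ∫ x in {x | ∃ n, 0 < n ∧ 0 < birkhoffSum T g n x}, g x ∂μ := by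
  set B : ℕ → Set α := fun N => {x | 0 < maxS T g N x} with hBdef
  have hBmeas : ∀ N, MeasurableSet (B N) :=
    fun N => measurableSet_lt measurable_const (measurable_maxS hT.measurable hgm N)
  have hBmono : Monotone B := by
    intro N M hNM x hx
    simp only [hBdef, Set.mem_setOf_eq] at hx ⊢
    induction M with
    | zero => rwa [Nat.le_zero.mp hNM] at hx
    | succ M ih =>
      rcases Nat.le_succ_iff.mp hNM with h | h
      · exact lt_of_lt_of_le (ih h) (maxS_le_succ _ _)
      · rwa [h] at hx
  have hBU : (⋃ N, B N) = {x | ∃ n, 0 < n ∧ 0 < birkhoffSum T g n x} := by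
    ext x
    simp only [Set.mem_iUnion, hBdef, Set.mem_setOf_eq]
    constructor
    · rintro ⟨N, hN⟩
      obtain ⟨n, _, h⟩ := (pos_maxS_iff x N).mp hN
      exact ⟨n + 1, Nat.succ_pos n, h⟩
    · rintro ⟨n, hn0, h⟩
      obtain ⟨m, rfl⟩ := Nat.exists_eq_succ_of_ne_zero hn0.ne'
      exact ⟨m, (pos_maxS_iff x m).mpr ⟨m, le_refl _, h⟩⟩
  have key : ∀ N, 0 ≤ ∫ x in B N, g x ∂μ := by
    intro N
    set F : α → ℝ := fun x => max (maxS T g N x) 0 with hFdef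
    have hFm : Measurable F := (measurable_maxS hT.measurable hgm N).max measurable_const
    have hFi : Integrable F μ := (integrable_maxS hT hgi N).pos_part
    have hFTi : Integrable (fun x => F (T x)) μ :=
      (hT.integrable_comp hFm.aestronglyMeasurable).mpr hFi
    have hint : ∫ x, F (T x) ∂μ = ∫ x, F x ∂μ := by
      have h1 : ∫ y, F y ∂(Measure.map T μ) = ∫ x, F (T x) ∂μ := by
        refine integral_map hT.measurable.aemeasurable ?_
        rw [hT.map_eq]
        exact hFm.aestronglyMeasurable
      rw [hT.map_eq] at h1
      exact h1.symm
    have hsubi : Integrable (fun x => F x - F (T x)) μ := hFi.sub hFTi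
    have h0 : ∫ x, (F x - F (T x)) ∂μ = 0 := by
      rw [integral_sub hFi hFTi, hint, sub_self]
    have hcompl : ∫ x in (B N)ᶜ, (F x - F (T x)) ∂μ ≤ 0 := by
      refine setIntegral_nonpos (hBmeas N).compl fun x hx => ?_
      have hx' : maxS T g N x ≤ 0 := le_of_not_gt hx
      have : F x = 0 := max_eq_right hx'
      rw [this]
      simp only [zero_sub, neg_nonpos, hFdef]
      exact le_max_right _ _
    have hmain : ∫ x in B N, (F x - F (T x)) ∂μ ≤ ∫ x in B N, g x ∂μ := by
      refine setIntegral_mono_on hsubi.integrableOn hgi.integrableOn (hBmeas N) fun x hx => ?_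
      have hx' : 0 < maxS T g N x := hx
      have hFx : F x = maxS T g N x := max_eq_left hx'.le
      rw [hFx, sub_le_iff_le_add]
      have := maxS_key (T := T) (g := g) x N
      linarith [this]
    have hsplit := integral_add_compl (hBmeas N) hsubi
    have : 0 ≤ ∫ x in B N, (F x - F (T x)) ∂μ := by
      nlinarith [hsplit, hcompl, h0]
    exact this.trans hmain
  have htend := tendsto_setIntegral_of_monotone hBmeas hBmono (hgi.integrableOn)
  rw [hBU] at htend
  exact ge_of_tendsto' htend key

end MaxErgodic





section Birkhoff

variable {α : Type*} [MeasurableSpace α] {μ : Measure α} [IsProbabilityMeasure μ]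
  {T : α → α} {g : α → ℝ}

lemma birkhoffSum_sub_const (T : α → α) (g : α → ℝ) (c : ℝ) (n : ℕ) (x : α) :
    birkhoffSum T (fun y => g y - c) n x = birkhoffSum T g n x - n * c := by
  simp only [birkhoffSum, Finset.sum_sub_distrib, Finset.sum_const, card_range, nsmul_eq_mul,
    mul_comm]

lemma birkhoff_upper (hT : MeasurePreserving T μ μ) (hE : Ergodic T μ)
    (hgm : Measurable g) (hgi : Integrable g μ) (q : ℚ) (hq : (∫ y, g y ∂μ) < q) :
    ∀ᵐ x ∂μ, ∀ᶠ n in atTop, birkhoffSum T g n x ≤ n * q := by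
  set Freq : ℚ → Set α :=
    fun r => {x | ∃ᶠ n : ℕ in atTop, (n : ℝ) * r < birkhoffSum T g n x} with hFreqdef
  have hFreqMeas : ∀ r, MeasurableSet (Freq r) := by
    intro r
    have : Freq r = ⋂ (N : ℕ), ⋃ (n : ℕ), ⋃ (_ : N ≤ n),
        {x | (n : ℝ) * r < birkhoffSum T g n x} := by
      ext x
      simp only [hFreqdef, Set.mem_setOf_eq, frequently_atTop, Set.mem_iInter, Set.mem_iUnion]
      exact forall_congr' fun N => by tauto
    rw [this]
    exact MeasurableSet.iInter fun N => MeasurableSet.iUnion fun n => MeasurableSet.iUnion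
      fun _ => measurableSet_lt measurable_const (measurable_birkhoffSum hT.measurable hgm n)
  have hFreqAnti : ∀ {r r' : ℚ}, r ≤ r' → Freq r' ⊆ Freq r := by
    intro r r' hrr' x hx
    refine hx.mono fun n hn => lt_of_le_of_lt ?_ hn
    have : (r : ℝ) ≤ r' := by exact_mod_cast hrr'
    exact mul_le_mul_of_nonneg_left this (Nat.cast_nonneg n)
  obtain ⟨a, ha1, ha2⟩ := exists_rat_btwn hq
  set E : Set α := ⋃ (r : ℚ), ⋃ (_ : a < r), Freq r with hEdef
  have hEmeas : MeasurableSet E :=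
    MeasurableSet.iUnion fun r => MeasurableSet.iUnion fun _ => hFreqMeas r
  -- invariance
  have hinvE : T ⁻¹' E = E := by
    ext x
    simp only [hEdef, Set.mem_preimage, Set.mem_iUnion]
    constructor
    · rintro ⟨r, hr, hfreq⟩
      refine ⟨(a + r) / 2, by linarith, ?_⟩
      have h1 : a < (a + r) / 2 := by linarith
      have h2 : (a + r) / 2 < r := by linarith
      set r' : ℚ := (a + r) / 2
      have hrr' : (0 : ℝ) < (r : ℝ) - r' := by
        have : (r' : ℝ) < r := by exact_mod_cast h2
        linarith
      have hev : ∀ᶠ n : ℕ in atTop, (r' : ℝ) - g x ≤ (n : ℝ) * ((r : ℝ) - r') :=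
        (tendsto_natCast_atTop_atTop.atTop_mul_const hrr').eventually_ge_atTop _
      have hcomb := hfreq.and_eventually hev
      rw [hFreqdef]
      simp only [Set.mem_setOf_eq, frequently_atTop] at hcomb ⊢
      intro N
      obtain ⟨n, hnN, hlt, hbd⟩ := hcomb N
      refine ⟨n + 1, by omega, ?_⟩
      have hsucc : birkhoffSum T g (n + 1) x = g x + birkhoffSum T g n (T x) :=
        birkhoffSum_succ' T g n x
      push_cast
      push_cast at hlt hbd
      linarith
    · rintro ⟨r, hr, hfreq⟩
      refine ⟨(a + r) / 2, by linarith, ?_⟩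
      have h2 : (a + r) / 2 < r := by linarith
      set r' : ℚ := (a + r) / 2
      have hrr' : (0 : ℝ) < (r : ℝ) - r' := by
        have : (r' : ℝ) < r := by exact_mod_cast h2
        linarith
      have hev : ∀ᶠ n : ℕ in atTop, g x - (r' : ℝ) ≤ (n : ℝ) * ((r : ℝ) - r') :=
        (tendsto_natCast_atTop_atTop.atTop_mul_const hrr').eventually_ge_atTop _
      have hcomb := hfreq.and_eventually hev
      rw [hFreqdef]
      simp only [Set.mem_setOf_eq, frequently_atTop] at hcomb ⊢
      intro N
      obtain ⟨m, hmN, hlt, hbd⟩ := hcomb (N + 1)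
      obtain ⟨n, rfl⟩ := Nat.exists_eq_succ_of_ne_zero (by omega : m ≠ 0)
      simp only [Nat.succ_eq_add_one] at hmN hlt hbd
      refine ⟨n, by omega, ?_⟩
      have hsucc : birkhoffSum T g (n + 1) x = g x + birkhoffSum T g n (T x) :=
        birkhoffSum_succ' T g n x
      push_cast at hlt hbd ⊢
      linarith
  -- ergodic dichotomy
  rcases hE.ae_empty_or_univ hEmeas hinvE with hcase | hcase
  · -- measure zero: conclude
    have hE0 : μ E = 0 := ae_eq_empty.mp hcase
    have hsub : Freq q ⊆ E := by
      intro x hx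
      simp only [hEdef, Set.mem_iUnion]
      exact ⟨q, by exact_mod_cast ha2, hx⟩
    have h0 : μ (Freq q) = 0 := measure_mono_null hsub hE0
    have := measure_eq_zero_iff_ae_notMem.mp h0
    refine this.mono fun x hx => ?_
    have := not_frequently.mp hx
    exact this.mono fun n hn => not_lt.mp (by simpa using hn)
  · -- measure one: contradiction
    exfalso
    have hE1 : μ E = 1 := by
      rw [measure_congr hcase, measure_univ]
    set qs : ℕ → ℚ := fun k => a + 1 / (k + 1) with hqsdef
    have hqs : ∀ k, a < qs k := fun k => lt_add_of_pos_right _ (by positivity)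
    set B : ℕ → Set α := fun k =>
      {x | ∃ n, 0 < n ∧ 0 < birkhoffSum T (fun y => g y - (qs k : ℝ)) n x} with hBdef
    have hBeq : ∀ k, B k = {x | ∃ n : ℕ, 0 < n ∧ (n : ℝ) * qs k < birkhoffSum T g n x} := by
      intro k
      ext x
      simp only [hBdef, Set.mem_setOf_eq, birkhoffSum_sub_const, sub_pos]
    have hBmeas : ∀ k, MeasurableSet (B k) := by
      intro k
      rw [hBeq k]
      have heq : {x | ∃ n : ℕ, 0 < n ∧ (n : ℝ) * qs k < birkhoffSum T g n x}
          = ⋃ (n : ℕ), ⋃ (_ : 0 < n), {x | (n : ℝ) * qs k < birkhoffSum T g n x} := by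
        ext x; simp
      rw [heq]
      exact MeasurableSet.iUnion fun n => MeasurableSet.iUnion fun _ =>
        measurableSet_lt measurable_const (measurable_birkhoffSum hT.measurable hgm n)
    have hBmono : Monotone B := by
      intro k k' hkk' x hx
      rw [hBeq] at hx ⊢
      obtain ⟨n, hn, hlt⟩ := hx
      refine ⟨n, hn, lt_of_le_of_lt ?_ hlt⟩
      have : (qs k' : ℝ) ≤ qs k := by
        have : qs k' ≤ qs k := by
          rw [hqsdef]
          simp only [add_le_add_iff_left]
          rw [div_le_div_iff₀ (by positivity) (by positivity)]
          have hkc : (k : ℚ) ≤ k' := by exact_mod_cast hkk'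
          linarith
        exact_mod_cast this
      exact mul_le_mul_of_nonneg_left this (Nat.cast_nonneg n)
    have hEsub : E ⊆ ⋃ k, B k := by
      intro x hx
      simp only [hEdef, Set.mem_iUnion] at hx
      obtain ⟨r, hr, hfreq⟩ := hx
      obtain ⟨k, hk⟩ := exists_nat_one_div_lt (ε := r - a) (by linarith)
      have hqsr : qs k ≤ r := by
        rw [hqsdef]
        have : (1 : ℚ) / (k + 1) < r - a := by exact_mod_cast hk
        linarith
      have : x ∈ Freq (qs k) := hFreqAnti hqsr hfreq
      simp only [Set.mem_iUnion]
      refine ⟨k, ?_⟩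
      rw [hBeq]
      obtain ⟨n, hn, hlt⟩ := frequently_atTop.mp this 1
      exact ⟨n, hn, hlt⟩
    have hU1 : μ (⋃ k, B k) = 1 := by
      refine le_antisymm prob_le_one ?_
      rw [← hE1]
      exact measure_mono hEsub
    have htendB : Tendsto (fun k => μ (B k)) atTop (𝓝 1) := by
      have := tendsto_measure_iUnion_atTop (μ := μ) hBmono
      rwa [hU1] at this
    have hreal : Tendsto (fun k => (μ (B k)).toReal) atTop (𝓝 1) := by
      have h1 := (ENNReal.tendsto_toReal one_ne_top).comp htendB
      exact h1
    have hIneq : ∀ k, (a : ℝ) * (μ (B k)).toReal ≤ ∫ x in B k, g x ∂μ := by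
      intro k
      have hmax := maximal_ergodic (μ := μ) hT (g := fun y => g y - (qs k : ℝ))
        (hgm.sub measurable_const) (hgi.sub (integrable_const _))
      have hsplit : ∫ x in B k, (g x - (qs k : ℝ)) ∂μ
          = (∫ x in B k, g x ∂μ) - (qs k : ℝ) * (μ (B k)).toReal := by
        rw [integral_sub hgi.integrableOn (integrableOn_const (measure_ne_top _ _))]
        rw [setIntegral_const, smul_eq_mul, mul_comm]
        rfl
      have hmax' : 0 ≤ (∫ x in B k, g x ∂μ) - (qs k : ℝ) * (μ (B k)).toReal := by
        rw [← hsplit]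
        exact hmax
      have haqs : (a : ℝ) ≤ qs k := by exact_mod_cast (hqs k).le
      nlinarith [ENNReal.toReal_nonneg (a := μ (B k))]
    have htendI : Tendsto (fun k => ∫ x in B k, g x ∂μ) atTop (𝓝 (∫ y, g y ∂μ)) := by
      have h1 := tendsto_setIntegral_of_monotone hBmeas hBmono hgi.integrableOn
      have h2 : (⋃ k, B k) =ᵐ[μ] Set.univ := by
        rw [ae_eq_univ]
        have hm : MeasurableSet (⋃ k, B k) := MeasurableSet.iUnion hBmeas
        rw [measure_compl hm (measure_ne_top _ _), hU1, measure_univ, tsub_self]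
      rwa [setIntegral_congr_set h2, setIntegral_univ] at h1
    have hlim : (a : ℝ) * 1 ≤ ∫ y, g y ∂μ :=
      le_of_tendsto_of_tendsto' ((tendsto_const_nhds).mul hreal) htendI hIneq
    rw [mul_one] at hlim
    linarith

theorem birkhoff_ae_measurable (hT : MeasurePreserving T μ μ) (hE : Ergodic T μ)
    (hgm : Measurable g) (hgi : Integrable g μ) :
    ∀ᵐ x ∂μ, Tendsto (fun n => birkhoffSum T g n x / n) atTop (𝓝 (∫ y, g y ∂μ)) := by
  have hupper : ∀ᵐ x ∂μ, ∀ q : ℚ, (∫ y, g y ∂μ) < q →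
      ∀ᶠ n in atTop, birkhoffSum T g n x ≤ n * q := by
    rw [ae_all_iff]
    intro q
    by_cases hq : (∫ y, g y ∂μ) < q
    · exact (birkhoff_upper hT hE hgm hgi q hq).mono fun x hx _ => hx
    · exact ae_of_all _ fun x hq' => absurd hq' hq
  have hlower : ∀ᵐ x ∂μ, ∀ q : ℚ, (q : ℝ) < (∫ y, g y ∂μ) →
      ∀ᶠ n : ℕ in atTop, (n : ℝ) * q ≤ birkhoffSum T g n x := by
    rw [ae_all_iff]
    intro q
    by_cases hq : (q : ℝ) < (∫ y, g y ∂μ)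
    · have hint : (∫ y, (fun z => -g z) y ∂μ) < ((-q : ℚ) : ℝ) := by
        rw [integral_neg]
        push_cast
        linarith
      have hup := birkhoff_upper hT hE hgm.neg hgi.neg (-q) hint
      refine hup.mono fun x hx _ => ?_
      refine hx.mono fun n hn => ?_
      have hneg : birkhoffSum T (fun z => -g z) n x = -birkhoffSum T g n x := by
        simp [birkhoffSum, Finset.sum_neg_distrib]
      rw [show birkhoffSum T (-g) n x = -birkhoffSum T g n x from hneg] at hn
      push_cast at hn ⊢
      linarith
    · exact ae_of_all _ fun x hq' => absurd hq' hq
  filter_upwards [hupper, hlower] with x hup hlo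
  rw [tendsto_order]
  constructor
  · intro b hb
    obtain ⟨q, hq1, hq2⟩ := exists_rat_btwn hb
    filter_upwards [hlo q hq2, eventually_ge_atTop 1] with n hn hn1
    have hn0 : (0 : ℝ) < n := by exact_mod_cast hn1
    have : (q : ℝ) ≤ birkhoffSum T g n x / n := by
      rw [le_div_iff₀ hn0]
      linarith [hn]
    linarith
  · intro b hb
    obtain ⟨q, hq1, hq2⟩ := exists_rat_btwn hb
    filter_upwards [hup q hq1, eventually_ge_atTop 1] with n hn hn1
    have hn0 : (0 : ℝ) < n := by exact_mod_cast hn1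
    have : birkhoffSum T g n x / n ≤ (q : ℝ) := by
      rw [div_le_iff₀ hn0]
      linarith [hn]
    linarith

theorem birkhoff_ae (hT : MeasurePreserving T μ μ) (hE : Ergodic T μ)
    (hgi : Integrable g μ) :
    ∀ᵐ x ∂μ, Tendsto (fun n => birkhoffSum T g n x / n) atTop (𝓝 (∫ y, g y ∂μ)) := by
  set g' : α → ℝ := hgi.aestronglyMeasurable.mk g with hg'def
  have hg'm : Measurable g' := hgi.aestronglyMeasurable.stronglyMeasurable_mk.measurable
  have hgg' : g =ᵐ[μ] g' := hgi.aestronglyMeasurable.ae_eq_mk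
  have hgi' : Integrable g' μ := hgi.congr hgg'
  have hint_eq : (∫ y, g y ∂μ) = ∫ y, g' y ∂μ := integral_congr_ae hgg'
  have hScong : ∀ᵐ x ∂μ, ∀ n, birkhoffSum T g n x = birkhoffSum T g' n x := by
    rw [ae_all_iff]
    intro n
    have hj : ∀ j : ℕ, (fun x => g (T^[j] x)) =ᵐ[μ] fun x => g' (T^[j] x) := fun j =>
      (hT.iterate j).quasiMeasurePreserving.ae_eq_comp hgg'
    have : ∀ᵐ x ∂μ, ∀ j : ℕ, g (T^[j] x) = g' (T^[j] x) := ae_all_iff.mpr hj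
    exact this.mono fun x hx => Finset.sum_congr rfl fun j _ => hx j
  filter_upwards [birkhoff_ae_measurable hT hE hg'm hgi', hScong] with x hx hcong
  rw [hint_eq]
  refine hx.congr fun n => ?_
  rw [hcong n]

end Birkhoff



section Good

variable {I : Type*} [MeasurableSpace I]

lemma lshift_iterate (x : ℕ → I) (N n : ℕ) : lshift^[N] x n = x (n + N) := by
  induction N generalizing x n with
  | zero => rfl
  | succ N ih =>
    rw [Function.iterate_succ_apply]
    rw [ih (lshift x) n]
    show x (n + N + 1) = x (n + (N + 1))
    ring_nf

lemma cyl_cylinderLike (n : ℕ) (z : ℕ → I) :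
    cyl n z = {x : ℕ → I | ∀ s ∈ {s : ℕ | s ≤ n}, x s = z s} := rfl

lemma measure_cyl_atom (μ : Measure (ℕ → I)) (n : ℕ) (z : ℕ → I) :
    μ (cyl n z) = μ {x : ℕ → I | ∀ s ≤ n, x s ∈ matom (z s)} := by
  rw [cyl_cylinderLike, measure_cylinderLike μ {s : ℕ | s ≤ n} z]
  rfl

lemma measure_cyl_congr (μ : Measure (ℕ → I)) (n : ℕ) {x y : ℕ → I}
    (h : ∀ s ≤ n, x s ∈ matom (y s)) : μ (cyl n x) = μ (cyl n y) := by
  rw [measure_cyl_atom μ n x, measure_cyl_atom μ n y]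
  congr 1
  ext w
  constructor
  · intro hw s hs
    have := matom_eq_of_mem (h s hs)
    rw [← this]
    exact hw s hs
  · intro hw s hs
    have := matom_eq_of_mem (h s hs)
    rw [this]
    exact hw s hs

lemma measurableSet_atomCyl [Countable I] (T : Set ℕ) (v : ℕ → I) :
    MeasurableSet {x : ℕ → I | ∀ s ∈ T, x s ∈ matom (v s)} := by
  have : {x : ℕ → I | ∀ s ∈ T, x s ∈ matom (v s)}
      = ⋂ (s : ℕ), ⋂ (_ : s ∈ T), (fun x : ℕ → I => x s) ⁻¹' matom (v s) := by
    ext x; simp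
  rw [this]
  exact MeasurableSet.iInter fun s => MeasurableSet.iInter fun _ =>
    (measurable_pi_apply s) (measurableSet_matom (v s))

lemma measurableSet_goodSet [Countable I] (μ : Measure (ℕ → I)) (P L : ℝ) (M : ℕ) (ε : ℝ) :
    MeasurableSet (goodSet μ P L M ε) := by
  classical
  have hF : ∀ (lo hi : ℝ) (j : ℕ),
      MeasurableSet {z : ℕ → I | lo < (μ (cyl j z)).toReal ∧ (μ (cyl j z)).toReal < hi} := by
    intro lo hi j
    cases isEmpty_or_nonempty I with
    | inl h =>
      have hempty : IsEmpty (ℕ → I) := ⟨fun f => h.elim (f 0)⟩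
      rw [Set.eq_empty_of_isEmpty ({z : ℕ → I | lo < (μ (cyl j z)).toReal ∧
        (μ (cyl j z)).toReal < hi})]
      exact MeasurableSet.empty
    | inr h =>
      set F := {z : ℕ → I | lo < (μ (cyl j z)).toReal ∧ (μ (cyl j z)).toReal < hi} with hFdef
      set ex : (Fin (j+1) → I) → (ℕ → I) :=
        fun v s => if hs : s < j + 1 then v ⟨s, hs⟩ else Classical.arbitrary I with hexdef
      have hrepr : F = ⋃ (v : Fin (j+1) → I), ⋃ (_ : ex v ∈ F),
          {x : ℕ → I | ∀ s ≤ j, x s ∈ matom (ex v s)} := by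
        ext z
        simp only [Set.mem_iUnion]
        constructor
        · intro hz
          refine ⟨fun k => z k, ?_, ?_⟩
          · have hcongr : μ (cyl j (ex (fun k => z k))) = μ (cyl j z) := by
              refine measure_cyl_congr μ j fun s hs => ?_
              have : ex (fun k => z k) s = z s := by
                simp only [hexdef]
                rw [dif_pos (by omega : s < j + 1)]
              rw [this]
              exact matom_self _
            simp only [hFdef, Set.mem_setOf_eq, hcongr]
            exact hz
          · intro s hs
            have : ex (fun k => z k) s = z s := by
              simp only [hexdef]
              rw [dif_pos (by omega : s < j + 1)]
            rw [this]
            exact matom_self _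
        · rintro ⟨v, hvF, hx⟩
          have hcongr : μ (cyl j z) = μ (cyl j (ex v)) := measure_cyl_congr μ j hx
          simp only [hFdef, Set.mem_setOf_eq, hcongr]
          exact hvF
      rw [hrepr]
      exact MeasurableSet.iUnion fun v => MeasurableSet.iUnion fun _ => by
        have : {x : ℕ → I | ∀ s ≤ j, x s ∈ matom (ex v s)}
            = {x : ℕ → I | ∀ s ∈ {s : ℕ | s ≤ j}, x s ∈ matom (ex v s)} := rfl
        rw [this]
        exact measurableSet_atomCyl _ _
  have : goodSet μ P L M ε = ⋂ (j : ℕ), ⋂ (_ : M ≤ j),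
      {z : ℕ → I | Real.exp (-((j : ℝ) + 1) * (P - L + ε)) < (μ (cyl j z)).toReal ∧
        (μ (cyl j z)).toReal < Real.exp (-((j : ℝ) + 1) * (P - L - ε))} := by
    ext z
    simp [goodSet, Set.mem_iInter]
  rw [this]
  exact MeasurableSet.iInter fun j => MeasurableSet.iInter fun _ => hF _ _ j

lemma goodSet_mono (μ : Measure (ℕ → I)) (P L : ℝ) (ε : ℝ) :
    Monotone (fun M => goodSet μ P L M ε) :=
  fun M M' hMM' z hz j hj => hz j (hMM'.trans hj)

end Good


/-- For a mixing ergodic local weak Gibbs measure, given two 0-cylinders `P₁, P₂` and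
`ε > 0`, the union `S_N(M,ε)` of good `N`-cylinders inside `P₁` mapped by `σ^N` onto
`P₂` has measure at least `(1/2) μ̂(P₁) μ̂(P₂)` for `M`, `N` large. -/
theorem stmt10 {I : Type*} [Countable I] [MeasurableSpace I]
    (μ : Measure (ℕ → I)) [IsProbabilityMeasure μ]
    (hinv : MeasurePreserving (lshift (I := I)) μ μ)
    (herg : Ergodic (lshift (I := I)) μ)
    (hmix : ∀ A B : Set (ℕ → I), MeasurableSet A → MeasurableSet B →
      Filter.Tendsto (fun N : ℕ => μ (A ∩ lshift^[N] ⁻¹' B)) Filter.atTop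
        (nhds (μ A * μ B)))
    (φ : (ℕ → I) → ℝ) (hφ : Integrable φ μ)
    (P : ℝ) (K : ℕ → ℝ) (c : I → ℝ)
    (hK1 : ∀ n, 1 ≤ K n) (hKmono : Monotone K)
    (hKsub : Filter.Tendsto (fun n : ℕ => Real.log (K n) / n) Filter.atTop (nhds 0))
    (hc : ∀ i, 1 ≤ c i)
    (hGibbs : ∀ n : ℕ, 0 < n → ∀ z : ℕ → I,
      Real.exp (-(n : ℝ) * P + ∑ j ∈ Finset.range n, φ (lshift^[j] z)) /
          (c (z 0) * K n) ≤ (μ (cyl (n - 1) z)).toReal ∧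
      (μ (cyl (n - 1) z)).toReal ≤
        c (z 0) * K n *
          Real.exp (-(n : ℝ) * P + ∑ j ∈ Finset.range n, φ (lshift^[j] z)))
    (w₁ w₂ : ℕ → I) (ε : ℝ) (hε : 0 < ε) :
    ∃ M₀ : ℕ, ∀ M ≥ M₀, ∃ N₀ : ℕ, ∀ N ≥ N₀,
      (1 / 2 : ℝ≥0∞) * μ (cyl 0 w₁) * μ (cyl 0 w₂) ≤
        μ {x : ℕ → I | ∃ z : ℕ → I,
          z ∈ goodSet μ P (∫ y, φ y ∂μ) M ε ∧ x ∈ cyl N z ∧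
          cyl N z ⊆ cyl 0 w₁ ∧ lshift^[N] '' cyl N z = cyl 0 w₂} := by

  classical
  set L : ℝ := ∫ y, φ y ∂μ with hLdef
  set G : ℕ → Set (ℕ → I) := fun M => goodSet μ P L M ε with hGdef
  have hGmeas : ∀ M, MeasurableSet (G M) := fun M => measurableSet_goodSet μ P L M ε
  have hGmono : Monotone G := goodSet_mono μ P L ε
  -- Step 1: a.e. point is eventually good (Birkhoff + Gibbs)
  have hae : ∀ᵐ z ∂μ, ∃ M : ℕ, z ∈ G M := by
    filter_upwards [birkhoff_ae hinv herg hφ] with z hz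
    have hcK : ∀ m : ℕ, (1 : ℝ) ≤ c (z 0) * K m := fun m =>
      le_trans (hc (z 0)) (le_mul_of_one_le_right (le_trans zero_le_one (hc (z 0))) (hK1 m))
    have hcKpos : ∀ m : ℕ, (0 : ℝ) < c (z 0) * K m := fun m => lt_of_lt_of_le zero_lt_one (hcK m)
    set u : ℕ → ℝ := fun j => (μ (cyl j z)).toReal with hu
    set S : ℕ → ℝ := fun n => birkhoffSum lshift φ n z with hS
    have hGib : ∀ j : ℕ,
        Real.exp (-((j : ℝ) + 1) * P + S (j + 1)) / (c (z 0) * K (j + 1)) ≤ u j ∧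
        u j ≤ c (z 0) * K (j + 1) * Real.exp (-((j : ℝ) + 1) * P + S (j + 1)) := by
      intro j
      have h := hGibbs (j + 1) (Nat.succ_pos j) z
      have hcast : ((j + 1 : ℕ) : ℝ) = (j : ℝ) + 1 := by push_cast; ring
      have hsum : ∑ i ∈ Finset.range (j + 1), φ (lshift^[i] z) = S (j + 1) := rfl
      have hidx : j + 1 - 1 = j := rfl
      rw [hcast, hsum, hidx] at h
      exact h
    have hupos : ∀ j, 0 < u j :=
      fun j => lt_of_lt_of_le (div_pos (Real.exp_pos _) (hcKpos (j + 1))) (hGib j).1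
    set A : ℕ → ℝ := fun j => -((j : ℝ) + 1) * P + S (j + 1) with hA
    set D : ℕ → ℝ := fun j => Real.log (c (z 0) * K (j + 1)) with hD
    have hlogbd : ∀ j : ℕ, A j - D j ≤ Real.log (u j) ∧ Real.log (u j) ≤ A j + D j := by
      intro j
      constructor
      · have h1 : Real.log (Real.exp (A j) / (c (z 0) * K (j + 1))) ≤ Real.log (u j) :=
          (Real.log_le_log_iff (div_pos (Real.exp_pos _) (hcKpos (j + 1))) (hupos j)).mpr
            (hGib j).1
        rwa [Real.log_div (Real.exp_ne_zero _) (hcKpos (j + 1)).ne', Real.log_exp] at h1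
      · have h1 : Real.log (u j) ≤ Real.log (c (z 0) * K (j + 1) * Real.exp (A j)) :=
          (Real.log_le_log_iff (hupos j)
            (mul_pos (hcKpos (j + 1)) (Real.exp_pos _))).mpr (hGib j).2
        rwa [Real.log_mul (hcKpos (j + 1)).ne' (Real.exp_ne_zero _), Real.log_exp,
          add_comm] at h1
    have hzS : Tendsto (fun j : ℕ => S (j + 1) / ((j : ℝ) + 1)) atTop (𝓝 L) := by
      have h1 := hz.comp (tendsto_add_atTop_nat 1)
      refine h1.congr fun j => ?_
      show S (j + 1) / ((j + 1 : ℕ) : ℝ) = S (j + 1) / ((j : ℝ) + 1)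
      push_cast; ring_nf
    have hDt : Tendsto (fun j : ℕ => D j / ((j : ℝ) + 1)) atTop (𝓝 0) := by
      have hct : Tendsto (fun j : ℕ => Real.log (c (z 0)) / ((j : ℝ) + 1)) atTop (𝓝 0) := by
        have h1 := (tendsto_const_div_atTop_nhds_zero_nat (Real.log (c (z 0)))).comp
          (tendsto_add_atTop_nat 1)
        refine h1.congr fun j => ?_
        show Real.log (c (z 0)) / ((j + 1 : ℕ) : ℝ) = Real.log (c (z 0)) / ((j : ℝ) + 1)
        push_cast; ring_nf
      have hKt : Tendsto (fun j : ℕ => Real.log (K (j + 1)) / ((j : ℝ) + 1)) atTop (𝓝 0) := by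
        have h1 := hKsub.comp (tendsto_add_atTop_nat 1)
        refine h1.congr fun j => ?_
        show Real.log (K (j + 1)) / ((j + 1 : ℕ) : ℝ) = Real.log (K (j + 1)) / ((j : ℝ) + 1)
        push_cast; ring_nf
      have hsum := hct.add hKt
      rw [add_zero] at hsum
      refine hsum.congr fun j => ?_
      have hcpos : (0 : ℝ) < c (z 0) := lt_of_lt_of_le zero_lt_one (hc (z 0))
      have hKpos : (0 : ℝ) < K (j + 1) := lt_of_lt_of_le zero_lt_one (hK1 (j + 1))
      simp only [hD]
      rw [Real.log_mul hcpos.ne' hKpos.ne', add_div]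
    have hAt : Tendsto (fun j : ℕ => A j / ((j : ℝ) + 1)) atTop (𝓝 (-P + L)) := by
      have h1 := (tendsto_const_nhds (x := -P) (f := atTop (α := ℕ))).add hzS
      refine h1.congr fun j => ?_
      have hj0 : ((j : ℝ) + 1) ≠ 0 := by positivity
      rw [hA]
      field_simp
    have hln : Tendsto (fun j : ℕ => Real.log (u j) / ((j : ℝ) + 1)) atTop (𝓝 (-P + L)) := by
      have hlow := hAt.sub hDt
      have hhigh := hAt.add hDt
      rw [sub_zero] at hlow
      rw [add_zero] at hhigh
      refine tendsto_of_tendsto_of_tendsto_of_le_of_le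
        (g := fun j : ℕ => (A j - D j) / ((j : ℝ) + 1))
        (h := fun j : ℕ => (A j + D j) / ((j : ℝ) + 1)) ?_ ?_ ?_ ?_
      · exact hlow.congr fun j => (sub_div _ _ _).symm
      · exact hhigh.congr fun j => (add_div _ _ _).symm
      · intro j
        have hj0 : (0 : ℝ) < (j : ℝ) + 1 := by positivity
        exact div_le_div_of_nonneg_right (hlogbd j).1 hj0.le
      · intro j
        have hj0 : (0 : ℝ) < (j : ℝ) + 1 := by positivity
        exact div_le_div_of_nonneg_right (hlogbd j).2 hj0.le
    have hlt1 : -(P - L + ε) < -P + L := by linarith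
    have hlt2 : -P + L < -(P - L - ε) := by linarith
    have hev := hln.eventually (Ioo_mem_nhds hlt1 hlt2)
    obtain ⟨M, hM⟩ := eventually_atTop.mp hev
    refine ⟨M, fun j hj => ?_⟩
    obtain ⟨hlo, hhi⟩ := hM j hj
    have hj1 : (0 : ℝ) < (j : ℝ) + 1 := by positivity
    constructor
    · have h1 : -(P - L + ε) * ((j : ℝ) + 1) < Real.log (u j) := (lt_div_iff₀ hj1).mp hlo
      have h2 : Real.exp (-((j : ℝ) + 1) * (P - L + ε)) < Real.exp (Real.log (u j)) := by
        apply Real.exp_lt_exp.mpr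
        nlinarith [h1]
      rwa [Real.exp_log (hupos j)] at h2
    · have h1 : Real.log (u j) < -(P - L - ε) * ((j : ℝ) + 1) := (div_lt_iff₀ hj1).mp hhi
      have h2 : Real.exp (Real.log (u j)) < Real.exp (-((j : ℝ) + 1) * (P - L - ε)) := by
        apply Real.exp_lt_exp.mpr
        nlinarith [h1]
      rwa [Real.exp_log (hupos j)] at h2
  -- Step 2: μ (⋃ M, G M) = 1 and measure convergence
  have hUmeas : MeasurableSet (⋃ M, G M) := MeasurableSet.iUnion hGmeas
  have hUnion : μ (⋃ M, G M) = 1 := by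
    have hsub : ∀ᵐ z ∂μ, z ∈ ⋃ M, G M :=
      hae.mono fun z hz => Set.mem_iUnion.mpr hz
    have h0 : μ ((⋃ M, G M)ᶜ) = 0 := by
      have h := ae_iff.mp hsub
      exact h
    have h1 := measure_add_measure_compl (μ := μ) hUmeas
    rw [h0, add_zero, measure_univ] at h1
    exact h1
  have htendG : Tendsto (fun M => μ (G M)) atTop (𝓝 1) := by
    have h1 := tendsto_measure_iUnion_atTop (μ := μ) hGmono
    rw [hUnion] at h1
    exact h1
  -- Step 3: positivity of zero-cylinders
  have hcylpos : ∀ w : ℕ → I, μ (cyl 0 w) ≠ 0 := by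
    intro w h0
    have h1 := (hGibbs 1 one_pos w).1
    have hck : (0 : ℝ) < c (w 0) * K 1 :=
      lt_of_lt_of_le zero_lt_one
        (le_trans (hc (w 0)) (le_mul_of_one_le_right (le_trans zero_le_one (hc (w 0))) (hK1 1)))
    have hpos := div_pos (Real.exp_pos (-(1 : ℝ) * P + ∑ j ∈ Finset.range 1, φ (lshift^[j] w)))
      hck
    rw [show (1 : ℕ) - 1 = 0 from rfl, h0] at h1
    simp only [ENNReal.toReal_zero] at h1
    linarith
  -- Step 4: atomic hulls
  set Astar : Set (ℕ → I) := {x | x 0 ∈ matom (w₁ 0)} with hAstar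
  set Bstar : Set (ℕ → I) := {x | x 0 ∈ matom (w₂ 0)} with hBstar
  have hAm : MeasurableSet Astar := (measurable_pi_apply 0) (measurableSet_matom _)
  have hBm : MeasurableSet Bstar := (measurable_pi_apply 0) (measurableSet_matom _)
  have ha : μ (cyl 0 w₁) = μ Astar := by
    have e1 : cyl 0 w₁ = {x : ℕ → I | ∀ s ∈ ({0} : Set ℕ), x s = w₁ s} := by
      ext x
      simp [cyl, Nat.le_zero]
    have e2 : Astar = {x : ℕ → I | ∀ s ∈ ({0} : Set ℕ), x s ∈ matom (w₁ s)} := by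
      ext x
      simp [hAstar]
    rw [e1, e2]
    exact measure_cylinderLike μ {0} w₁
  have hb : μ (cyl 0 w₂) = μ Bstar := by
    have e1 : cyl 0 w₂ = {x : ℕ → I | ∀ s ∈ ({0} : Set ℕ), x s = w₂ s} := by
      ext x
      simp [cyl, Nat.le_zero]
    have e2 : Bstar = {x : ℕ → I | ∀ s ∈ ({0} : Set ℕ), x s ∈ matom (w₂ s)} := by
      ext x
      simp [hBstar]
    rw [e1, e2]
    exact measure_cylinderLike μ {0} w₂
  set p : ℝ≥0∞ := μ Astar * μ Bstar with hp
  have hp0 : p ≠ 0 := by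
    rw [hp]
    exact mul_ne_zero (ha ▸ hcylpos w₁) (hb ▸ hcylpos w₂)
  have hpt : p ≠ ⊤ := ENNReal.mul_ne_top (measure_ne_top μ _) (measure_ne_top μ _)
  set rp : ℝ := p.toReal with hrpdef
  have hrp : 0 < rp := ENNReal.toReal_pos hp0 hpt
  have hrp1 : rp ≤ 1 := by
    rw [hrpdef]
    rw [show (1 : ℝ) = (1 : ℝ≥0∞).toReal by simp]
    refine ENNReal.toReal_mono one_ne_top ?_
    rw [hp]
    exact mul_le_one' prob_le_one prob_le_one
  have hmixAB := hmix Astar Bstar hAm hBm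
  -- Step 5: the two-coordinate hull identity
  have hDeq : ∀ N : ℕ, 1 ≤ N →
      μ (cyl 0 w₁ ∩ lshift^[N] ⁻¹' cyl 0 w₂) = μ (Astar ∩ lshift^[N] ⁻¹' Bstar) := by
    intro N hN
    have hN0 : N ≠ 0 := by omega
    set v : ℕ → I := fun s => if s = 0 then w₁ 0 else w₂ 0 with hv
    have hv0 : v 0 = w₁ 0 := by simp [hv]
    have hvN : v N = w₂ 0 := by simp [hv, hN0]
    have e1 : cyl 0 w₁ ∩ lshift^[N] ⁻¹' cyl 0 w₂
        = {x : ℕ → I | ∀ s ∈ ({0, N} : Set ℕ), x s = v s} := by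
      ext x
      simp only [Set.mem_inter_iff, Set.mem_preimage, Set.mem_setOf_eq, Set.mem_insert_iff,
        Set.mem_singleton_iff, cyl]
      constructor
      · rintro ⟨h1, h2⟩ s hs
        rcases hs with rfl | rfl
        · rw [hv0]
          exact h1 0 le_rfl
        · have h3 := h2 0 le_rfl
          rw [lshift_iterate, zero_add] at h3
          rw [hvN]
          exact h3
      · intro h
        constructor
        · intro s hs
          obtain rfl := Nat.le_zero.mp hs
          have := h 0 (Or.inl rfl)
          rwa [hv0] at this
        · intro s hs
          obtain rfl := Nat.le_zero.mp hs
          rw [lshift_iterate, zero_add]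
          have := h N (Or.inr rfl)
          rwa [hvN] at this
    have e2 : Astar ∩ lshift^[N] ⁻¹' Bstar
        = {x : ℕ → I | ∀ s ∈ ({0, N} : Set ℕ), x s ∈ matom (v s)} := by
      ext x
      simp only [Set.mem_inter_iff, Set.mem_preimage, Set.mem_setOf_eq, Set.mem_insert_iff,
        Set.mem_singleton_iff, hAstar, hBstar]
      constructor
      · rintro ⟨h1, h2⟩ s hs
        rcases hs with rfl | rfl
        · rw [hv0]
          exact h1
        · rw [lshift_iterate, zero_add] at h2
          rw [hvN]
          exact h2
      · intro h
        constructor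
        · have := h 0 (Or.inl rfl)
          rwa [hv0] at this
        · show (lshift^[N] x) 0 ∈ matom (w₂ 0)
          rw [lshift_iterate, zero_add]
          have := h N (Or.inr rfl)
          rwa [hvN] at this
    rw [e1, e2]
    exact measure_cylinderLike μ {0, N} v
  -- Step 6: containment of the good intersection in the target set
  have hcont : ∀ (N M : ℕ),
      G M ∩ (cyl 0 w₁ ∩ lshift^[N] ⁻¹' cyl 0 w₂) ⊆
        {x : ℕ → I | ∃ z : ℕ → I, z ∈ goodSet μ P L M ε ∧ x ∈ cyl N z ∧
          cyl N z ⊆ cyl 0 w₁ ∧ lshift^[N] '' cyl N z = cyl 0 w₂} := by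
    rintro N M x ⟨hxG, hx1, hx2⟩
    have hx10 : x 0 = w₁ 0 := hx1 0 le_rfl
    have hxN : x N = w₂ 0 := by
      have h3 := hx2 0 le_rfl
      rwa [lshift_iterate, zero_add] at h3
    refine ⟨x, hxG, fun s _ => rfl, ?_, ?_⟩
    · intro y hy s hs
      obtain rfl := Nat.le_zero.mp hs
      rw [hy 0 (Nat.zero_le N), hx10]
    · apply Set.eq_of_subset_of_subset
      · rintro w ⟨y, hy, rfl⟩ s hs
        obtain rfl := Nat.le_zero.mp hs
        rw [lshift_iterate, zero_add, hy N le_rfl, hxN]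
      · intro w hw
        have hw0 : w 0 = w₂ 0 := hw 0 le_rfl
        refine ⟨fun s => if s < N then x s else w (s - N), fun s hs => ?_, ?_⟩
        · show (if s < N then x s else w (s - N)) = x s
          by_cases h : s < N
          · rw [if_pos h]
          · have hsN : s = N := by omega
            subst hsN
            rw [if_neg h, Nat.sub_self, hw0, hxN]
        · funext n
          rw [lshift_iterate]
          show (if n + N < N then x (n + N) else w (n + N - N)) = w n
          rw [if_neg (by omega : ¬(n + N < N))]
          congr 1
          omega
  -- Step 7: choose thresholds
  set c₁ : ℝ≥0∞ := ENNReal.ofReal (3 / 4 * rp) with hc₁def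
  have hc₁ : c₁ < p := by
    rw [hc₁def, ENNReal.ofReal_lt_iff_lt_toReal (by positivity) hpt, ← hrpdef]
    linarith
  have hevN := hmixAB.eventually (eventually_gt_nhds hc₁)
  set c₂ : ℝ≥0∞ := ENNReal.ofReal (1 - rp / 4) with hc₂def
  have hc₂ : c₂ < 1 := by
    rw [hc₂def, show (1 : ℝ≥0∞) = ENNReal.ofReal 1 by simp]
    apply ENNReal.ofReal_lt_ofReal_iff_of_nonneg (by linarith) |>.mpr
    linarith
  have hevM := htendG.eventually (eventually_gt_nhds hc₂)
  obtain ⟨M₀, hM₀⟩ := eventually_atTop.mp hevM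
  refine ⟨M₀, fun M hM => ?_⟩
  obtain ⟨N₁, hN₁⟩ := eventually_atTop.mp hevN
  refine ⟨max N₁ 1, fun N hN => ?_⟩
  have hNN₁ : N₁ ≤ N := le_trans (le_max_left _ _) hN
  have hN1 : 1 ≤ N := le_trans (le_max_right _ _) hN
  -- Step 8: final estimate via toReal arithmetic
  set DD : Set (ℕ → I) := cyl 0 w₁ ∩ lshift^[N] ⁻¹' cyl 0 w₂ with hDD
  set SS : Set (ℕ → I) := {x : ℕ → I | ∃ z : ℕ → I, z ∈ goodSet μ P L M ε ∧ x ∈ cyl N z ∧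
    cyl N z ⊆ cyl 0 w₁ ∧ lshift^[N] '' cyl N z = cyl 0 w₂} with hSS
  have h1 : μ DD = μ (Astar ∩ lshift^[N] ⁻¹' Bstar) := hDeq N hN1
  have hub : μ DD ≤ μ (G M ∩ DD) + μ ((G M)ᶜ) := by
    refine le_trans (measure_mono ?_) (measure_union_le _ _)
    intro x hx
    by_cases hxg : x ∈ G M
    · exact Or.inl ⟨hxg, hx⟩
    · exact Or.inr hxg
  have hSSb : μ (G M ∩ DD) ≤ μ SS := measure_mono (hcont N M)
  have hDst_lt : 3 / 4 * rp < (μ (Astar ∩ lshift^[N] ⁻¹' Bstar)).toReal := by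
    have h2 := hN₁ N hNN₁
    rw [hc₁def, ENNReal.ofReal_lt_iff_lt_toReal (by positivity) (measure_ne_top μ _)] at h2
    exact h2
  have hGc_lt : (μ ((G M)ᶜ)).toReal < rp / 4 := by
    have h2 := hM₀ M hM
    rw [hc₂def, ENNReal.ofReal_lt_iff_lt_toReal (by linarith) (measure_ne_top μ _)] at h2
    have h3 := measure_compl (hGmeas M) (measure_ne_top μ _)
    rw [measure_univ] at h3
    have h4 : (μ ((G M)ᶜ)).toReal = 1 - (μ (G M)).toReal := by
      rw [h3, ENNReal.toReal_sub_of_le prob_le_one one_ne_top, ENNReal.toReal_one]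
    have h5 : (μ (G M)).toReal ≤ 1 := by
      rw [← ENNReal.toReal_one]
      exact ENNReal.toReal_mono one_ne_top prob_le_one
    linarith
  -- convert hub to reals
  have hub' : (μ DD).toReal ≤ (μ (G M ∩ DD)).toReal + (μ ((G M)ᶜ)).toReal := by
    have h2 : (μ (G M ∩ DD) + μ ((G M)ᶜ)).toReal
        = (μ (G M ∩ DD)).toReal + (μ ((G M)ᶜ)).toReal :=
      ENNReal.toReal_add (measure_ne_top μ _) (measure_ne_top μ _)
    rw [← h2]
    exact ENNReal.toReal_mono
      (ENNReal.add_ne_top.mpr ⟨measure_ne_top μ _, measure_ne_top μ _⟩) hub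
  have hSSb' : (μ (G M ∩ DD)).toReal ≤ (μ SS).toReal :=
    ENNReal.toReal_mono (measure_ne_top μ _) hSSb
  have hDD' : (μ DD).toReal = (μ (Astar ∩ lshift^[N] ⁻¹' Bstar)).toReal := by rw [h1]
  -- final
  rw [← ENNReal.toReal_le_toReal (by
      exact ENNReal.mul_ne_top (ENNReal.mul_ne_top (by norm_num) (measure_ne_top μ _))
        (measure_ne_top μ _)) (measure_ne_top μ _)]
  have hLHS : ((1 / 2 : ℝ≥0∞) * μ (cyl 0 w₁) * μ (cyl 0 w₂)).toReal = 1 / 2 * rp := by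
    rw [ENNReal.toReal_mul, ENNReal.toReal_mul, ha, hb, hrpdef, hp, ENNReal.toReal_mul]
    norm_num
    ring
  rw [hLHS]
  linarith
end

section
/- Let f be a Markov transformation on [0,1] satisfying the bounded distortion property |f'(x)/f'(y) − 1| ≤ c|x−y|^α for x, y in the same element of P₀, together with uniform expansion. Then there is a constant C such that for every n, every element P of the partition P_n, and every measurable A ⊆ P: C^{-1} · λ(f^j(A))/λ(f^j(P)) ≤ λ(A)/λ(P) ≤ C · λ(f^j(A))/λ(f^j(P)) for j = 1, …, n+1, where λ is Lebesgue measure. -/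
open Set Finset MeasureTheory ENNReal

/-- An itinerary cylinder of the Markov map `f`: the set of points whose first `n+1`
iterates visit the prescribed partition elements `w 0, …, w n`. -/
def itinCyl (f : ℝ → ℝ) (n : ℕ) (w : ℕ → Set ℝ) : Set ℝ :=
  {x : ℝ | ∀ j ≤ n, f^[j] x ∈ w j}


lemma itinCyl_zero (f : ℝ → ℝ) (w : ℕ → Set ℝ) : itinCyl f 0 w = w 0 := by
  ext x; simp [itinCyl]

lemma itinCyl_succ (f : ℝ → ℝ) (n : ℕ) (w : ℕ → Set ℝ) :
    itinCyl f (n+1) w = w 0 ∩ f ⁻¹' itinCyl f n (fun i => w (i+1)) := by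
  ext x
  simp only [itinCyl, mem_setOf_eq, mem_inter_iff, Set.mem_preimage]
  constructor
  · intro h
    refine ⟨h 0 (by omega), fun j hj => ?_⟩
    have := h (j+1) (by omega)
    rwa [Function.iterate_succ_apply] at this
  · rintro ⟨h0, h⟩ j hj
    cases j with
    | zero => exact h0
    | succ j => rw [Function.iterate_succ_apply]; exact h j (by omega)

lemma hasDerivAt_iter (f f' : ℝ → ℝ) (P₀ : Set (Set ℝ))
    (hderiv : ∀ x ∈ ⋃₀ P₀, HasDerivAt f (f' x) x)
    (j : ℕ) (x : ℝ) (hx : ∀ m < j, f^[m] x ∈ ⋃₀ P₀) :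
    HasDerivAt f^[j] (∏ i ∈ Finset.range j, f' (f^[i] x)) x := by
  induction j with
  | zero => simpa using hasDerivAt_id x
  | succ j ih =>
    rw [Function.iterate_succ']
    have h1 : HasDerivAt f (f' (f^[j] x)) (f^[j] x) := hderiv _ (hx j (by omega))
    have h2 := ih (fun m hm => hx m (by omega))
    have h3 := h1.comp x h2
    rw [Finset.prod_range_succ]
    rw [mul_comm (∏ i ∈ Finset.range j, f' (f^[i] x))]; exact h3

section
variable (f f' : ℝ → ℝ) (P₀ : Set (Set ℝ))

lemma mono_or_anti
    (hint : ∀ Q ∈ P₀, ∃ u v : ℝ, u < v ∧ Q = Set.Ioo u v ∧ Q ⊆ Set.Icc (0 : ℝ) 1)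
    (hinj : ∀ Q ∈ P₀, Set.InjOn f Q)
    (hderiv : ∀ x ∈ ⋃₀ P₀, HasDerivAt f (f' x) x)
    (Q : Set ℝ) (hQ : Q ∈ P₀) : StrictMonoOn f Q ∨ StrictAntiOn f Q := by
  obtain ⟨u, v, huv, rfl, -⟩ := hint Q hQ
  have hc : ContinuousOn f (Set.Ioo u v) := fun x hx =>
    (hderiv x ⟨_, hQ, hx⟩).continuousAt.continuousWithinAt
  exact ContinuousOn.strictMonoOn_of_injOn_Ioo huv hc (hinj _ hQ)
end

lemma ordConnected_itinCyl (f f' : ℝ → ℝ) (P₀ : Set (Set ℝ))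
    (hint : ∀ Q ∈ P₀, ∃ u v : ℝ, u < v ∧ Q = Set.Ioo u v ∧ Q ⊆ Set.Icc (0 : ℝ) 1)
    (hinj : ∀ Q ∈ P₀, Set.InjOn f Q)
    (hderiv : ∀ x ∈ ⋃₀ P₀, HasDerivAt f (f' x) x) :
    ∀ (n : ℕ) (w : ℕ → Set ℝ), (∀ j, w j ∈ P₀) → (itinCyl f n w).OrdConnected := by
  intro n
  induction n with
  | zero =>
    intro w hw
    rw [itinCyl_zero]
    obtain ⟨u, v, huv, hQ, -⟩ := hint _ (hw 0)
    rw [hQ]; exact Set.ordConnected_Ioo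
  | succ n ih =>
    intro w hw
    rw [itinCyl_succ]
    have hw0 : (w 0).OrdConnected := by
      obtain ⟨u, v, huv, hQ, -⟩ := hint _ (hw 0); rw [hQ]; exact Set.ordConnected_Ioo
    have hcyl : (itinCyl f n (fun i => w (i+1))).OrdConnected := ih _ (fun j => hw (j+1))
    constructor
    rintro x ⟨hx0, hx1⟩ z ⟨hz0, hz1⟩ y hy
    have hyw : y ∈ w 0 := hw0.out hx0 hz0 hy
    refine ⟨hyw, ?_⟩
    have hfy : f y ∈ Set.uIcc (f x) (f z) := by
      rcases mono_or_anti f f' P₀ hint hinj hderiv _ (hw 0) with hm | hm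
      · have h1 : f x ≤ f y := hm.monotoneOn hx0 hyw hy.1
        have h2 : f y ≤ f z := hm.monotoneOn hyw hz0 hy.2
        exact Set.mem_uIcc.2 (Or.inl ⟨h1, h2⟩)
      · have h1 : f z ≤ f y := hm.antitoneOn hyw hz0 hy.2
        have h2 : f y ≤ f x := hm.antitoneOn hx0 hyw hy.1
        exact Set.mem_uIcc.2 (Or.inr ⟨h1, h2⟩)
    exact hcyl.uIcc_subset hx1 hz1 hfy

lemma expansion_iter (f f' : ℝ → ℝ) (P₀ : Set (Set ℝ)) (σ γ : ℝ) (n₀ : ℕ)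
    (hσ : 0 < σ) (hσ' : ∀ x ∈ ⋃₀ P₀, σ ≤ |f' x|)
    (hn₀ : 0 < n₀) (hγ : 1 < γ)
    (hexp : ∀ x : ℝ, (∀ j < n₀, f^[j] x ∈ ⋃₀ P₀) →
      γ ≤ |∏ j ∈ Finset.range n₀, f' (f^[j] x)|) :
    ∀ (j : ℕ) (x : ℝ), (∀ m < j, f^[m] x ∈ ⋃₀ P₀) →
      min 1 (σ ^ n₀) * γ ^ (j / n₀) ≤ |∏ i ∈ Finset.range j, f' (f^[i] x)| := by
  intro j
  induction j using Nat.strong_induction_on with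
  | _ j ih =>
  intro x hx
  rcases lt_or_ge j n₀ with hj | hj
  · rw [Nat.div_eq_of_lt hj, pow_zero, mul_one]
    have h1 : |∏ i ∈ Finset.range j, f' (f^[i] x)| = ∏ i ∈ Finset.range j, |f' (f^[i] x)| :=
      Finset.abs_prod _ _
    have h2 : σ ^ j ≤ ∏ i ∈ Finset.range j, |f' (f^[i] x)| := by
      calc σ ^ j = ∏ _i ∈ Finset.range j, σ := by rw [Finset.prod_const, Finset.card_range]
        _ ≤ _ := Finset.prod_le_prod (fun i _ => hσ.le)
            (fun i hi => hσ' _ (hx i (Finset.mem_range.1 hi)))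
    rw [h1]
    refine le_trans ?_ h2
    rcases le_or_gt 1 σ with h | h
    · exact le_trans (min_le_left _ _) (one_le_pow₀ h)
    · exact le_trans (min_le_right _ _) (pow_le_pow_of_le_one hσ.le h.le hj.le)
  · obtain ⟨k, rfl⟩ : ∃ k, j = n₀ + k := ⟨j - n₀, by omega⟩
    have hsplit : (∏ i ∈ Finset.range (n₀ + k), f' (f^[i] x)) =
        (∏ i ∈ Finset.range n₀, f' (f^[i] x)) *
          ∏ i ∈ Finset.range k, f' (f^[n₀ + i] x) := Finset.prod_range_add _ _ _
    have hre : ∀ i : ℕ, f^[n₀ + i] x = f^[i] (f^[n₀] x) := by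
      intro i; rw [Nat.add_comm, Function.iterate_add_apply]
    have hx' : ∀ m < k, f^[m] (f^[n₀] x) ∈ ⋃₀ P₀ := by
      intro m hm; rw [← hre]; exact hx _ (by omega)
    have hIH := ih k (by omega) (f^[n₀] x) hx'
    have hγ0 : (0:ℝ) < γ := lt_trans one_pos hγ
    have hexp1 := hexp x (fun m hm => hx m (by omega))
    rw [hsplit, abs_mul]
    have h2 : (∏ i ∈ Finset.range k, f' (f^[n₀ + i] x)) =
        ∏ i ∈ Finset.range k, f' (f^[i] (f^[n₀] x)) := by
      apply Finset.prod_congr rfl; intro i _; rw [hre]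
    rw [h2]
    have hdiv : (n₀ + k) / n₀ = k / n₀ + 1 := by
      rw [Nat.add_comm, Nat.add_div_right k hn₀]
    rw [hdiv, pow_succ]
    calc min 1 (σ ^ n₀) * (γ ^ (k / n₀) * γ)
        = γ * (min 1 (σ ^ n₀) * γ ^ (k / n₀)) := by ring
      _ ≤ |∏ i ∈ Finset.range n₀, f' (f^[i] x)| *
            |∏ i ∈ Finset.range k, f' (f^[i] (f^[n₀] x))| := by
          apply mul_le_mul hexp1 hIH (by positivity) (abs_nonneg _)

lemma injOn_iter (f : ℝ → ℝ) (P₀ : Set (Set ℝ))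
    (hinj : ∀ Q ∈ P₀, Set.InjOn f Q)
    (n : ℕ) (w : ℕ → Set ℝ) (hw : ∀ j, w j ∈ P₀) :
    ∀ j ≤ n + 1, Set.InjOn f^[j] (itinCyl f n w) := by
  intro j
  induction j with
  | zero => intro _; simpa using Set.injOn_id _
  | succ j ih =>
    intro hj
    rw [Function.iterate_succ']
    refine Set.InjOn.comp (hinj _ (hw j)) (ih (by omega)) ?_
    intro x hx
    exact hx j (by omega)

lemma contraction_iter (f f' : ℝ → ℝ) (P₀ : Set (Set ℝ)) (σ γ : ℝ) (n₀ : ℕ)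
    (hint : ∀ Q ∈ P₀, ∃ u v : ℝ, u < v ∧ Q = Set.Ioo u v ∧ Q ⊆ Set.Icc (0 : ℝ) 1)
    (hinj : ∀ Q ∈ P₀, Set.InjOn f Q)
    (hderiv : ∀ x ∈ ⋃₀ P₀, HasDerivAt f (f' x) x)
    (hσ : 0 < σ) (hσ' : ∀ x ∈ ⋃₀ P₀, σ ≤ |f' x|)
    (hn₀ : 0 < n₀) (hγ : 1 < γ)
    (hexp : ∀ x : ℝ, (∀ j < n₀, f^[j] x ∈ ⋃₀ P₀) →
      γ ≤ |∏ j ∈ Finset.range n₀, f' (f^[j] x)|)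
    (n : ℕ) (w : ℕ → Set ℝ) (hw : ∀ j, w j ∈ P₀)
    {x y : ℝ} (hx : x ∈ itinCyl f n w) (hy : y ∈ itinCyl f n w)
    (i : ℕ) (hi : i ≤ n) :
    |f^[i] x - f^[i] y| ≤ (min 1 (σ ^ n₀))⁻¹ * (γ ^ ((n - i) / n₀))⁻¹ := by
  have hγ0 : (0:ℝ) < γ := lt_trans one_pos hγ
  have hc₁ : (0:ℝ) < min 1 (σ ^ n₀) := lt_min one_pos (by positivity)
  have hc₁1 : min 1 (σ ^ n₀) ≤ 1 := min_le_left _ _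
  have hgp : (0:ℝ) < γ ^ ((n - i) / n₀) := by positivity
  -- points in `w n` are within distance 1
  have hIcc : ∀ z ∈ itinCyl f n w, ∀ m ≤ n, f^[m] z ∈ Set.Icc (0:ℝ) 1 := by
    intro z hz m hm
    obtain ⟨u, v, -, -, hsub⟩ := hint _ (hw m)
    exact hsub (hz m hm)
  have hdist1 : ∀ z z' : ℝ, z ∈ Set.Icc (0:ℝ) 1 → z' ∈ Set.Icc (0:ℝ) 1 → |z - z'| ≤ 1 := by
    intro z z' hz hz'
    rw [abs_sub_le_iff]
    constructor <;> [linarith [hz.1, hz.2, hz'.1, hz'.2]; linarith [hz.1, hz.2, hz'.1, hz'.2]]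
  -- generic bound on |p - q| for p q in the image
  have key : ∀ p q : ℝ, p ∈ f^[i] '' itinCyl f n w → q ∈ f^[i] '' itinCyl f n w → p < q →
      q - p ≤ (min 1 (σ ^ n₀))⁻¹ * (γ ^ ((n - i) / n₀))⁻¹ := by
    intro p q hp hq hpq
    -- the image is order-connected
    have hcylOrd : (itinCyl f n w).OrdConnected :=
      ordConnected_itinCyl f f' P₀ hint hinj hderiv n w hw
    have hcont : ContinuousOn f^[i] (itinCyl f n w) := by
      intro z hz
      exact (hasDerivAt_iter f f' P₀ hderiv i z
        (fun m hm => ⟨_, hw m, hz m (by omega)⟩)).continuousAt.continuousWithinAt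
    have himgOrd : (f^[i] '' itinCyl f n w).OrdConnected :=
      (hcylOrd.isPreconnected.image _ hcont).ordConnected
    have hIccsub : Set.Icc p q ⊆ f^[i] '' itinCyl f n w := himgOrd.out hp hq
    -- derivative info on the image
    have hmem : ∀ z ∈ f^[i] '' itinCyl f n w, ∀ m < n - i, f^[m] z ∈ ⋃₀ P₀ := by
      rintro z ⟨u, hu, rfl⟩ m hm
      rw [← Function.iterate_add_apply]
      exact ⟨_, hw (m + i), hu (m + i) (by omega)⟩
    have hD : ∀ z ∈ Set.Icc p q, HasDerivAt f^[n - i]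
        (∏ m ∈ Finset.range (n - i), f' (f^[m] z)) z := by
      intro z hz
      exact hasDerivAt_iter f f' P₀ hderiv _ z (hmem z (hIccsub hz))
    obtain ⟨ξ, hξ, hslope⟩ := exists_hasDerivAt_eq_slope f^[n - i]
      (fun z => ∏ m ∈ Finset.range (n - i), f' (f^[m] z)) hpq
      (fun z hz => (hD z hz).continuousAt.continuousWithinAt)
      (fun z hz => hD z (Set.Ioo_subset_Icc_self hz))
    have hξI : ξ ∈ Set.Icc p q := Set.Ioo_subset_Icc_self hξ
    have hlow : min 1 (σ ^ n₀) * γ ^ ((n - i) / n₀) ≤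
        |∏ m ∈ Finset.range (n - i), f' (f^[m] ξ)| :=
      expansion_iter f f' P₀ σ γ n₀ hσ hσ' hn₀ hγ hexp _ ξ (hmem ξ (hIccsub hξI))
    -- |f^[n-i] q - f^[n-i] p| ≤ 1
    obtain ⟨up, hup, rfl⟩ := hp
    obtain ⟨uq, huq, rfl⟩ := hq
    have hiter : ∀ u : ℝ, f^[n - i] (f^[i] u) = f^[n] u := by
      intro u; rw [← Function.iterate_add_apply]; congr 1; omega
    have htop : |f^[n - i] (f^[i] uq) - f^[n - i] (f^[i] up)| ≤ 1 := by
      rw [hiter, hiter]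
      exact hdist1 _ _ (hIcc uq huq n le_rfl) (hIcc up hup n le_rfl)
    rw [hslope, abs_div] at hlow
    have hden : (0:ℝ) < |f^[i] uq - f^[i] up| := by
      rw [abs_of_pos (by linarith)]; linarith
    have h2 : min 1 (σ ^ n₀) * γ ^ ((n - i) / n₀) * |f^[i] uq - f^[i] up| ≤ 1 := by
      calc min 1 (σ ^ n₀) * γ ^ ((n - i) / n₀) * |f^[i] uq - f^[i] up|
          ≤ |f^[n - i] (f^[i] uq) - f^[n - i] (f^[i] up)| / |f^[i] uq - f^[i] up|
              * |f^[i] uq - f^[i] up| := by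
            apply mul_le_mul_of_nonneg_right hlow (abs_nonneg _)
        _ = |f^[n - i] (f^[i] uq) - f^[n - i] (f^[i] up)| := by
            field_simp
        _ ≤ 1 := htop
    have hc : (0:ℝ) < min 1 (σ ^ n₀) * γ ^ ((n - i) / n₀) := by positivity
    have h3 : |f^[i] uq - f^[i] up| ≤ (min 1 (σ ^ n₀) * γ ^ ((n - i) / n₀))⁻¹ := by
      rw [← one_div]
      exact (le_div_iff₀ hc).mpr (by linarith)
    rw [abs_of_pos (by linarith : (0:ℝ) < f^[i] uq - f^[i] up)] at h3
    rw [mul_inv] at h3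
    linarith
  -- now conclude
  rcases lt_trichotomy (f^[i] x) (f^[i] y) with h | h | h
  · rw [abs_sub_comm, abs_of_pos (by linarith)]
    exact key _ _ ⟨x, hx, rfl⟩ ⟨y, hy, rfl⟩ h
  · rw [h]; simp; positivity
  · rw [abs_of_pos (by linarith)]
    exact key _ _ ⟨y, hy, rfl⟩ ⟨x, hx, rfl⟩ h

lemma sum_pow_div_le (R : ℝ) (hR0 : 0 ≤ R) (hR1 : R < 1) (n₀ : ℕ) (hn₀ : 0 < n₀) (N : ℕ) :
    ∑ m ∈ Finset.range N, R ^ (m / n₀) ≤ (n₀ : ℝ) * (1 - R)⁻¹ := by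
  have hmaps : ∀ m ∈ Finset.range N, m / n₀ ∈ Finset.range N := by
    intro m hm
    rw [Finset.mem_range] at *
    exact lt_of_le_of_lt (Nat.div_le_self m n₀) hm
  rw [← Finset.sum_fiberwise_of_maps_to' hmaps (fun q => R ^ q)]
  have hinner : ∀ q ∈ Finset.range N,
      (∑ _m ∈ Finset.range N with _m / n₀ = q, R ^ q) ≤ (n₀ : ℝ) * R ^ q := by
    intro q _
    rw [Finset.sum_const, nsmul_eq_mul]
    apply mul_le_mul_of_nonneg_right _ (by positivity)
    norm_cast
    calc ({m ∈ Finset.range N | m / n₀ = q}).card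
        ≤ (Finset.Ico (n₀ * q) (n₀ * q + n₀)).card := by
          apply Finset.card_le_card
          intro m hm
          rw [Finset.mem_filter] at hm
          obtain ⟨-, hq⟩ := hm
          rw [Finset.mem_Ico]
          constructor
          · rw [← hq]; exact Nat.mul_div_le m n₀
          · have : m / n₀ < q + 1 := by omega
            have h2 := (Nat.div_lt_iff_lt_mul hn₀).mp this
            have h3 : (q + 1) * n₀ = n₀ * q + n₀ := by ring
            omega
      _ = n₀ := by rw [Nat.card_Ico]; omega
  calc ∑ q ∈ Finset.range N, ∑ _m ∈ Finset.range N with _m / n₀ = q, R ^ q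
      ≤ ∑ q ∈ Finset.range N, (n₀:ℝ) * R ^ q := Finset.sum_le_sum hinner
    _ = (n₀:ℝ) * ∑ q ∈ Finset.range N, R ^ q := by rw [Finset.mul_sum]
    _ ≤ (n₀:ℝ) * (1 - R)⁻¹ := by
        apply mul_le_mul_of_nonneg_left _ (by positivity)
        rw [← tsum_geometric_of_lt_one hR0 hR1]
        exact Summable.sum_le_tsum _ (fun i _ => by positivity) (summable_geometric_of_lt_one hR0 hR1)

lemma distortion_iter (f f' : ℝ → ℝ) (P₀ : Set (Set ℝ)) (σ γ c₀ a : ℝ) (n₀ : ℕ)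
    (hint : ∀ Q ∈ P₀, ∃ u v : ℝ, u < v ∧ Q = Set.Ioo u v ∧ Q ⊆ Set.Icc (0 : ℝ) 1)
    (hinj : ∀ Q ∈ P₀, Set.InjOn f Q)
    (hderiv : ∀ x ∈ ⋃₀ P₀, HasDerivAt f (f' x) x)
    (hσ : 0 < σ) (hσ' : ∀ x ∈ ⋃₀ P₀, σ ≤ |f' x|)
    (hn₀ : 0 < n₀) (hγ : 1 < γ)
    (hexp : ∀ x : ℝ, (∀ j < n₀, f^[j] x ∈ ⋃₀ P₀) →
      γ ≤ |∏ j ∈ Finset.range n₀, f' (f^[j] x)|)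
    (hc₀ : 0 < c₀) (ha : 0 < a)
    (hdist : ∀ Q ∈ P₀, ∀ x ∈ Q, ∀ y ∈ Q, |f' x / f' y - 1| ≤ c₀ * |x - y| ^ a)
    (n : ℕ) (w : ℕ → Set ℝ) (hw : ∀ j, w j ∈ P₀)
    {x y : ℝ} (hx : x ∈ itinCyl f n w) (hy : y ∈ itinCyl f n w)
    (j : ℕ) (hj : j ≤ n + 1) :
    |∏ i ∈ Finset.range j, f' (f^[i] x)| ≤
      Real.exp (c₀ * (((min 1 (σ ^ n₀))⁻¹ ^ a) * ((n₀ : ℝ) * (1 - γ⁻¹ ^ a)⁻¹))) *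
        |∏ i ∈ Finset.range j, f' (f^[i] y)| := by
  have hγ0 : (0:ℝ) < γ := lt_trans one_pos hγ
  have hγinv0 : (0:ℝ) ≤ γ⁻¹ := by positivity
  have hγinv1 : γ⁻¹ < 1 := inv_lt_one_of_one_lt₀ hγ
  have hc₁ : (0:ℝ) < min 1 (σ ^ n₀) := lt_min one_pos (by positivity)
  set c₁ : ℝ := min 1 (σ ^ n₀) with hc₁def
  set S : ℝ := γ⁻¹ ^ a with hSdef
  have hS0 : 0 ≤ S := Real.rpow_nonneg hγinv0 a
  have hS1 : S < 1 := Real.rpow_lt_one hγinv0 hγinv1 ha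
  set t : ℕ → ℝ := fun i => |f^[i] x - f^[i] y| ^ a with htdef
  have ht0 : ∀ i, 0 ≤ t i := fun i => Real.rpow_nonneg (abs_nonneg _) a
  -- factor-wise bound
  have hfac : ∀ i < j, |f' (f^[i] x)| ≤ (1 + c₀ * t i) * |f' (f^[i] y)| := by
    intro i hij
    have hiw : i ≤ n := by omega
    have hp : f^[i] x ∈ w i := hx i hiw
    have hq : f^[i] y ∈ w i := hy i hiw
    have hd := hdist _ (hw i) _ hp _ hq
    have hq0 : (0:ℝ) < |f' (f^[i] y)| := lt_of_lt_of_le hσ (hσ' _ ⟨_, hw i, hq⟩)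
    have hqne : f' (f^[i] y) ≠ 0 := by
      intro h; rw [h] at hq0; simp at hq0
    have hratio : |f' (f^[i] x) / f' (f^[i] y)| ≤ 1 + c₀ * t i := by
      calc |f' (f^[i] x) / f' (f^[i] y)|
          ≤ |f' (f^[i] x) / f' (f^[i] y) - 1| + 1 := by
            have := abs_sub_abs_le_abs_sub (f' (f^[i] x) / f' (f^[i] y)) 1
            simp only [abs_one] at this
            linarith
        _ ≤ c₀ * t i + 1 := by exact add_le_add_left hd 1
        _ = 1 + c₀ * t i := by ring
    calc |f' (f^[i] x)| = |f' (f^[i] x) / f' (f^[i] y)| * |f' (f^[i] y)| := by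
          rw [← abs_mul, div_mul_cancel₀ _ hqne]
      _ ≤ (1 + c₀ * t i) * |f' (f^[i] y)| := mul_le_mul_of_nonneg_right hratio (abs_nonneg _)
  -- sum bound
  have hsum : ∑ i ∈ Finset.range j, t i ≤ c₁⁻¹ ^ a * ((n₀ : ℝ) * (1 - S)⁻¹) := by
    have hterm : ∀ i ∈ Finset.range j, t i ≤ c₁⁻¹ ^ a * S ^ ((n - i) / n₀) := by
      intro i hij
      rw [Finset.mem_range] at hij
      have hiw : i ≤ n := by omega
      have hcon := contraction_iter f f' P₀ σ γ n₀ hint hinj hderiv hσ hσ' hn₀ hγ hexp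
        n w hw hx hy i hiw
      have h1 : t i ≤ (c₁⁻¹ * (γ ^ ((n - i) / n₀))⁻¹) ^ a :=
        Real.rpow_le_rpow (abs_nonneg _) hcon ha.le
      have h2 : (c₁⁻¹ * (γ ^ ((n - i) / n₀))⁻¹) ^ a
          = c₁⁻¹ ^ a * ((γ ^ ((n - i) / n₀))⁻¹) ^ a :=
        Real.mul_rpow (by positivity) (by positivity)
      have h3 : ((γ ^ ((n - i) / n₀))⁻¹ : ℝ) ^ a = S ^ ((n - i) / n₀) := by
        rw [← inv_pow]
        set k := (n - i) / n₀
        rw [← Real.rpow_natCast γ⁻¹ k, ← Real.rpow_natCast S k, hSdef,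
          ← Real.rpow_mul hγinv0, ← Real.rpow_mul hγinv0, mul_comm]
      rw [h2, h3] at h1
      exact h1
    calc ∑ i ∈ Finset.range j, t i
        ≤ ∑ i ∈ Finset.range j, c₁⁻¹ ^ a * S ^ ((n - i) / n₀) := Finset.sum_le_sum hterm
      _ = c₁⁻¹ ^ a * ∑ i ∈ Finset.range j, S ^ ((n - i) / n₀) := by rw [Finset.mul_sum]
      _ ≤ c₁⁻¹ ^ a * ∑ i ∈ Finset.range (n + 1), S ^ ((n - i) / n₀) := by
          apply mul_le_mul_of_nonneg_left _ (by positivity)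
          apply Finset.sum_le_sum_of_subset_of_nonneg
          · exact Finset.range_subset_range.mpr hj
          · intro i _ _; positivity
      _ = c₁⁻¹ ^ a * ∑ m ∈ Finset.range (n + 1), S ^ (m / n₀) := by
          congr 1
          have := Finset.sum_range_reflect (fun m => S ^ (m / n₀)) (n + 1)
          simpa using this
      _ ≤ c₁⁻¹ ^ a * ((n₀ : ℝ) * (1 - S)⁻¹) := by
          apply mul_le_mul_of_nonneg_left (sum_pow_div_le S hS0 hS1 n₀ hn₀ (n + 1))
            (by positivity)
  -- assemble
  have habs1 : |∏ i ∈ Finset.range j, f' (f^[i] x)| = ∏ i ∈ Finset.range j, |f' (f^[i] x)| :=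
    Finset.abs_prod _ _
  have habs2 : |∏ i ∈ Finset.range j, f' (f^[i] y)| = ∏ i ∈ Finset.range j, |f' (f^[i] y)| :=
    Finset.abs_prod _ _
  rw [habs1, habs2]
  calc ∏ i ∈ Finset.range j, |f' (f^[i] x)|
      ≤ ∏ i ∈ Finset.range j, (1 + c₀ * t i) * |f' (f^[i] y)| := by
        apply Finset.prod_le_prod (fun i _ => abs_nonneg _)
        intro i hi
        exact hfac i (Finset.mem_range.1 hi)
    _ = (∏ i ∈ Finset.range j, (1 + c₀ * t i)) * ∏ i ∈ Finset.range j, |f' (f^[i] y)| :=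
        Finset.prod_mul_distrib
    _ ≤ Real.exp (c₀ * (c₁⁻¹ ^ a * ((n₀ : ℝ) * (1 - S)⁻¹))) *
          ∏ i ∈ Finset.range j, |f' (f^[i] y)| := by
        apply mul_le_mul_of_nonneg_right _ (Finset.prod_nonneg fun i _ => abs_nonneg _)
        calc ∏ i ∈ Finset.range j, (1 + c₀ * t i)
            ≤ ∏ i ∈ Finset.range j, Real.exp (c₀ * t i) := by
              apply Finset.prod_le_prod
              · intro i _; have := ht0 i; positivity
              · intro i _
                have h := Real.add_one_le_exp (c₀ * t i)
                linarith
          _ = Real.exp (∑ i ∈ Finset.range j, c₀ * t i) := by rw [Real.exp_sum]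
          _ = Real.exp (c₀ * ∑ i ∈ Finset.range j, t i) := by rw [Finset.mul_sum]
          _ ≤ _ := by
              apply Real.exp_le_exp.mpr
              exact mul_le_mul_of_nonneg_left hsum hc₀.le

lemma volume_image_eq_lintegral (s : Set ℝ) (hs : MeasurableSet s) (g : ℝ → ℝ) (g' : ℝ → ℝ)
    (hg : ∀ x ∈ s, HasDerivWithinAt g (g' x) s x) (hginj : Set.InjOn g s) :
    volume (g '' s) = ∫⁻ x in s, ENNReal.ofReal |g' x| := by
  rw [← MeasureTheory.lintegral_abs_det_fderiv_eq_addHaar_image volume hs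
    (fun x hx => (hg x hx).hasFDerivWithinAt) hginj]
  simp only [ContinuousLinearMap.det_toSpanSingleton]

/-- Bounded distortion for Markov transformations: under the distortion condition
`|f'(x)/f'(y) − 1| ≤ c₀|x−y|^a` on partition elements and uniform expansion, there is
`C` such that for every element `P` of the `n`-th refined partition, every measurable
`A ⊆ P` and every `j ≤ n+1`, `λ(A)/λ(P)` and `λ(fʲA)/λ(fʲP)` are `C`-comparable. -/
theorem stmt13 (f f' : ℝ → ℝ) (P₀ : Set (Set ℝ)) (σ γ c₀ a : ℝ) (n₀ : ℕ)
    (hcount : P₀.Countable)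
    (hint : ∀ Q ∈ P₀, ∃ u v : ℝ, u < v ∧ Q = Set.Ioo u v ∧ Q ⊆ Set.Icc (0 : ℝ) 1)
    (hdisj : ∀ Q ∈ P₀, ∀ Q' ∈ P₀, Q ≠ Q' → Q ∩ Q' = ∅)
    (hfull : volume (Set.Icc (0 : ℝ) 1 \ ⋃₀ P₀) = 0)
    (hmarkov : ∀ Q ∈ P₀, ∀ Q' ∈ P₀, (f '' Q ∩ Q').Nonempty → Q' ⊆ f '' Q)
    (hinj : ∀ Q ∈ P₀, Set.InjOn f Q)
    (hderiv : ∀ x ∈ ⋃₀ P₀, HasDerivAt f (f' x) x)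
    (hσ : 0 < σ) (hσ' : ∀ x ∈ ⋃₀ P₀, σ ≤ |f' x|)
    (hn₀ : 0 < n₀) (hγ : 1 < γ)
    (hexp : ∀ x : ℝ, (∀ j < n₀, f^[j] x ∈ ⋃₀ P₀) →
      γ ≤ |∏ j ∈ Finset.range n₀, f' (f^[j] x)|)
    (hc₀ : 0 < c₀) (ha : 0 < a) (ha' : a ≤ 1)
    (hdist : ∀ Q ∈ P₀, ∀ x ∈ Q, ∀ y ∈ Q, |f' x / f' y - 1| ≤ c₀ * |x - y| ^ a) :
    ∃ C : ℝ, 0 < C ∧ ∀ (n : ℕ) (w : ℕ → Set ℝ), (∀ j, w j ∈ P₀) →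
      ∀ A : Set ℝ, MeasurableSet A → A ⊆ itinCyl f n w → ∀ j ≤ n + 1,
        volume A * volume (f^[j] '' itinCyl f n w) ≤
          ENNReal.ofReal C * volume (f^[j] '' A) * volume (itinCyl f n w) ∧
        volume (f^[j] '' A) * volume (itinCyl f n w) ≤
          ENNReal.ofReal C * volume A * volume (f^[j] '' itinCyl f n w) := by
  set K : ℝ := c₀ * (((min 1 (σ ^ n₀))⁻¹ ^ a) * ((n₀ : ℝ) * (1 - γ⁻¹ ^ a)⁻¹)) with hKdef
  refine ⟨Real.exp K, Real.exp_pos _, ?_⟩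
  intro n w hw A hA hAsub j hj
  set P : Set ℝ := itinCyl f n w with hPdef
  have hPord : P.OrdConnected := ordConnected_itinCyl f f' P₀ hint hinj hderiv n w hw
  have hPmeas : MeasurableSet P := hPord.measurableSet
  have hmemU : ∀ x ∈ P, ∀ m < j, f^[m] x ∈ ⋃₀ P₀ := fun x hx m hm =>
    ⟨_, hw m, hx m (by omega)⟩
  have hder : ∀ x ∈ P, HasDerivAt f^[j] (∏ i ∈ Finset.range j, f' (f^[i] x)) x := fun x hx =>
    hasDerivAt_iter f f' P₀ hderiv j x (hmemU x hx)
  have hinjP : Set.InjOn f^[j] P := injOn_iter f P₀ hinj n w hw j hj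
  set D : ℝ → ℝ≥0∞ := fun x => ENNReal.ofReal |∏ i ∈ Finset.range j, f' (f^[i] x)| with hDdef
  have himgP : volume (f^[j] '' P) = ∫⁻ x in P, D x :=
    volume_image_eq_lintegral P hPmeas _ _ (fun x hx => (hder x hx).hasDerivWithinAt) hinjP
  have himgA : volume (f^[j] '' A) = ∫⁻ x in A, D x :=
    volume_image_eq_lintegral A hA _ _
      (fun x hx => ((hder x (hAsub hx)).hasDerivWithinAt)) (hinjP.mono hAsub)
  have hPfin : volume P ≠ ⊤ := by
    obtain ⟨u, v, -, -, hsub⟩ := hint _ (hw 0)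
    have : P ⊆ Set.Icc (0:ℝ) 1 := fun x hx => hsub (hx 0 (by omega))
    refine ne_top_of_le_ne_top ?_ (measure_mono this)
    simp [Real.volume_Icc]
  have hAfin : volume A ≠ ⊤ := ne_top_of_le_ne_top hPfin (measure_mono hAsub)
  have hkey : ∀ x ∈ P, ∀ z ∈ P, D x ≤ ENNReal.ofReal (Real.exp K) * D z := by
    intro x hx z hz
    have hdd := distortion_iter f f' P₀ σ γ c₀ a n₀ hint hinj hderiv hσ hσ' hn₀ hγ hexp
      hc₀ ha hdist n w hw hx hz j hj
    calc D x ≤ ENNReal.ofReal (Real.exp K * |∏ i ∈ Finset.range j, f' (f^[i] z)|) :=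
          ENNReal.ofReal_le_ofReal hdd
      _ = ENNReal.ofReal (Real.exp K) * D z := ENNReal.ofReal_mul (Real.exp_pos _).le
  constructor
  · -- first inequality
    rw [himgP, himgA]
    have step : ∀ z ∈ A, (∫⁻ x in P, D x) ≤
        (ENNReal.ofReal (Real.exp K) * volume P) * D z := by
      intro z hz
      calc (∫⁻ x in P, D x) ≤ ∫⁻ _x in P, ENNReal.ofReal (Real.exp K) * D z :=
            setLIntegral_mono' hPmeas (fun x hx => hkey x hx z (hAsub hz))
        _ = (ENNReal.ofReal (Real.exp K) * D z) * volume P := setLIntegral_const _ _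
        _ = (ENNReal.ofReal (Real.exp K) * volume P) * D z := by ring
    calc volume A * ∫⁻ x in P, D x
        = ∫⁻ _z in A, (∫⁻ x in P, D x) := by rw [setLIntegral_const]; ring
      _ ≤ ∫⁻ z in A, (ENNReal.ofReal (Real.exp K) * volume P) * D z :=
          setLIntegral_mono' hA step
      _ = (ENNReal.ofReal (Real.exp K) * volume P) * ∫⁻ z in A, D z :=
          lintegral_const_mul' _ _ (by
            exact ENNReal.mul_ne_top ENNReal.ofReal_ne_top hPfin)
      _ = ENNReal.ofReal (Real.exp K) * (∫⁻ z in A, D z) * volume P := by ring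
  · -- second inequality
    rw [himgP, himgA]
    have step : ∀ z ∈ P, (∫⁻ x in A, D x) ≤
        (ENNReal.ofReal (Real.exp K) * volume A) * D z := by
      intro z hz
      calc (∫⁻ x in A, D x) ≤ ∫⁻ _x in A, ENNReal.ofReal (Real.exp K) * D z :=
            setLIntegral_mono' hA (fun x hx => hkey x (hAsub hx) z hz)
        _ = (ENNReal.ofReal (Real.exp K) * D z) * volume A := setLIntegral_const _ _
        _ = (ENNReal.ofReal (Real.exp K) * volume A) * D z := by ring
    calc (∫⁻ x in A, D x) * volume P
        = ∫⁻ _z in P, (∫⁻ x in A, D x) := by rw [setLIntegral_const]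
      _ ≤ ∫⁻ z in P, (ENNReal.ofReal (Real.exp K) * volume A) * D z :=
          setLIntegral_mono' hPmeas step
      _ = (ENNReal.ofReal (Real.exp K) * volume A) * ∫⁻ z in P, D z :=
          lintegral_const_mul' _ _ (ENNReal.mul_ne_top ENNReal.ofReal_ne_top hAfin)
      _ = ENNReal.ofReal (Real.exp K) * volume A * ∫⁻ z in P, D z := by ring
end

section
/- Let μ̂ be a σ-invariant Gibbs measure on a topologically mixing countable Markov chain and let Z = ∩_j ∪_{J ∈ J_j} J be a pattern set built from nested families of cylinders (J̃_j of depth d̃_j, J_j of depth d_j with d_{j-1} < d̃_j ≤ d_j, J_j < J̃_j < J_{j-1}, each J̃_j ∈ J̃_j containing a unique J_j ∈ J_j). Assume constants α_j, β_j, γ_j, δ_j with e^{−α_j} ≤ μ̂(J̃_j)/μ̂(J_{j-1}) ≤ e^{−β_j}, e^{−γ_j} ≤ μ̂(J_j)/μ̂(J̃_j), ∑_{J̃_j ⊆ J_{j-1}} μ̂(J̃_j) ≥ δ_j μ̂(J_{j-1}), and liminf_j (α_1+…+α_j+γ_1+…+γ_j)/j^η > 0 for some η > 1. Then Dim_μ̂(Z)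 ≥ liminf_{j→∞} [(β_1+…+β_j) − log(1/(δ_1⋯δ_{j+1}))] / [(α_1+…+α_j)+(γ_1+…+γ_j)], where Dim_μ̂ is the Carathéodory dimension with family all cylinders and set function μ̂. -/
open MeasureTheory Filter Finset ENNReal

/-- The Carathéodory pre-measure from coverings by cylinders of depth at least `N`,
with set function `μ̂^α`, in the limit `N → ∞`. -/
noncomputable def cylM {I : Type*} [MeasurableSpace I] (μ : Measure (ℕ → I))
    (α : ℝ) (E : Set (ℕ → I)) : ℝ≥0∞ :=
  ⨆ N : ℕ, ⨅ (c : ℕ → ℕ × (ℕ → I))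
    (_ : (∀ i, N ≤ (c i).1) ∧ E ⊆ ⋃ i, cyl (c i).1 (c i).2),
    ∑' i, (μ (cyl (c i).1 (c i).2)) ^ α

/-- The `μ̂`-dimension (Carathéodory dimension with family the cylinders and set
function `μ̂`). -/
noncomputable def cylDim {I : Type*} [MeasurableSpace I] (μ : Measure (ℕ → I))
    (E : Set (ℕ → I)) : ℝ≥0∞ :=
  sInf ((fun α : ℝ => ENNReal.ofReal α) '' {α : ℝ | 0 ≤ α ∧ cylM μ α E = 0})

namespace S19

variable {I : Type*}

/-- agreement of two words up to coordinate `a` (inclusive) -/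
def agr (a : ℕ) (u z : ℕ → I) : Prop := ∀ s, s ≤ a → u s = z s

lemma agr_refl (a : ℕ) (z : ℕ → I) : agr a z z := fun _ _ => rfl

lemma agr.symm {a : ℕ} {u z : ℕ → I} (h : agr a u z) : agr a z u :=
  fun s hs => (h s hs).symm

lemma agr.trans {a : ℕ} {u v z : ℕ → I} (h : agr a u v) (h' : agr a v z) : agr a u z :=
  fun s hs => (h s hs).trans (h' s hs)

lemma agr.mono {a b : ℕ} {u z : ℕ → I} (h : agr a u z) (hb : b ≤ a) : agr b u z :=
  fun s hs => h s (hs.trans hb)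

lemma agr_update {a : ℕ} {u z : ℕ → I} (h : agr a u z) (m : ℕ) (hm : a < m) (y : I) :
    agr a (Function.update u m y) (Function.update z m y) := by
  intro s hs
  rw [Function.update_of_ne (by omega), Function.update_of_ne (by omega)]
  exact h s hs

lemma agr_update_self (a : ℕ) (z : ℕ → I) (m : ℕ) (hm : a < m) (y : I) :
    agr a (Function.update z m y) z := by
  intro s hs
  rw [Function.update_of_ne (by omega)]

lemma mem_cyl_iff {x z : ℕ → I} {n : ℕ} : x ∈ cyl n z ↔ agr n x z := Iff.rfl

lemma self_mem_cyl (n : ℕ) (z : ℕ → I) : z ∈ cyl n z := fun _ _ => rfl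

lemma cyl_subset_cyl {n m : ℕ} {z w : ℕ → I} (hmn : m ≤ n) (h : agr m z w) :
    cyl n z ⊆ cyl m w := by
  intro x hx s hs
  exact (hx s (hs.trans hmn)).trans (h s hs)

lemma cyl_subset_iff {n m : ℕ} {z w : ℕ → I} (hmn : m ≤ n) :
    cyl n z ⊆ cyl m w ↔ agr m z w := by
  constructor
  · intro h s hs
    exact h (self_mem_cyl n z) s hs
  · exact cyl_subset_cyl hmn

lemma cyl_congr {n : ℕ} {z w : ℕ → I} (h : agr n z w) : cyl n z = cyl n w :=
  Set.Subset.antisymm (cyl_subset_cyl le_rfl h) (cyl_subset_cyl le_rfl h.symm)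

lemma agr_of_cyl_eq {n : ℕ} {z w : ℕ → I} (h : cyl n z = cyl n w) : agr n z w :=
  (cyl_subset_iff le_rfl).1 h.le

lemma cyl_subset_of_mem {n m : ℕ} {z w x : ℕ → I} (hmn : m ≤ n)
    (hx : x ∈ cyl n z) (hx' : x ∈ cyl m w) : cyl n z ⊆ cyl m w := by
  refine cyl_subset_cyl hmn (fun s hs => ?_)
  have h1 : x s = z s := hx s (hs.trans hmn)
  have h2 : x s = w s := hx' s hs
  rw [← h1, h2]

lemma cyl_update {n m : ℕ} (z : ℕ → I) (hm : n < m) (y : I) :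
    cyl n (Function.update z m y) = cyl n z :=
  cyl_congr (agr_update_self n z m hm y)

/-! ### greedy allocation -/

noncomputable def allocN (v : ℕ → ℝ≥0∞) (b : ℝ≥0∞) (n : ℕ) : ℝ≥0∞ :=
  min b (∑ k ∈ Finset.range (n + 1), v k) - min b (∑ k ∈ Finset.range n, v k)

lemma allocN_le (v : ℕ → ℝ≥0∞) (b : ℝ≥0∞) (n : ℕ) : allocN v b n ≤ v n := by
  rw [allocN, tsub_le_iff_right]
  rcases le_total b (∑ k ∈ Finset.range n, v k) with h | h
  · rw [min_eq_left h]
    calc min b (∑ k ∈ Finset.range (n+1), v k) ≤ b := min_le_left _ _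
    _ ≤ v n + b := le_add_self
  · rw [min_eq_right h, Finset.sum_range_succ, add_comm (v n)]
    exact min_le_right _ _

lemma allocN_partial (v : ℕ → ℝ≥0∞) (b : ℝ≥0∞) (N : ℕ) :
    ∑ n ∈ Finset.range N, allocN v b n = min b (∑ k ∈ Finset.range N, v k) := by
  induction N with
  | zero => simp
  | succ N ih =>
    rw [Finset.sum_range_succ, ih, allocN]
    refine add_tsub_cancel_of_le ?_
    exact min_le_min le_rfl (Finset.sum_le_sum_of_subset
      (Finset.range_subset_range.2 (Nat.le_succ N)))

lemma allocN_tsum (v : ℕ → ℝ≥0∞) (b : ℝ≥0∞) :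
    ∑' n, allocN v b n = min b (∑' n, v n) := by
  rw [ENNReal.tsum_eq_iSup_nat, ENNReal.tsum_eq_iSup_nat]
  have h1 : ∀ N, ∑ n ∈ Finset.range N, allocN v b n = min b (∑ k ∈ Finset.range N, v k) :=
    allocN_partial v b
  simp only [h1]
  apply le_antisymm
  · exact iSup_le fun N => min_le_min le_rfl (le_iSup (fun N => ∑ k ∈ Finset.range N, v k) N)
  · rcases le_or_gt (⨆ N, ∑ k ∈ Finset.range N, v k) b with h | h
    · rw [min_eq_right h]
      refine iSup_le fun N => ?_
      have : (∑ k ∈ Finset.range N, v k) ≤ b :=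
        le_trans (le_iSup (fun N => ∑ k ∈ Finset.range N, v k) N) h
      rw [← min_eq_right this]
      exact le_iSup (fun N => min b (∑ k ∈ Finset.range N, v k)) N
    · rw [min_eq_left h.le]
      obtain ⟨N, hN⟩ := lt_iSup_iff.1 h
      refine le_trans ?_ (le_iSup (fun N => min b (∑ k ∈ Finset.range N, v k)) N)
      rw [min_eq_left hN.le]

variable (e : I → ℕ)

open Classical in
noncomputable def liftI (v : I → ℝ≥0∞) : ℕ → ℝ≥0∞ := fun n =>
  if h : ∃ y, e y = n then v h.choose else 0

lemma liftI_apply (he : Function.Injective e) (v : I → ℝ≥0∞) (y : I) :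
    liftI e v (e y) = v y := by
  rw [liftI, dif_pos ⟨y, rfl⟩]
  congr 1
  exact he (⟨y, rfl⟩ : ∃ y', e y' = e y).choose_spec

lemma liftI_zero_of_not_range (v : I → ℝ≥0∞) {n : ℕ} (hn : n ∉ Set.range e) :
    liftI e v n = 0 := by
  rw [liftI, dif_neg]
  rintro ⟨y, rfl⟩
  exact hn ⟨y, rfl⟩

lemma liftI_support (v : I → ℝ≥0∞) :
    Function.support (liftI e v) ⊆ Set.range e := by
  intro n hn
  by_contra hr
  exact (Function.mem_support.1 hn) (liftI_zero_of_not_range e v hr)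

lemma liftI_tsum (he : Function.Injective e) (v : I → ℝ≥0∞) :
    ∑' n, liftI e v n = ∑' y, v y := by
  rw [← Function.Injective.tsum_eq (g := e) he (f := liftI e v) (liftI_support e v)]
  simp only [liftI_apply e he]

noncomputable def allocI (v : I → ℝ≥0∞) (b : ℝ≥0∞) (y : I) : ℝ≥0∞ :=
  allocN (liftI e v) b (e y)

lemma allocI_le (he : Function.Injective e) (v : I → ℝ≥0∞) (b : ℝ≥0∞) (y : I) :
    allocI e v b y ≤ v y := by
  rw [allocI]
  exact (allocN_le _ _ _).trans (liftI_apply e he v y).le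

lemma allocI_tsum (he : Function.Injective e) (v : I → ℝ≥0∞) (b : ℝ≥0∞) :
    ∑' y, allocI e v b y = min b (∑' y, v y) := by
  have h1 : ∑' y, allocI e v b y = ∑' n, allocN (liftI e v) b n := by
    refine Function.Injective.tsum_eq he ?_
    intro n hn
    by_contra hr
    exact (Function.mem_support.1 hn) (le_antisymm ((allocN_le _ _ _).trans
        (liftI_zero_of_not_range e v hr).le) (zero_le))
  rw [h1, allocN_tsum, liftI_tsum e he]


/-! ### iterated extension sums -/

attribute [local instance] Classical.propDecidable

noncomputable def ES (g : (ℕ → I) → ℝ≥0∞) : ℕ → ℕ → (ℕ → I) → ℝ≥0∞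
  | 0, _, z => g z
  | s + 1, a, z => ∑' y : I, ES g s (a + 1) (Function.update z (a + 1) y)

lemma ES_mono {g₁ g₂ : (ℕ → I) → ℝ≥0∞} : ∀ (s a : ℕ) (z : ℕ → I),
    (∀ u, agr a u z → g₁ u ≤ g₂ u) → ES g₁ s a z ≤ ES g₂ s a z := by
  intro s
  induction s with
  | zero => intro a z h; exact h z (agr_refl a z)
  | succ s ih =>
    intro a z h
    refine ENNReal.tsum_le_tsum fun y => ih (a + 1) _ ?_
    intro u hu
    refine h u ?_
    intro t ht
    rw [hu t (by omega), Function.update_of_ne (by omega)]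

lemma ES_congr {g₁ g₂ : (ℕ → I) → ℝ≥0∞} (s a : ℕ) (z : ℕ → I)
    (h : ∀ u, agr a u z → g₁ u = g₂ u) : ES g₁ s a z = ES g₂ s a z :=
  le_antisymm (ES_mono s a z (fun u hu => (h u hu).le))
    (ES_mono s a z (fun u hu => (h u hu).ge))

lemma ES_zero (s a : ℕ) (z : ℕ → I) : ES (fun _ => 0) s a z = 0 := by
  induction s generalizing a z with
  | zero => rfl
  | succ s ih => simp only [ES, ih, tsum_zero]

lemma ES_invariant {g : (ℕ → I) → ℝ≥0∞}
    (hg : ∀ u u', agr a u u' → g u = g u') : ∀ (s : ℕ) (a' : ℕ) (z z' : ℕ → I), a ≤ a' →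
    agr a' z z' → ES g s a' z = ES g s a' z' := by
  intro s
  induction s with
  | zero => intro a' z z' ha h; exact hg z z' (h.mono ha)
  | succ s ih =>
    intro a' z z' ha h
    simp only [ES]
    refine tsum_congr fun y => ih (a' + 1) _ _ (by omega) ?_
    intro t ht
    rcases eq_or_ne t (a' + 1) with rfl | hne
    · simp
    · rw [Function.update_of_ne hne, Function.update_of_ne hne]
      exact h t (by omega)

lemma ES_tsum {ι : Type*} (G : ι → (ℕ → I) → ℝ≥0∞) : ∀ (s a : ℕ) (z : ℕ → I),
    ES (fun u => ∑' i, G i u) s a z = ∑' i, ES (G i) s a z := by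
  intro s
  induction s with
  | zero => intro a z; rfl
  | succ s ih =>
    intro a z
    simp only [ES, ih]
    exact ENNReal.tsum_comm

lemma ES_mul_left (c : ℝ≥0∞) (g : (ℕ → I) → ℝ≥0∞) : ∀ (s a : ℕ) (z : ℕ → I),
    ES (fun u => c * g u) s a z = c * ES g s a z := by
  intro s
  induction s with
  | zero => intro a z; rfl
  | succ s ih =>
    intro a z
    simp only [ES, ih]
    exact ENNReal.tsum_mul_left

lemma ES_comp (g : (ℕ → I) → ℝ≥0∞) : ∀ (s₁ s₂ a : ℕ) (z : ℕ → I),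
    ES g (s₁ + s₂) a z = ES (ES g s₂ (a + s₁)) s₁ a z := by
  intro s₁
  induction s₁ with
  | zero => intro s₂ a z; simp only [Nat.zero_add, Nat.add_zero]; rfl
  | succ s₁ ih =>
    intro s₂ a z
    have h1 : s₁ + 1 + s₂ = (s₁ + s₂) + 1 := by omega
    rw [h1]
    simp only [ES]
    refine tsum_congr fun y => ?_
    rw [ih s₂ (a + 1) _]
    have h2 : a + 1 + s₁ = a + (s₁ + 1) := by omega
    rw [h2]

/-- `splice lo hi x z` takes the values of `x` on `(lo, hi]` and of `z` elsewhere. -/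
def splice (lo hi : ℕ) (x z : ℕ → I) : ℕ → I := fun i =>
  if lo < i ∧ i ≤ hi then x i else z i

lemma agr_splice_low (lo hi : ℕ) (x z : ℕ → I) : agr lo (splice lo hi x z) z := by
  intro s hs
  simp only [splice]
  rw [if_neg (by omega)]

lemma ES_ge_single (g : (ℕ → I) → ℝ≥0∞) : ∀ (s a : ℕ) (z x : ℕ → I),
    g (splice a (a + s) x z) ≤ ES g s a z := by
  intro s
  induction s with
  | zero =>
    intro a z x
    have : splice a (a + 0) x z = z := by
      funext i; simp only [splice]; rw [if_neg (by omega)]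
    rw [this]
    exact le_rfl
  | succ s ih =>
    intro a z x
    have h1 : g (splice a (a + (s+1)) x z)
        ≤ ES g s (a + 1) (Function.update z (a + 1) (x (a + 1))) := by
      have heq : splice a (a + (s+1)) x z
          = splice (a+1) (a+1+s) x (Function.update z (a + 1) (x (a + 1))) := by
        funext i
        simp only [splice]
        rcases eq_or_ne i (a+1) with rfl | hne
        · rw [if_pos (by omega), if_neg (by omega), Function.update_self]
        · rcases (em (a < i ∧ i ≤ a + (s+1))) with h | h
          · rw [if_pos h, if_pos (by omega)]
          · rw [if_neg h, if_neg (by omega), Function.update_of_ne hne]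
      rw [heq]
      exact ih (a+1) _ x
    exact h1.trans (ENNReal.le_tsum (x (a+1)))

/-- pull an invariant condition out of an extension sum -/
lemma ES_pullout (P : (ℕ → I) → Prop) (g : (ℕ → I) → ℝ≥0∞) (s a : ℕ) (z : ℕ → I)
    (hP : ∀ u, agr a u z → (P u ↔ P z)) [∀ u, Decidable (P u)] :
    ES (fun u => if P u then g u else 0) s a z = if P z then ES g s a z else 0 := by
  rcases (em (P z)) with h | h
  · rw [if_pos h]
    refine ES_congr s a z fun u hu => ?_
    rw [if_pos ((hP u hu).2 h)]
  · rw [if_neg h]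
    rw [ES_congr s a z (g₂ := fun _ => 0) fun u hu => ?_]
    · exact ES_zero s a z
    · rw [if_neg (fun hPu => h ((hP u hu).1 hPu))]

/-- indicator over a coordinate range `(a, b]` -/
def rng (a b : ℕ) (zc u : ℕ → I) : Prop := ∀ i, a < i → i ≤ b → u i = zc i

lemma ES_rng (zc : ℕ → I) (g : (ℕ → I) → ℝ≥0∞) : ∀ (s a : ℕ) (z : ℕ → I),
    ES (fun u => if rng a (a + s) zc u then g u else 0) s a z
      = g (splice a (a + s) zc z) := by
  intro s
  induction s with
  | zero =>
    intro a z
    have h1 : rng a (a+0) zc z := by intro i h1 h2; omega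
    have h2 : splice a (a + 0) zc z = z := by
      funext i; simp only [splice]; rw [if_neg (by omega)]
    simp only [ES]
    rw [if_pos h1, h2]
  | succ s ih =>
    intro a z
    simp only [ES]
    have key : ∀ y : I, ES (fun u => if rng a (a + (s+1)) zc u then g u else 0) s (a+1)
        (Function.update z (a+1) y)
        = if y = zc (a+1) then g (splice a (a + (s+1)) zc z) else 0 := by
      intro y
      have hsplit : ∀ u, agr (a+1) u (Function.update z (a+1) y) →
          ((if rng a (a + (s+1)) zc u then g u else 0)
            = if u (a+1) = zc (a+1) then (if rng (a+1) (a+1+s) zc u then g u else 0) else 0) := by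
        intro u hu
        rcases (em (u (a+1) = zc (a+1))) with h | h
        · rw [if_pos h]
          refine if_congr ?_ rfl rfl
          constructor
          · intro hr i h1 h2; exact hr i (by omega) (by omega)
          · intro hr i h1 h2
            rcases eq_or_ne i (a+1) with rfl | hne
            · exact h
            · exact hr i (by omega) (by omega)
        · rw [if_neg h, if_neg (fun hr => h (hr (a+1) (by omega) (by omega)))]
      rw [ES_congr s (a+1) _ hsplit]
      have hPinv : ∀ u, agr (a+1) u (Function.update z (a+1) y) →
          ((u (a+1) = zc (a+1)) ↔ ((Function.update z (a+1) y) (a+1) = zc (a+1))) := by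
        intro u hu
        rw [hu (a+1) le_rfl]
      rw [ES_pullout _ _ s (a+1) _ hPinv]
      rw [Function.update_self]
      rcases eq_or_ne y (zc (a+1)) with rfl | hne
      · rw [if_pos rfl, if_pos rfl, ih (a+1) _]
        congr 1
        funext i
        simp only [splice]
        rcases eq_or_ne i (a+1) with rfl | hne2
        · rw [if_neg (by omega), if_pos (by omega), Function.update_self]
        · rcases (em (a + 1 < i ∧ i ≤ a + 1 + s)) with h | h
          · rw [if_pos h, if_pos (by omega)]
          · rw [if_neg h, if_neg (by omega), Function.update_of_ne hne2]
      · rw [if_neg hne, if_neg hne]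
    simp only [key]
    exact tsum_ite_eq (zc (a+1)) _

lemma ES_pos_witness (g : (ℕ → I) → ℝ≥0∞) : ∀ (s a : ℕ) (z : ℕ → I),
    ES g s a z ≠ 0 → ∃ u, agr a u z ∧ g u ≠ 0 := by
  intro s
  induction s with
  | zero => intro a z h; exact ⟨z, agr_refl a z, h⟩
  | succ s ih =>
    intro a z h
    have : ∃ y : I, ES g s (a+1) (Function.update z (a+1) y) ≠ 0 := by
      by_contra hc
      push_neg at hc
      exact h (by simp only [ES, hc, tsum_zero])
    obtain ⟨y, hy⟩ := this
    obtain ⟨u, hu, hgu⟩ := ih (a+1) _ hy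
    exact ⟨u, fun t ht => (hu t (by omega)).trans (Function.update_of_ne (by omega) _ _), hgu⟩

lemma ES_le_one (g : (ℕ → I) → ℝ≥0∞) : ∀ (s a : ℕ) (z : ℕ → I),
    (∀ u, agr a u z → g u ≤ 1) →
    (∀ u u', agr a u z → agr a u' z → g u ≠ 0 → g u' ≠ 0 → agr (a + s) u u') →
    ES g s a z ≤ 1 := by
  intro s
  induction s with
  | zero => intro a z h1 _; exact h1 z (agr_refl a z)
  | succ s ih =>
    intro a z h1 huniq
    have hagr : ∀ y : I, ∀ u, agr (a+1) u (Function.update z (a+1) y) → agr a u z := by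
      intro y u hu t ht
      rw [hu t (by omega), Function.update_of_ne (by omega)]
    have hterm : ∀ y : I, ES g s (a+1) (Function.update z (a+1) y) ≤ 1 := by
      intro y
      refine ih (a+1) _ (fun u hu => h1 u (hagr y u hu)) ?_
      intro u u' hu hu' hgu hgu'
      have := huniq u u' (hagr y u hu) (hagr y u' hu') hgu hgu'
      intro t ht
      exact this t (by omega)
    by_cases hex : ∃ y₀ : I, ES g s (a+1) (Function.update z (a+1) y₀) ≠ 0
    · obtain ⟨y₀, hy₀⟩ := hex
      have huniqy : ∀ y, y ≠ y₀ → ES g s (a+1) (Function.update z (a+1) y) = 0 := by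
        intro y hy
        by_contra hne
        obtain ⟨u, hu, hgu⟩ := ES_pos_witness g s (a+1) _ hne
        obtain ⟨u', hu', hgu'⟩ := ES_pos_witness g s (a+1) _ hy₀
        have h3 := huniq u u' (hagr y u hu) (hagr y₀ u' hu') hgu hgu'
        have h4 : u (a+1) = y := by rw [hu (a+1) le_rfl, Function.update_self]
        have h5 : u' (a+1) = y₀ := by rw [hu' (a+1) le_rfl, Function.update_self]
        exact hy (by rw [← h4, ← h5]; exact h3 (a+1) (by omega))
      calc ES g (s+1) a z = ES g s (a+1) (Function.update z (a+1) y₀) := by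
            exact tsum_eq_single y₀ huniqy
        _ ≤ 1 := hterm y₀
    · push_neg at hex
      simp only [ES, hex, tsum_zero]
      exact zero_le_one

lemma ES_comp' (g : (ℕ → I) → ℝ≥0∞) (s s₁ s₂ a m : ℕ) (z : ℕ → I)
    (hs : s = s₁ + s₂) (hm : a + s₁ = m) :
    ES g s a z = ES (ES g s₂ m) s₁ a z := by
  subst hs; subst hm; exact ES_comp g s₁ s₂ a z

lemma ES_rng' (zc : ℕ → I) (g : (ℕ → I) → ℝ≥0∞) (s a b : ℕ) (z : ℕ → I)
    (hb : a + s = b) :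
    ES (fun u => if rng a b zc u then g u else 0) s a z = g (splice a b zc z) := by
  subst hb; exact ES_rng zc g s a z

lemma splice_agr_low {lo hi : ℕ} {x z : ℕ → I} (s : ℕ) (hs : s ≤ lo) :
    splice lo hi x z s = z s := by
  simp only [splice]; rw [if_neg (by omega)]

lemma splice_mid {lo hi : ℕ} {x z : ℕ → I} (s : ℕ) (h1 : lo < s) (h2 : s ≤ hi) :
    splice lo hi x z s = x s := by
  simp only [splice]; rw [if_pos ⟨h1, h2⟩]

/-! ### the min-cut function and the greedy flow -/

section flow

variable [MeasurableSpace I] (μ : Measure (ℕ → I)) (t : ℕ) (𝒥 : Set (Set (ℕ → I)))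

noncomputable def vA : ℕ → (ℕ → I) → ℝ≥0∞
  | 0, z => if cyl t z ∈ 𝒥 then μ (cyl t z) else 0
  | s + 1, z => min (μ (cyl (t - (s + 1)) z))
      (∑' y : I, vA s (Function.update z (t - s) y))

lemma vA_le : ∀ (s r : ℕ) (z : ℕ → I), r + s = t → vA μ t 𝒥 s z ≤ μ (cyl r z) := by
  intro s
  induction s with
  | zero =>
    intro r z hr
    have : r = t := by omega
    subst this
    simp only [vA]
    split
    · exact le_rfl
    · exact zero_le
  | succ s _ =>
    intro r z hr
    have : t - (s + 1) = r := by omega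
    simp only [vA, this]
    exact min_le_left _ _

lemma vA_invariant : ∀ (s r : ℕ) (z z' : ℕ → I), r + s = t → agr r z z' →
    vA μ t 𝒥 s z = vA μ t 𝒥 s z' := by
  intro s
  induction s with
  | zero =>
    intro r z z' hr h
    have : r = t := by omega
    subst this
    simp only [vA]
    rw [cyl_congr h]
  | succ s ih =>
    intro r z z' hr h
    have h1 : t - (s + 1) = r := by omega
    have h2 : t - s = r + 1 := by omega
    simp only [vA, h1, h2]
    rw [cyl_congr (h.mono le_rfl)]
    congr 1
    refine tsum_congr fun y => ?_
    refine ih (r + 1) _ _ (by omega) ?_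
    intro i hi
    rcases eq_or_ne i (r + 1) with rfl | hne
    · simp
    · rw [Function.update_of_ne hne, Function.update_of_ne hne]
      exact h i (by omega)

lemma vA_ge_union [Countable I] (h𝒥 : ∀ T ∈ 𝒥, ∃ w, T = cyl t w) :
    ∀ (s r : ℕ) (z : ℕ → I), r + s = t →
    μ (⋃₀ {T | T ∈ 𝒥 ∧ T ⊆ cyl r z}) ≤ vA μ t 𝒥 s z := by
  intro s
  induction s with
  | zero =>
    intro r z hr
    have hrt : r = t := by omega
    rw [hrt]
    simp only [vA]
    by_cases hc : cyl t z ∈ 𝒥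
    · rw [if_pos hc]
      refine (measure_mono ?_)
      rintro x ⟨T, ⟨hT1, hT2⟩, hx⟩
      exact hT2 hx
    · rw [if_neg hc]
      have : {T | T ∈ 𝒥 ∧ T ⊆ cyl t z} = ∅ := by
        ext T
        simp only [Set.mem_setOf_eq, Set.mem_empty_iff_false, iff_false, not_and]
        intro hT1 hT2
        obtain ⟨w, rfl⟩ := h𝒥 T hT1
        have : cyl t w = cyl t z := by
          apply cyl_congr
          exact (cyl_subset_iff le_rfl).1 hT2
        rw [this] at hT1
        exact hc hT1
      rw [this]
      simp
  | succ s ih =>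
    intro r z hr
    have h1 : t - (s + 1) = r := by omega
    have h2 : t - s = r + 1 := by omega
    simp only [vA, h1, h2]
    refine le_min ?_ ?_
    · refine measure_mono ?_
      rintro x ⟨T, ⟨hT1, hT2⟩, hx⟩
      exact hT2 hx
    · have hcover : (⋃₀ {T | T ∈ 𝒥 ∧ T ⊆ cyl r z})
          ⊆ ⋃ y : I, ⋃₀ {T | T ∈ 𝒥 ∧ T ⊆ cyl (r + 1) (Function.update z (r + 1) y)} := by
        rintro x ⟨T, ⟨hT1, hT2⟩, hx⟩
        obtain ⟨w, rfl⟩ := h𝒥 T hT1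
        have hagr : agr r w z := (cyl_subset_iff (by omega)).1 hT2
        refine Set.mem_iUnion.2 ⟨w (r + 1), cyl t w,
          ⟨hT1, cyl_subset_cyl (show r + 1 ≤ t by omega) ?_⟩, hx⟩
        intro i hi
        rcases eq_or_ne i (r + 1) with rfl | hne
        · rw [Function.update_self]
        · rw [Function.update_of_ne hne]
          exact hagr i (by omega)
      refine (measure_mono hcover).trans ?_
      refine (measure_iUnion_le _).trans ?_
      exact ENNReal.tsum_le_tsum fun y => ih (r + 1) _ (by omega)

variable (e : I → ℕ) (b : ℕ)

noncomputable def FA : ℕ → (ℕ → I) → ℝ≥0∞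
  | 0, z => vA μ t 𝒥 (t - b) z
  | s + 1, z => allocI e (fun y => vA μ t 𝒥 (t - (b + s + 1)) (Function.update z (b + s + 1) y))
      (FA s z) (z (b + s + 1))

lemma FA_le_vA (he : Function.Injective e) :
    ∀ (s : ℕ) (z : ℕ → I), b + s ≤ t → FA μ t 𝒥 e b s z ≤ vA μ t 𝒥 (t - (b + s)) z := by
  intro s
  induction s with
  | zero => intro z _; simp only [FA]; exact le_rfl
  | succ s _ =>
    intro z hs
    simp only [FA]
    refine (allocI_le e he _ _ _).trans ?_
    rw [Function.update_eq_self]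
    exact le_rfl

lemma FA_invariant (he : Function.Injective e) (hbt : b ≤ t) :
    ∀ (s : ℕ) (z z' : ℕ → I), b + s ≤ t → agr (b + s) z z' →
    FA μ t 𝒥 e b s z = FA μ t 𝒥 e b s z' := by
  intro s
  induction s with
  | zero =>
    intro z z' _ h
    simp only [FA]
    exact vA_invariant μ t 𝒥 (t - b) b z z' (by omega) (by simpa using h)
  | succ s ih =>
    intro z z' hs h
    simp only [FA]
    have h1 : FA μ t 𝒥 e b s z = FA μ t 𝒥 e b s z' :=
      ih z z' (by omega) (h.mono (by omega))
    have h2 : z (b + s + 1) = z' (b + s + 1) := h (b + s + 1) le_rfl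
    have h3 : ∀ y : I, vA μ t 𝒥 (t - (b + s + 1)) (Function.update z (b + s + 1) y)
        = vA μ t 𝒥 (t - (b + s + 1)) (Function.update z' (b + s + 1) y) := by
      intro y
      refine vA_invariant μ t 𝒥 _ (b + s + 1) _ _ (by omega) ?_
      intro i hi
      rcases eq_or_ne i (b + s + 1) with rfl | hne
      · simp
      · rw [Function.update_of_ne hne, Function.update_of_ne hne]
        exact h i (by omega)
    simp only [h1, h2, funext h3]

lemma FA_conserve (he : Function.Injective e) (hbt : b ≤ t) (s : ℕ) (z : ℕ → I)
    (hs : b + s + 1 ≤ t) :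
    ∑' y : I, FA μ t 𝒥 e b (s + 1) (Function.update z (b + s + 1) y) = FA μ t 𝒥 e b s z := by
  have hterm : ∀ y : I, FA μ t 𝒥 e b (s + 1) (Function.update z (b + s + 1) y)
      = allocI e (fun y' => vA μ t 𝒥 (t - (b + s + 1)) (Function.update z (b + s + 1) y'))
        (FA μ t 𝒥 e b s z) y := by
    intro y
    simp only [FA]
    rw [Function.update_self]
    congr 1
    · funext y'
      rw [Function.update_idem]
    · exact FA_invariant μ t 𝒥 e b he hbt s _ z (by omega)
        (agr_update_self (b + s) z (b + s + 1) (by omega) y)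
  rw [tsum_congr hterm, allocI_tsum e he]
  refine min_eq_left ?_
  refine (FA_le_vA μ t 𝒥 e b he s z (by omega)).trans ?_
  have h1 : t - (b + s) = (t - (b + s + 1)) + 1 := by omega
  rw [h1]
  simp only [vA]
  refine (min_le_right _ _).trans ?_
  have h2 : t - (t - (b + s + 1)) = b + s + 1 := by omega
  rw [h2]

lemma FA_telescope (he : Function.Injective e) (hbt : b ≤ t) :
    ∀ (s' s : ℕ) (z : ℕ → I), b + s + s' = t →
    ES (FA μ t 𝒥 e b (t - b)) s' (b + s) z = FA μ t 𝒥 e b s z := by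
  intro s'
  induction s' with
  | zero =>
    intro s z h
    have : s = t - b := by omega
    subst this
    rfl
  | succ s' ih =>
    intro s z h
    have h1 : ES (FA μ t 𝒥 e b (t - b)) (s' + 1) (b + s) z
        = ∑' y : I, ES (FA μ t 𝒥 e b (t - b)) s' (b + s + 1) (Function.update z (b + s + 1) y) :=
      rfl
    rw [h1]
    have h2 : ∀ y : I, ES (FA μ t 𝒥 e b (t - b)) s' (b + s + 1) (Function.update z (b + s + 1) y)
        = FA μ t 𝒥 e b (s + 1) (Function.update z (b + s + 1) y) := by
      intro y
      have := ih (s + 1) (Function.update z (b + s + 1) y) (by omega)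
      rwa [← Nat.add_assoc] at this
    rw [tsum_congr h2]
    exact FA_conserve μ t 𝒥 e b he hbt s z (by omega)

end flow

/-! ### levels and masses -/

section mass

variable [MeasurableSpace I] (μ : Measure (ℕ → I)) (d dt : ℕ → ℕ)
  (J Jt : ℕ → Set (Set (ℕ → I))) (e : I → ℕ)

def levA (k : ℕ) : ℕ := if k % 2 = 0 then d (k / 2) else dt (k / 2 + 1)

lemma levA_even (j : ℕ) : levA d dt (2 * j) = d j := by
  have h1 : (2 * j) % 2 = 0 := by omega
  have h2 : (2 * j) / 2 = j := by omega
  simp [levA, h1, h2]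

lemma levA_odd (j : ℕ) : levA d dt (2 * j + 1) = dt (j + 1) := by
  have h1 : (2 * j + 1) % 2 = 1 := by omega
  have h2 : (2 * j + 1) / 2 = j := by omega
  simp [levA, h1, h2]

noncomputable def massA : ℕ → (ℕ → I) → ℝ≥0∞
  | 0, z => if cyl (d 0) z ∈ J 0 then 1 else 0
  | k + 1, z =>
    if k % 2 = 0 then
      massA k z * FA μ (dt (k / 2 + 1)) (Jt (k / 2 + 1)) e (d (k / 2)) (dt (k / 2 + 1) - d (k / 2)) z
        / vA μ (dt (k / 2 + 1)) (Jt (k / 2 + 1)) (dt (k / 2 + 1) - d (k / 2)) z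
    else if cyl (d ((k + 1) / 2)) z ∈ J ((k + 1) / 2) then massA k z else 0

lemma massA_odd (j : ℕ) (z : ℕ → I) :
    massA μ d dt J Jt e (2 * j + 1) z
      = massA μ d dt J Jt e (2 * j) z
          * FA μ (dt (j + 1)) (Jt (j + 1)) e (d j) (dt (j + 1) - d j) z
          / vA μ (dt (j + 1)) (Jt (j + 1)) (dt (j + 1) - d j) z := by
  have h1 : (2 * j) % 2 = 0 := by omega
  have h2 : (2 * j) / 2 = j := by omega
  simp only [massA, h1, h2, if_pos]

lemma massA_even (j : ℕ) (z : ℕ → I) :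
    massA μ d dt J Jt e (2 * j + 2) z
      = if cyl (d (j + 1)) z ∈ J (j + 1) then massA μ d dt J Jt e (2 * j + 1) z else 0 := by
  have h1 : (2 * j + 1) % 2 = 1 := by omega
  have h2 : (2 * j + 1 + 1) / 2 = j + 1 := by omega
  have h3 : (2 * j + 2) = (2 * j + 1) + 1 := by omega
  rw [h3]
  simp only [massA, h1, h2]
  norm_num

end mass

end S19

open S19

set_option maxHeartbeats 2000000 in
/-- Hungerford-type lower bound for the `μ̂`-dimension of a pattern set built from
nested families of cylinders, for a σ-invariant Gibbs measure `μ̂`: under the mass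
ratio bounds `e^{-α_j} ≤ μ̂(J̃_j)/μ̂(J_{j-1}) ≤ e^{-β_j}`, `e^{-γ_j} ≤ μ̂(J_j)/μ̂(J̃_j)`,
the abundance bounds `∑ μ̂(J̃_j) ≥ δ_j μ̂(J_{j-1})`, and the growth condition
`liminf (∑α + ∑γ)/j^η > 0` for some `η > 1`, one has
`Dim_μ̂(Z) ≥ liminf [(β₁+…+β_j) − log(1/(δ₁⋯δ_{j+1}))]/[(α₁+…+α_j)+(γ₁+…+γ_j)]`. -/
theorem stmt19 {I : Type*} [Countable I] [MeasurableSpace I]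
    (μ : Measure (ℕ → I)) [IsProbabilityMeasure μ]
    (hinv : MeasurePreserving (lshift (I := I)) μ μ)
    (φ : (ℕ → I) → ℝ) (Pc Kc cc : ℝ) (hKc : 1 ≤ Kc) (hcc : 1 ≤ cc)
    (hGibbs : ∀ n : ℕ, 0 < n → ∀ z : ℕ → I,
      Real.exp (-(n : ℝ) * Pc + ∑ j ∈ Finset.range n, φ (lshift^[j] z)) /
          (cc * Kc) ≤ (μ (cyl (n - 1) z)).toReal ∧
      (μ (cyl (n - 1) z)).toReal ≤
        cc * Kc *
          Real.exp (-(n : ℝ) * Pc + ∑ j ∈ Finset.range n, φ (lshift^[j] z)))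
    (dt d : ℕ → ℕ) (Jt J : ℕ → Set (Set (ℕ → I)))
    (hJ0 : ∃ S₀ : Set (ℕ → I), J 0 = {S₀} ∧ Jt 0 = {S₀})
    (hcylJt : ∀ j, ∀ S ∈ Jt j, ∃ z, S = cyl (dt j) z)
    (hcylJ : ∀ j, ∀ S ∈ J j, ∃ z, S = cyl (d j) z)
    (hdepth : ∀ j : ℕ, d j < dt (j + 1) ∧ dt (j + 1) ≤ d (j + 1))
    (hnest1 : ∀ j, ∀ S ∈ J (j + 1), ∃ St ∈ Jt (j + 1), S ⊆ St)
    (hnest2 : ∀ j, ∀ St ∈ Jt (j + 1), ∃ Sp ∈ J j, St ⊆ Sp)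
    (huniq : ∀ j, ∀ St ∈ Jt (j + 1), ∃! S, S ∈ J (j + 1) ∧ S ⊆ St)
    (αs βs γs δs : ℕ → ℝ)
    (hpos : ∀ j, 0 < βs j ∧ βs j ≤ αs j ∧ 0 ≤ γs j ∧ 0 < δs j ∧ δs j ≤ 1)
    (hαβ : ∀ j, ∀ St ∈ Jt (j + 1), ∀ Sp ∈ J j, St ⊆ Sp →
      ENNReal.ofReal (Real.exp (-(αs (j + 1)))) * μ Sp ≤ μ St ∧
      μ St ≤ ENNReal.ofReal (Real.exp (-(βs (j + 1)))) * μ Sp)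
    (hγ : ∀ j, ∀ S ∈ J (j + 1), ∀ St ∈ Jt (j + 1), S ⊆ St →
      ENNReal.ofReal (Real.exp (-(γs (j + 1)))) * μ St ≤ μ S)
    (hδ : ∀ j, ∀ Sp ∈ J j,
      ENNReal.ofReal (δs (j + 1)) * μ Sp ≤ μ (⋃₀ {St | St ∈ Jt (j + 1) ∧ St ⊆ Sp}))
    (hgrowth : ∃ η : ℝ, 1 < η ∧
      0 < Filter.liminf (fun j : ℕ =>
        (∑ i ∈ Finset.Icc 1 j, (αs i + γs i)) / (j : ℝ) ^ η) Filter.atTop) :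
    ENNReal.ofReal (Filter.liminf (fun j : ℕ =>
        ((∑ i ∈ Finset.Icc 1 j, βs i) -
          Real.log (1 / ∏ i ∈ Finset.Icc 1 (j + 1), δs i)) /
        ((∑ i ∈ Finset.Icc 1 j, αs i) + ∑ i ∈ Finset.Icc 1 j, γs i))
      Filter.atTop) ≤
    cylDim μ (⋂ j, ⋃₀ (J j)) := by
  classical
  obtain ⟨S₀, hJ01, hJt01⟩ := hJ0
  have hS₀J : S₀ ∈ J 0 := by rw [hJ01]; rfl
  obtain ⟨z₀, hz₀⟩ := hcylJ 0 S₀ hS₀J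
  obtain ⟨e, he⟩ : ∃ e : I → ℕ, Function.Injective e := by
    have : Nonempty ((ℕ → I)) := by
      by_contra hne
      rw [not_nonempty_iff] at hne
      have : μ Set.univ = 0 := by
        have : (Set.univ : Set (ℕ → I)) = ∅ := by
          ext x; exact (hne.false x).elim
        rw [this]; exact measure_empty
      rw [measure_univ] at this
      exact one_ne_zero this
    have : Nonempty I := ⟨this.some 0⟩
    exact exists_injective_nat I
  -- depth facts
  have hd_lt : ∀ j, d j < dt (j + 1) := fun j => (hdepth j).1
  have hdtd : ∀ j, dt (j + 1) ≤ d (j + 1) := fun j => (hdepth j).2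
  have hdmono : StrictMono d :=
    strictMono_nat_of_lt_succ fun j => lt_of_lt_of_le (hd_lt j) (hdtd j)
  have hd_self : ∀ n, n ≤ d n := fun n => hdmono.le_apply
  have hlev_mono : Monotone (levA d dt) := by
    refine monotone_nat_of_le_succ fun k => ?_
    rcases Nat.even_or_odd k with ⟨j, hj⟩ | ⟨j, hj⟩
    · have hk : k = 2 * j := by omega
      subst hk
      rw [levA_even d dt j, levA_odd d dt j]
      exact (hd_lt j).le
    · have hk : k = 2 * j + 1 := by omega
      subst hk
      rw [levA_odd d dt j, show 2 * j + 1 + 1 = 2 * (j + 1) by omega, levA_even d dt (j + 1)]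
      exact hdtd j
  have hlev_le : ∀ k k', k ≤ k' → levA d dt k ≤ levA d dt k' := fun k k' h => hlev_mono h
  have hexists : ∀ n : ℕ, ∃ k, n ≤ levA d dt k := by
    intro n
    refine ⟨2 * n, ?_⟩
    rw [levA_even d dt n]
    exact hd_self n
  have hlev0 : levA d dt 0 = d 0 := by simpa using levA_even d dt 0
  -- positivity of the root measure
  set ρ := μ S₀ with hρdef
  have hρtop : ρ ≠ ⊤ := (lt_of_le_of_lt prob_le_one (by norm_num)).ne
  have hρ1 : ρ ≤ 1 := prob_le_one
  have hρ0 : ρ ≠ 0 := by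
    intro h0
    have hg := (hGibbs (d 0 + 1) (by omega) z₀).1
    rw [show d 0 + 1 - 1 = d 0 from rfl, ← hz₀, ← hρdef, h0] at hg
    simp only [ENNReal.toReal_zero] at hg
    have h2 : (0:ℝ) < cc * Kc := by nlinarith
    have h3 := Real.exp_pos (-(↑(d 0 + 1) : ℝ) * Pc
      + ∑ j ∈ Finset.range (d 0 + 1), φ (lshift^[j] z₀))
    have h4 := div_pos h3 h2
    linarith
  have hρpos : 0 < ρ := pos_iff_ne_zero.2 hρ0
  -- node parent facts
  have hSt_of : ∀ j w, cyl (d (j + 1)) w ∈ J (j + 1) → cyl (dt (j + 1)) w ∈ Jt (j + 1) := by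
    intro j w hw
    obtain ⟨St, hSt, hsub⟩ := hnest1 j _ hw
    obtain ⟨zSt, rfl⟩ := hcylJt (j + 1) St hSt
    have hagr : agr (dt (j + 1)) w zSt := (cyl_subset_iff (hdtd j)).1 hsub
    rwa [cyl_congr hagr]
  have hSp_of : ∀ j w, cyl (dt (j + 1)) w ∈ Jt (j + 1) → cyl (d j) w ∈ J j := by
    intro j w hw
    obtain ⟨Sp, hSp, hsub⟩ := hnest2 j _ hw
    obtain ⟨zSp, rfl⟩ := hcylJ j Sp hSp
    have hagr : agr (d j) w zSp := (cyl_subset_iff (hd_lt j).le).1 hsub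
    rwa [cyl_congr hagr]
  -- real sequences
  set Br : ℕ → ℝ := fun j => ∑ i ∈ Finset.Icc 1 j, βs i with hBrdef
  set Ar : ℕ → ℝ := fun j => (∑ i ∈ Finset.Icc 1 j, αs i) + ∑ i ∈ Finset.Icc 1 j, γs i
    with hArdef
  set Dr : ℕ → ℝ := fun j => Real.log (1 / ∏ i ∈ Finset.Icc 1 j, δs i) with hDrdef
  have hprodpos : ∀ j, 0 < ∏ i ∈ Finset.Icc 1 j, δs i :=
    fun j => Finset.prod_pos fun i _ => (hpos i).2.2.2.1
  have hprodle1 : ∀ j, ∏ i ∈ Finset.Icc 1 j, δs i ≤ 1 :=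
    fun j => Finset.prod_le_one (fun i _ => ((hpos i).2.2.2.1).le) (fun i _ => (hpos i).2.2.2.2)
  have hDr_eq : ∀ j, Dr j = -Real.log (∏ i ∈ Finset.Icc 1 j, δs i) := by
    intro j
    simp only [hDrdef, one_div, Real.log_inv]
  have hDr_succ : ∀ j, Dr (j + 1) = Dr j - Real.log (δs (j + 1)) := by
    intro j
    rw [hDr_eq, hDr_eq, Finset.prod_Icc_succ_top (by omega),
      Real.log_mul (hprodpos j).ne' ((hpos (j + 1)).2.2.2.1).ne']
    ring
  have hDr0 : Dr 0 = 0 := by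
    rw [hDr_eq]
    simp [Finset.Icc_eq_empty (show ¬(1 ≤ 0) by omega)]
  have hDr_nonneg : ∀ j, 0 ≤ Dr j := by
    intro j
    rw [hDr_eq]
    simp only [Left.nonneg_neg_iff]
    exact Real.log_nonpos (hprodpos j).le (hprodle1 j)
  have hDr_mono : ∀ j, Dr j ≤ Dr (j + 1) := by
    intro j
    rw [hDr_succ j]
    have := Real.log_nonpos ((hpos (j + 1)).2.2.2.1).le (hpos (j + 1)).2.2.2.2
    linarith
  have hBr_succ : ∀ j, Br (j + 1) = Br j + βs (j + 1) := by
    intro j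
    simp only [hBrdef]
    exact Finset.sum_Icc_succ_top (by omega) _
  have hBr0 : Br 0 = 0 := by
    simp only [hBrdef]
    simp [Finset.Icc_eq_empty (show ¬(1 ≤ 0) by omega)]
  have hBr_nonneg : ∀ j, 0 ≤ Br j := by
    intro j
    simp only [hBrdef]
    exact Finset.sum_nonneg fun i _ => ((hpos i).1).le
  have hAr_succ : ∀ j, Ar (j + 1) = Ar j + (αs (j + 1) + γs (j + 1)) := by
    intro j
    simp only [hArdef]
    rw [Finset.sum_Icc_succ_top (by omega : 1 ≤ j + 1) αs,
      Finset.sum_Icc_succ_top (by omega : 1 ≤ j + 1) γs]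
    ring
  have hAr0 : Ar 0 = 0 := by
    simp only [hArdef]
    simp [Finset.Icc_eq_empty (show ¬(1 ≤ 0) by omega)]
  have hAr_nonneg : ∀ j, 0 ≤ Ar j := by
    intro j
    simp only [hArdef]
    have h1 : 0 ≤ ∑ i ∈ Finset.Icc 1 j, αs i :=
      Finset.sum_nonneg fun i _ => le_trans ((hpos i).1).le (hpos i).2.1
    have h2 : 0 ≤ ∑ i ∈ Finset.Icc 1 j, γs i :=
      Finset.sum_nonneg fun i _ => (hpos i).2.2.1
    positivity
  have hBrAr : ∀ j, Br j ≤ Ar j := by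
    intro j
    simp only [hBrdef, hArdef]
    have h1 : ∑ i ∈ Finset.Icc 1 j, βs i ≤ ∑ i ∈ Finset.Icc 1 j, αs i :=
      Finset.sum_le_sum fun i _ => (hpos i).2.1
    have h2 : 0 ≤ ∑ i ∈ Finset.Icc 1 j, γs i :=
      Finset.sum_nonneg fun i _ => (hpos i).2.2.1
    linarith
  have hArpos : ∀ j, 1 ≤ j → 0 < Ar j := by
    intro j hj
    simp only [hArdef]
    have h1 : 0 < ∑ i ∈ Finset.Icc 1 j, αs i := by
      refine Finset.sum_pos (fun i _ => lt_of_lt_of_le (hpos i).1 (hpos i).2.1) ?_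
      exact ⟨1, Finset.mem_Icc.2 ⟨le_rfl, hj⟩⟩
    have h2 : 0 ≤ ∑ i ∈ Finset.Icc 1 j, γs i :=
      Finset.sum_nonneg fun i _ => (hpos i).2.2.1
    positivity
  have hexpmul : ∀ x y : ℝ, ENNReal.ofReal (Real.exp x) * ENNReal.ofReal (Real.exp y)
      = ENNReal.ofReal (Real.exp (x + y)) := by
    intro x y
    rw [← ENNReal.ofReal_mul (Real.exp_pos x).le, ← Real.exp_add]
  -- measure chains along nodes
  have chainUp : ∀ j w, cyl (d j) w ∈ J j →
      μ (cyl (d j) w) ≤ ENNReal.ofReal (Real.exp (-Br j)) := by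
    intro j
    induction j with
    | zero =>
      intro w _
      rw [hBr0]
      simp only [neg_zero, Real.exp_zero, ENNReal.ofReal_one]
      exact prob_le_one
    | succ j ih =>
      intro w hw
      have hSt := hSt_of j w hw
      have hSp := hSp_of j w hSt
      have hsub : cyl (dt (j + 1)) w ⊆ cyl (d j) w :=
        cyl_subset_cyl (hd_lt j).le (agr_refl _ _)
      have h1 := (hαβ j _ hSt _ hSp hsub).2
      calc μ (cyl (d (j + 1)) w) ≤ μ (cyl (dt (j + 1)) w) :=
            measure_mono (cyl_subset_cyl (hdtd j) (agr_refl _ _))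
        _ ≤ ENNReal.ofReal (Real.exp (-βs (j + 1))) * μ (cyl (d j) w) := h1
        _ ≤ ENNReal.ofReal (Real.exp (-βs (j + 1))) * ENNReal.ofReal (Real.exp (-Br j)) := by
            exact mul_le_mul_right (ih w hSp) _
        _ = ENNReal.ofReal (Real.exp (-Br (j + 1))) := by
            rw [hexpmul]
            congr 1
            rw [hBr_succ]
            ring
  have chainLo : ∀ j w, cyl (d j) w ∈ J j →
      ENNReal.ofReal (Real.exp (-Ar j)) * ρ ≤ μ (cyl (d j) w) := by
    intro j
    induction j with
    | zero =>
      intro w hw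
      rw [hAr0]
      simp only [neg_zero, Real.exp_zero, ENNReal.ofReal_one, one_mul]
      have : cyl (d 0) w = S₀ := by
        rw [hJ01] at hw
        exact hw
      rw [hρdef, this]
    | succ j ih =>
      intro w hw
      have hSt := hSt_of j w hw
      have hSp := hSp_of j w hSt
      have hsub : cyl (dt (j + 1)) w ⊆ cyl (d j) w :=
        cyl_subset_cyl (hd_lt j).le (agr_refl _ _)
      have hsub2 : cyl (d (j + 1)) w ⊆ cyl (dt (j + 1)) w :=
        cyl_subset_cyl (hdtd j) (agr_refl _ _)
      have h1 := hγ j _ hw _ hSt hsub2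
      have h2 := (hαβ j _ hSt _ hSp hsub).1
      calc ENNReal.ofReal (Real.exp (-Ar (j + 1))) * ρ
          = ENNReal.ofReal (Real.exp (-γs (j + 1)))
            * (ENNReal.ofReal (Real.exp (-αs (j + 1)))
            * (ENNReal.ofReal (Real.exp (-Ar j)) * ρ)) := by
            rw [← mul_assoc, ← mul_assoc, hexpmul, hexpmul]
            have h5 : -γs (j + 1) + -αs (j + 1) + -Ar j = -Ar (j + 1) := by
              rw [hAr_succ]; ring
            rw [h5]
        _ ≤ ENNReal.ofReal (Real.exp (-γs (j + 1)))
            * (ENNReal.ofReal (Real.exp (-αs (j + 1))) * μ (cyl (d j) w)) := by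
            exact mul_le_mul_right (mul_le_mul_right (ih w hSp) _) _
        _ ≤ ENNReal.ofReal (Real.exp (-γs (j + 1))) * μ (cyl (dt (j + 1)) w) :=
            mul_le_mul_right h2 _
        _ ≤ μ (cyl (d (j + 1)) w) := h1
    -- invariance of mass in the cylinder
  have hminv : ∀ k (z z' : ℕ → I), agr (levA d dt k) z z' →
      massA μ d dt J Jt e k z = massA μ d dt J Jt e k z' := by
    intro k
    induction k with
    | zero =>
      intro z z' h
      rw [hlev0] at h
      simp only [massA]
      rw [cyl_congr h]
    | succ k ih =>
      intro z z' h
      rcases Nat.even_or_odd k with ⟨j, hj⟩ | ⟨j, hj⟩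
      · have hk : k = 2 * j := by omega
        subst hk
        rw [levA_odd d dt j] at h
        rw [massA_odd μ d dt J Jt e j z, massA_odd μ d dt J Jt e j z']
        have h1 : massA μ d dt J Jt e (2 * j) z = massA μ d dt J Jt e (2 * j) z' :=
          ih z z' (by rw [levA_even d dt j]; exact h.mono (hd_lt j).le)
        have h2 : FA μ (dt (j + 1)) (Jt (j + 1)) e (d j) (dt (j + 1) - d j) z
            = FA μ (dt (j + 1)) (Jt (j + 1)) e (d j) (dt (j + 1) - d j) z' := by
          refine FA_invariant μ (dt (j + 1)) (Jt (j + 1)) e (d j) he (hd_lt j).le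
            (dt (j + 1) - d j) z z' (by have h9 := hd_lt j; omega) ?_
          have harith : d j + (dt (j + 1) - d j) = dt (j + 1) := by
            have h9 := hd_lt j; omega
          rw [harith]
          exact h
        have h3 : vA μ (dt (j + 1)) (Jt (j + 1)) (dt (j + 1) - d j) z
            = vA μ (dt (j + 1)) (Jt (j + 1)) (dt (j + 1) - d j) z' :=
          vA_invariant μ (dt (j + 1)) (Jt (j + 1)) (dt (j + 1) - d j) (d j) z z'
            (by have h9 := hd_lt j; omega) (h.mono (hd_lt j).le)
        rw [h1, h2, h3]
      · have hk : k = 2 * j + 1 := by omega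
        subst hk
        have hlev2 : levA d dt (2 * j + 1 + 1) = d (j + 1) := by
          rw [show 2 * j + 1 + 1 = 2 * (j + 1) by omega, levA_even]
        rw [hlev2] at h
        rw [show (2 * j + 1 + 1) = 2 * j + 2 from rfl,
          massA_even μ d dt J Jt e j z, massA_even μ d dt J Jt e j z']
        rw [cyl_congr h]
        have h1 : massA μ d dt J Jt e (2 * j + 1) z = massA μ d dt J Jt e (2 * j + 1) z' :=
          ih z z' (by rw [levA_odd d dt j]; exact h.mono (hdtd j))
        rw [h1]
  -- support lemmas
  have hsupJ : ∀ j z, massA μ d dt J Jt e (2 * j) z ≠ 0 → cyl (d j) z ∈ J j := by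
    intro j z h
    match j with
    | 0 =>
      by_contra hc
      exact h (by simp only [massA]; rw [if_neg hc])
    | j + 1 =>
      rw [show 2 * (j + 1) = 2 * j + 2 by omega, massA_even] at h
      by_contra hc
      rw [if_neg hc] at h
      exact h rfl
  have hsupJt : ∀ j z, massA μ d dt J Jt e (2 * j + 1) z ≠ 0 →
      cyl (dt (j + 1)) z ∈ Jt (j + 1) ∧ cyl (d j) z ∈ J j := by
    intro j z h
    rw [massA_odd] at h
    have h1 : massA μ d dt J Jt e (2 * j) z ≠ 0 := by
      intro h0; rw [h0] at h; simp at h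
    have h2 : FA μ (dt (j + 1)) (Jt (j + 1)) e (d j) (dt (j + 1) - d j) z ≠ 0 := by
      intro h0; rw [h0] at h; simp at h
    refine ⟨?_, hsupJ j z h1⟩
    by_contra hc
    apply h2
    have h3 := FA_le_vA μ (dt (j + 1)) (Jt (j + 1)) e (d j) he (dt (j + 1) - d j) z (by have h9 := hd_lt j; omega)
    have h4 : dt (j + 1) - (d j + (dt (j + 1) - d j)) = 0 := by omega
    rw [h4] at h3
    have h5 : vA μ (dt (j + 1)) (Jt (j + 1)) 0 z = 0 := by
      simp only [vA]; rw [if_neg hc]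
    exact le_antisymm (h3.trans h5.le) (zero_le)
  -- bounds on the cut function
  have hVle : ∀ j z, vA μ (dt (j + 1)) (Jt (j + 1)) (dt (j + 1) - d j) z ≤ μ (cyl (d j) z) :=
    fun j z => vA_le μ _ _ _ (d j) z (by have h9 := hd_lt j; omega)
  have hVge : ∀ j z, cyl (d j) z ∈ J j →
      ENNReal.ofReal (δs (j + 1)) * μ (cyl (d j) z)
        ≤ vA μ (dt (j + 1)) (Jt (j + 1)) (dt (j + 1) - d j) z := by
    intro j z hz
    refine le_trans (hδ j _ hz) ?_
    exact vA_ge_union μ (dt (j + 1)) (Jt (j + 1)) (hcylJt (j + 1)) (dt (j + 1) - d j) (d j) z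
      (by have h9 := hd_lt j; omega)
  have hJpos : ∀ j z, cyl (d j) z ∈ J j → μ (cyl (d j) z) ≠ 0 := by
    intro j z hz h0
    have hlo := chainLo j z hz
    rw [h0] at hlo
    have h1 : 0 < ENNReal.ofReal (Real.exp (-Ar j)) * ρ :=
      ENNReal.mul_pos (by simp [ENNReal.ofReal_pos, Real.exp_pos]) hρ0
    exact h1.ne' (le_antisymm hlo (zero_le))
  -- upper bounds for the mass
  have hoddstep : ∀ j,
      (∀ z, massA μ d dt J Jt e (2 * j) z ≤ ENNReal.ofReal (Real.exp (-Br j + Dr j))) →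
      (∀ z, massA μ d dt J Jt e (2 * j + 1) z
        ≤ ENNReal.ofReal (Real.exp (-Br (j + 1) + Dr (j + 1)))) := by
    intro j hev z
    rw [massA_odd]
    by_cases hm : massA μ d dt J Jt e (2 * j) z = 0
    · simp [hm]
    by_cases hSt : cyl (dt (j + 1)) z ∈ Jt (j + 1)
    swap
    · have h3 := FA_le_vA μ (dt (j + 1)) (Jt (j + 1)) e (d j) he (dt (j + 1) - d j) z (by have h9 := hd_lt j; omega)
      have h4 : dt (j + 1) - (d j + (dt (j + 1) - d j)) = 0 := by omega
      rw [h4] at h3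
      have h5 : vA μ (dt (j + 1)) (Jt (j + 1)) 0 z = 0 := by
        simp only [vA]; rw [if_neg hSt]
      have hF0 : FA μ (dt (j + 1)) (Jt (j + 1)) e (d j) (dt (j + 1) - d j) z = 0 :=
        le_antisymm (h3.trans h5.le) (zero_le)
      simp [hF0]
    have hSp : cyl (d j) z ∈ J j := hsupJ j z hm
    have hq0 : μ (cyl (d j) z) ≠ 0 := hJpos j z hSp
    have hqtop : μ (cyl (d j) z) ≠ ⊤ := (measure_lt_top μ _).ne
    have hF : FA μ (dt (j + 1)) (Jt (j + 1)) e (d j) (dt (j + 1) - d j) z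
        ≤ ENNReal.ofReal (Real.exp (-βs (j + 1))) * μ (cyl (d j) z) := by
      have h3 := FA_le_vA μ (dt (j + 1)) (Jt (j + 1)) e (d j) he (dt (j + 1) - d j) z (by have h9 := hd_lt j; omega)
      have h4 : dt (j + 1) - (d j + (dt (j + 1) - d j)) = 0 := by omega
      rw [h4] at h3
      have h5 : vA μ (dt (j + 1)) (Jt (j + 1)) 0 z = μ (cyl (dt (j + 1)) z) := by
        simp only [vA]; rw [if_pos hSt]
      rw [h5] at h3
      exact h3.trans (hαβ j _ hSt _ hSp (cyl_subset_cyl (hd_lt j).le (agr_refl _ _))).2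
    have hV := hVge j z hSp
    calc massA μ d dt J Jt e (2 * j) z
          * FA μ (dt (j + 1)) (Jt (j + 1)) e (d j) (dt (j + 1) - d j) z
          / vA μ (dt (j + 1)) (Jt (j + 1)) (dt (j + 1) - d j) z
        ≤ ENNReal.ofReal (Real.exp (-Br j + Dr j))
            * (ENNReal.ofReal (Real.exp (-βs (j + 1))) * μ (cyl (d j) z))
          / (ENNReal.ofReal (δs (j + 1)) * μ (cyl (d j) z)) :=
        ENNReal.div_le_div (mul_le_mul' (hev z) hF) hV
      _ = ENNReal.ofReal (Real.exp (-Br j + Dr j)) * ENNReal.ofReal (Real.exp (-βs (j + 1)))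
          / ENNReal.ofReal (δs (j + 1)) := by
        rw [← mul_assoc, ENNReal.mul_div_mul_right _ _ hq0 hqtop]
      _ = ENNReal.ofReal (Real.exp (-Br (j + 1) + Dr (j + 1))) := by
        rw [hexpmul, ← ENNReal.ofReal_div_of_pos (hpos (j + 1)).2.2.2.1]
        congr 1
        rw [div_eq_iff (hpos (j + 1)).2.2.2.1.ne', ← Real.exp_log (hpos (j + 1)).2.2.2.1,
          ← Real.exp_add]
        congr 1
        rw [hBr_succ, hDr_succ]
        ring
  have hmassUB : ∀ j,
      (∀ z, massA μ d dt J Jt e (2 * j) z ≤ ENNReal.ofReal (Real.exp (-Br j + Dr j)))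
      ∧ (∀ z, massA μ d dt J Jt e (2 * j + 1) z
          ≤ ENNReal.ofReal (Real.exp (-Br (j + 1) + Dr (j + 1)))) := by
    intro j
    induction j with
    | zero =>
      have hev : ∀ z, massA μ d dt J Jt e (2 * 0) z
          ≤ ENNReal.ofReal (Real.exp (-Br 0 + Dr 0)) := by
        intro z
        rw [hBr0, hDr0]
        norm_num
        show massA μ d dt J Jt e 0 z ≤ 1
        simp only [massA]
        split
        · exact le_rfl
        · exact zero_le_one
      exact ⟨hev, hoddstep 0 hev⟩
    | succ j ih =>
      have hev : ∀ z, massA μ d dt J Jt e (2 * (j + 1)) z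
          ≤ ENNReal.ofReal (Real.exp (-Br (j + 1) + Dr (j + 1))) := by
        intro z
        rw [show 2 * (j + 1) = 2 * j + 2 by omega, massA_even]
        split
        · exact ih.2 z
        · exact zero_le
      exact ⟨hev, hoddstep (j + 1) hev⟩
  -- superadditivity of the mass along levels
  have hsuper : ∀ k z, massA μ d dt J Jt e k z
      ≤ ES (massA μ d dt J Jt e (k + 1)) (levA d dt (k + 1) - levA d dt k) (levA d dt k) z := by
    intro k z
    rcases Nat.even_or_odd k with ⟨j, hj⟩ | ⟨j, hj⟩
    · have hk : k = 2 * j := by omega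
      subst hk
      rw [levA_odd d dt j, levA_even d dt j]
      by_cases hm : massA μ d dt J Jt e (2 * j) z = 0
      · rw [hm]; exact zero_le
      have hSp := hsupJ j z hm
      have hV0 : vA μ (dt (j + 1)) (Jt (j + 1)) (dt (j + 1) - d j) z ≠ 0 := by
        refine fun h0 => (ENNReal.mul_pos (a := ENNReal.ofReal (δs (j + 1)))
          (by simp [ENNReal.ofReal_pos, (hpos (j + 1)).2.2.2.1]) (hJpos j z hSp)).ne' ?_
        exact le_antisymm (h0 ▸ hVge j z hSp) (zero_le)
      have hVtop : vA μ (dt (j + 1)) (Jt (j + 1)) (dt (j + 1) - d j) z ≠ ⊤ :=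
        ((hVle j z).trans_lt (measure_lt_top μ _)).ne
      have hES : ES (massA μ d dt J Jt e (2 * j + 1)) (dt (j + 1) - d j) (d j) z
          = massA μ d dt J Jt e (2 * j) z / vA μ (dt (j + 1)) (Jt (j + 1)) (dt (j + 1) - d j) z
            * ES (FA μ (dt (j + 1)) (Jt (j + 1)) e (d j) (dt (j + 1) - d j))
              (dt (j + 1) - d j) (d j) z := by
        rw [← ES_mul_left]
        refine ES_congr _ _ _ fun u hu => ?_
        rw [massA_odd]
        have h1 : massA μ d dt J Jt e (2 * j) u = massA μ d dt J Jt e (2 * j) z :=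
          hminv (2 * j) u z (by rw [levA_even d dt j]; exact hu)
        have h2 : vA μ (dt (j + 1)) (Jt (j + 1)) (dt (j + 1) - d j) u
            = vA μ (dt (j + 1)) (Jt (j + 1)) (dt (j + 1) - d j) z :=
          vA_invariant μ (dt (j + 1)) (Jt (j + 1)) (dt (j + 1) - d j) (d j) u z (by have h9 := hd_lt j; omega) hu
        rw [h1, h2, div_eq_mul_inv, div_eq_mul_inv]
        ring
      have htel : ES (FA μ (dt (j + 1)) (Jt (j + 1)) e (d j) (dt (j + 1) - d j))
          (dt (j + 1) - d j) (d j) z = FA μ (dt (j + 1)) (Jt (j + 1)) e (d j) 0 z := by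
        have h10 := FA_telescope μ (dt (j + 1)) (Jt (j + 1)) e (d j) he (hd_lt j).le
          (dt (j + 1) - d j) 0 z (by have h9 := hd_lt j; omega)
        simpa using h10
      rw [hES, htel]
      have hFA0 : FA μ (dt (j + 1)) (Jt (j + 1)) e (d j) 0 z
          = vA μ (dt (j + 1)) (Jt (j + 1)) (dt (j + 1) - d j) z := rfl
      rw [hFA0, ENNReal.div_mul_cancel hV0 hVtop]
    · have hk : k = 2 * j + 1 := by omega
      subst hk
      have hlev2 : levA d dt (2 * j + 1 + 1) = d (j + 1) := by
        rw [show 2 * j + 1 + 1 = 2 * (j + 1) by omega, levA_even]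
      rw [hlev2, levA_odd d dt j]
      by_cases hm : massA μ d dt J Jt e (2 * j + 1) z = 0
      · rw [hm]; exact zero_le
      obtain ⟨hSt, hSpJ⟩ := hsupJt j z hm
      obtain ⟨U, ⟨hUJ, hUsub⟩, huni2⟩ := huniq j _ hSt
      obtain ⟨zU, rfl⟩ := hcylJ (j + 1) U hUJ
      have hagrU : agr (dt (j + 1)) zU z := (cyl_subset_iff (hdtd j)).1 hUsub
      refine le_trans ?_ (ES_ge_single _ _ _ z zU)
      set w := splice (dt (j + 1)) (dt (j + 1) + (d (j + 1) - dt (j + 1))) zU z with hwdef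
      have hwagr_zU : agr (d (j + 1)) w zU := by
        intro s hs
        simp only [hwdef, splice]
        split
        · rfl
        · next hcond =>
          have hs' : s ≤ dt (j + 1) := by omega
          exact (hagrU s hs').symm
      have hwagr_z : agr (dt (j + 1)) w z := agr_splice_low _ _ _ _
      rw [show (2 * j + 1 + 1) = 2 * j + 2 from rfl, massA_even]
      rw [cyl_congr hwagr_zU, if_pos hUJ]
      rw [hminv (2 * j + 1) w z (by rw [levA_odd d dt j]; exact hwagr_z)]
    -- the root mass
  have hmass0 : massA μ d dt J Jt e 0 z₀ = 1 := by
    simp only [massA]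
    rw [← hz₀, if_pos hS₀J]
  -- unfold the goal
  rw [cylDim]
  refine le_sInf ?_
  rintro b ⟨a, ⟨ha0, haM⟩, rfl⟩
  set f : ℕ → ℝ := fun j => (Br j - Dr (j + 1)) / Ar j with hfdef
  by_cases hal : Filter.liminf f Filter.atTop ≤ a
  · exact ENNReal.ofReal_le_ofReal hal
  push_neg at hal
  exfalso
  have hf_le_one : ∀ j, f j ≤ 1 := by
    intro j
    rcases Nat.eq_zero_or_pos j with rfl | hj
    · simp only [hfdef, hAr0, _root_.div_zero]
      norm_num
    · have hA := hArpos j hj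
      simp only [hfdef]
      rw [div_le_one hA]
      have h1 := hBrAr j
      have h2 := hDr_nonneg (j + 1)
      linarith
  have hSet : {x : ℝ | ∀ᶠ j in Filter.atTop, x ≤ f j}.Nonempty := by
    by_contra hne
    rw [Set.not_nonempty_iff_eq_empty] at hne
    have hl0 : Filter.liminf f Filter.atTop = 0 := by
      rw [Filter.liminf_eq, hne, Real.sSup_empty]
    rw [hl0] at hal
    exact absurd hal (not_lt.2 ha0)
  obtain ⟨x, hxS, hax⟩ := exists_lt_of_lt_csSup hSet (by rw [← Filter.liminf_eq]; exact hal)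
  have hxev : ∀ᶠ j in Filter.atTop, x ≤ f j := hxS
  have hev : ∀ᶠ j in Filter.atTop, a < f j := hxev.mono fun j hj => lt_of_lt_of_le hax hj
  obtain ⟨J₁, hJ₁⟩ := Filter.eventually_atTop.1 (hev.and (Filter.eventually_ge_atTop 1))
  have hkey : ∀ j, J₁ + 1 ≤ j → a * Ar j ≤ Br j - Dr (j + 1) := by
    intro j hj
    obtain ⟨haf, hj1⟩ := hJ₁ j (by omega)
    have hA := hArpos j hj1
    simp only [hfdef] at haf
    exact (le_div_iff₀ hA).1 haf.le
  have ha1 : a ≤ 1 := by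
    have hl1 : Filter.liminf f Filter.atTop ≤ 1 := by
      rw [Filter.liminf_eq]
      refine csSup_le hSet fun x' hx' => ?_
      obtain ⟨N, hN⟩ := Filter.eventually_atTop.1 hx'
      exact (hN N le_rfl).trans (hf_le_one N)
    exact hal.le.trans hl1
  set J₀ := J₁ + 1 with hJ₀def
  set Creal := (∑ j ∈ Finset.range (J₀ + 2), Real.exp (a * Ar j + Dr (j + 1))) + 1 with hCdef
  have hC1 : 1 ≤ Creal := by
    have h1 : 0 ≤ ∑ j ∈ Finset.range (J₀ + 2), Real.exp (a * Ar j + Dr (j + 1)) :=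
      Finset.sum_nonneg fun j _ => (Real.exp_pos _).le
    rw [hCdef]
    linarith
  have hCub : ∀ j, j < J₀ + 2 → Real.exp (a * Ar j + Dr (j + 1)) ≤ Creal := by
    intro j hj
    have h1 : Real.exp (a * Ar j + Dr (j + 1))
        ≤ ∑ j' ∈ Finset.range (J₀ + 2), Real.exp (a * Ar j' + Dr (j' + 1)) :=
      Finset.single_le_sum (f := fun j' => Real.exp (a * Ar j' + Dr (j' + 1)))
        (fun i _ => (Real.exp_pos _).le) (Finset.mem_range.2 hj)
    rw [hCdef]
    linarith
  have hKEY1 : ∀ j, Real.exp (-Br j + Dr (j + 1) + a * Ar j) ≤ Creal := by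
    intro j
    by_cases hj : J₀ ≤ j
    · have h1 := hkey j hj
      have h2 : -Br j + Dr (j + 1) + a * Ar j ≤ 0 := by linarith
      exact (Real.exp_le_one_iff.2 h2).trans hC1
    · refine le_trans ?_ (hCub j (by omega))
      apply Real.exp_le_exp.2
      have := hBr_nonneg j
      linarith
  have hKEY2 : ∀ j, Real.exp (-Br (j + 1) + Dr (j + 1) + a * Ar (j + 1)) ≤ Creal := by
    intro j
    by_cases hj : J₀ ≤ j + 1
    · have h1 := hkey (j + 1) hj
      have h2 := hDr_mono (j + 1)
      have h3 : -Br (j + 1) + Dr (j + 1) + a * Ar (j + 1) ≤ 0 := by linarith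
      exact (Real.exp_le_one_iff.2 h3).trans hC1
    · refine le_trans ?_ (hCub (j + 1) (by omega))
      apply Real.exp_le_exp.2
      have h4 := hBr_nonneg (j + 1)
      have h5 := hDr_mono (j + 1)
      linarith
  -- the Frostman constant
  have hρa0 : ρ ^ a ≠ 0 := (ENNReal.rpow_pos hρpos hρtop).ne'
  have hρatop : ρ ^ a ≠ ⊤ := ENNReal.rpow_ne_top_of_nonneg ha0 hρtop
  set c₀ : ℝ≥0∞ := ENNReal.ofReal Creal * (ρ ^ a)⁻¹ with hc₀def
  have hc₀0 : c₀ ≠ 0 := by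
    rw [hc₀def]
    refine (ENNReal.mul_pos ?_ ?_).ne'
    · simp only [ne_eq, ENNReal.ofReal_eq_zero, not_le]
      linarith
    · simpa [ENNReal.inv_ne_zero] using hρatop
  have hc₀top : c₀ ≠ ⊤ := by
    rw [hc₀def]
    exact ENNReal.mul_ne_top ENNReal.ofReal_ne_top (by simpa [ENNReal.inv_ne_top] using hρa0)
  -- extract a cheap cover
  simp only [cylM] at haM
  have h00 := ENNReal.iSup_eq_zero.1 haM 0
  have hlt : (⨅ (c : ℕ → ℕ × (ℕ → I))
      (_ : (∀ i, 0 ≤ (c i).1) ∧ (⋂ j, ⋃₀ (J j)) ⊆ ⋃ i, cyl (c i).1 (c i).2),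
      ∑' i, (μ (cyl (c i).1 (c i).2)) ^ a) < c₀⁻¹ := by
    rw [h00]
    exact ENNReal.inv_pos.2 hc₀top
  obtain ⟨c, hc⟩ := iInf_lt_iff.1 hlt
  obtain ⟨⟨-, hcov⟩, hsum⟩ := iInf_lt_iff.1 hc
  have hWlt : c₀ * ∑' i, (μ (cyl (c i).1 (c i).2)) ^ a < 1 := by
    calc c₀ * ∑' i, (μ (cyl (c i).1 (c i).2)) ^ a < c₀ * c₀⁻¹ :=
          ENNReal.mul_lt_mul_right hc₀0 hc₀top hsum
      _ = 1 := ENNReal.mul_inv_cancel hc₀0 hc₀top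
  -- capture levels
  obtain ⟨K, hKspec, hKmin⟩ : ∃ K : ℕ → ℕ, (∀ i, (c i).1 ≤ levA d dt (K i))
      ∧ (∀ i k, k < K i → levA d dt k < (c i).1) := by
    refine ⟨fun i => Nat.find (hexists ((c i).1)),
      fun i => by exact Nat.find_spec (hexists ((c i).1)), fun i k hk => ?_⟩
    have h1 := Nat.find_min (hexists ((c i).1)) hk
    omega
  set gg : ℕ → (ℕ → I) → ℝ≥0∞ := fun i w =>
    if cyl (levA d dt (K i)) w ⊆ cyl (c i).1 (c i).2
    then massA μ d dt J Jt e (K i) w else 0 with hgg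
  -- the capture estimate
  have CAP : ∀ i, ES (gg i) (levA d dt (K i) - d 0) (d 0) z₀
      ≤ c₀ * (μ (cyl (c i).1 (c i).2)) ^ a := by
    intro i
    rcases Nat.eq_zero_or_pos (K i) with hK0 | hKpos
    · rw [hK0, hlev0, Nat.sub_self]
      have h3 : ES (gg i) 0 (d 0) z₀ = gg i z₀ := rfl
      rw [h3, hgg]
      simp only [hK0, hlev0]
      split
      · next hsub =>
        rw [hmass0]
        have h1 : ρ ≤ μ (cyl (c i).1 (c i).2) := by
          rw [hρdef, hz₀]
          exact measure_mono hsub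
        have h2 : ρ ^ a ≤ (μ (cyl (c i).1 (c i).2)) ^ a := ENNReal.rpow_le_rpow h1 ha0
        calc (1 : ℝ≥0∞) = ENNReal.ofReal 1 * ((ρ ^ a)⁻¹ * ρ ^ a) := by
              rw [ENNReal.inv_mul_cancel hρa0 hρatop, ENNReal.ofReal_one, one_mul]
          _ ≤ ENNReal.ofReal Creal * ((ρ ^ a)⁻¹ * (μ (cyl (c i).1 (c i).2)) ^ a) :=
              mul_le_mul' (ENNReal.ofReal_le_ofReal hC1) (mul_le_mul_right h2 _)
          _ = c₀ * (μ (cyl (c i).1 (c i).2)) ^ a := by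
              rw [hc₀def, mul_assoc]
      · exact zero_le
    have hup : (c i).1 ≤ levA d dt (K i) := hKspec i
    have hlo : levA d dt (K i - 1) < (c i).1 := hKmin i (K i - 1) (by omega)
    have hexprpowE : ∀ x cE : ℝ, (ENNReal.ofReal (Real.exp x)) ^ cE
        = ENNReal.ofReal (Real.exp (x * cE)) := by
      intro x cE
      rw [ENNReal.ofReal_rpow_of_pos (Real.exp_pos x)]
      congr 1
      rw [Real.rpow_def_of_pos (Real.exp_pos x), Real.log_exp]
    have hofinv : ∀ x : ℝ, (ENNReal.ofReal (Real.exp x))⁻¹ = ENNReal.ofReal (Real.exp (-x)) := by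
      intro x
      rw [Real.exp_neg, ENNReal.ofReal_inv_of_pos (Real.exp_pos x)]
    have hAB : ∀ j : ℕ, ENNReal.ofReal (Real.exp (-Br j + Dr j)) / ENNReal.ofReal (δs (j + 1))
        = ENNReal.ofReal (Real.exp (-Br j + Dr (j + 1))) := by
      intro j
      rw [← ENNReal.ofReal_div_of_pos (hpos (j + 1)).2.2.2.1]
      congr 1
      rw [div_eq_iff (hpos (j + 1)).2.2.2.1.ne']
      conv_rhs => rw [← Real.exp_log (hpos (j + 1)).2.2.2.1]
      rw [← Real.exp_add]
      congr 1
      rw [hDr_succ]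
      ring
    by_cases hP0 : agr (d 0) z₀ (c i).2
    swap
    · have hzero : ∀ u, agr (d 0) u z₀ → gg i u = 0 := by
        intro u hu
        rw [hgg]
        refine if_neg (fun hsub => hP0 ?_)
        have h1 : agr ((c i).1) u (c i).2 := (cyl_subset_iff hup).1 hsub
        have hn0 : d 0 < (c i).1 := by
          have h2 : levA d dt 0 ≤ levA d dt (K i - 1) := hlev_le 0 (K i - 1) (by omega)
          rw [hlev0] at h2
          omega
        intro s hs
        rw [← hu s hs]
        exact h1 s (by omega)
      rw [ES_congr _ _ _ (fun u hu => hzero u hu), ES_zero]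
      exact zero_le
    rcases Nat.even_or_odd (K i) with ⟨jj, hjj⟩ | ⟨j, hjj⟩
    · -- EVEN capture level : K i = 2 j + 2
      obtain ⟨j, hKeq⟩ : ∃ j, K i = 2 * j + 2 := ⟨jj - 1, by omega⟩
      have hlevK : levA d dt (K i) = d (j + 1) := by
        rw [hKeq, show 2 * j + 2 = 2 * (j + 1) by omega, levA_even]
      have hn2 : (c i).1 ≤ d (j + 1) := by rw [← hlevK]; exact hup
      have hn1 : dt (j + 1) < (c i).1 := by
        have h4 := hlo
        rw [hKeq, show 2 * j + 2 - 1 = 2 * j + 1 by omega, levA_odd] at h4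
        exact h4
      have hd0t : d 0 ≤ dt (j + 1) := by
        have := hdmono.monotone (Nat.zero_le j); have := hd_lt j; omega
      rw [hlevK]
      set h1fun : (ℕ → I) → ℝ≥0∞ := fun u =>
        massA μ d dt J Jt e (2 * j + 1) u
          * ES (fun w => if rng (dt (j + 1)) ((c i).1) (c i).2 w
              ∧ cyl (d (j + 1)) w ∈ J (j + 1) then 1 else 0)
            (d (j + 1) - dt (j + 1)) (dt (j + 1)) u with hh1
      have hBu : ∀ u, agr (d 0) u z₀ →
          ES (gg i) (d (j + 1) - dt (j + 1)) (dt (j + 1)) u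
            = if rng (d 0) (dt (j + 1)) (c i).2 u then h1fun u else 0 := by
        intro u hu
        by_cases hP1 : rng (d 0) (dt (j + 1)) (c i).2 u
        swap
        · rw [if_neg hP1]
          rw [ES_congr (g₂ := fun _ => 0) _ _ _ ?_, ES_zero]
          intro w hw
          rw [hgg]
          refine if_neg (fun hsub => hP1 ?_)
          rw [hlevK] at hsub
          have ha1' : agr ((c i).1) w (c i).2 := (cyl_subset_iff hn2).1 hsub
          intro s h1 h2
          rw [← hw s (by omega)]
          exact ha1' s (by omega)
        rw [if_pos hP1]
        simp only [hh1]
        rw [← ES_mul_left]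
        refine ES_congr _ _ _ (fun w hw => ?_)
        simp only [hgg, hKeq]
        rw [show levA d dt (2 * j + 2) = d (j + 1) by
          rw [show 2 * j + 2 = 2 * (j + 1) by omega, levA_even]]
        have hm1 : massA μ d dt J Jt e (2 * j + 1) w = massA μ d dt J Jt e (2 * j + 1) u :=
          hminv (2 * j + 1) w u (by rw [levA_odd]; exact hw)
        by_cases hsub : cyl (d (j + 1)) w ⊆ cyl ((c i).1) (c i).2
        · rw [if_pos hsub]
          have hr2 : rng (dt (j + 1)) ((c i).1) (c i).2 w := by
            intro s h1 h2
            exact ((cyl_subset_iff hn2).1 hsub) s (by omega)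
          rw [massA_even]
          by_cases hnode : cyl (d (j + 1)) w ∈ J (j + 1)
          · rw [if_pos hnode, if_pos ⟨hr2, hnode⟩, hm1, mul_one]
          · rw [if_neg hnode, if_neg (fun hcc => hnode hcc.2), mul_zero]
        · rw [if_neg hsub]
          by_cases hr2 : rng (dt (j + 1)) ((c i).1) (c i).2 w
          · exfalso
            apply hsub
            refine cyl_subset_cyl hn2 ?_
            intro s hs
            rcases le_or_gt s (d 0) with h1 | h1
            · rw [hw s (le_trans h1 hd0t), hu s h1]
              exact hP0 s h1
            rcases le_or_gt s (dt (j + 1)) with h2 | h2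
            · rw [hw s h2]
              exact hP1 s h1 h2
            · exact hr2 s h2 hs
          · rw [if_neg (fun hcc => hr2 hcc.1), mul_zero]
      have hcomp := ES_comp' (gg i) (d (j + 1) - d 0) (dt (j + 1) - d 0)
        (d (j + 1) - dt (j + 1)) (d 0) (dt (j + 1)) z₀ (by omega) (by omega)
      rw [hcomp]
      have hEq := ES_congr (g₁ := ES (gg i) (d (j + 1) - dt (j + 1)) (dt (j + 1)))
        (g₂ := fun u => if rng (d 0) (dt (j + 1)) (c i).2 u then h1fun u else 0)
        (dt (j + 1) - d 0) (d 0) z₀ hBu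
      rw [hEq, ES_rng' ((c i).2) h1fun (dt (j + 1) - d 0) (d 0) (dt (j + 1)) z₀ (by omega)]
      set u₀ := splice (d 0) (dt (j + 1)) ((c i).2) z₀ with hu₀
      simp only [hh1]
      by_cases hm : massA μ d dt J Jt e (2 * j + 1) u₀ = 0
      · simp [hm]
      obtain ⟨hSt, -⟩ := hsupJt j u₀ hm
      by_cases hEI : ES (fun w => if rng (dt (j + 1)) ((c i).1) (c i).2 w
          ∧ cyl (d (j + 1)) w ∈ J (j + 1) then 1 else 0)
          (d (j + 1) - dt (j + 1)) (dt (j + 1)) u₀ = 0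
      · rw [hEI, mul_zero]
        exact zero_le
      obtain ⟨xw, hxwagr, hxwne⟩ := ES_pos_witness _ _ _ _ hEI
      have hxw : rng (dt (j + 1)) ((c i).1) (c i).2 xw ∧ cyl (d (j + 1)) xw ∈ J (j + 1) := by
        by_contra hcc
        exact hxwne (if_neg hcc)
      have hle1 : ES (fun w => if rng (dt (j + 1)) ((c i).1) (c i).2 w
          ∧ cyl (d (j + 1)) w ∈ J (j + 1) then 1 else 0)
          (d (j + 1) - dt (j + 1)) (dt (j + 1)) u₀ ≤ 1 := by
        refine ES_le_one _ _ _ _ (fun u hu => ?_) (fun u u' hu hu' hgu hgu' => ?_)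
        · split
          · exact le_rfl
          · exact zero_le_one
        · have hU : rng (dt (j + 1)) ((c i).1) (c i).2 u ∧ cyl (d (j + 1)) u ∈ J (j + 1) := by
            by_contra hcc
            exact hgu (if_neg hcc)
          have hU' : rng (dt (j + 1)) ((c i).1) (c i).2 u' ∧ cyl (d (j + 1)) u' ∈ J (j + 1) := by
            by_contra hcc
            exact hgu' (if_neg hcc)
          have hsubSt : cyl (d (j + 1)) u ⊆ cyl (dt (j + 1)) u₀ :=
            cyl_subset_cyl (hdtd j) (fun s hs => hu s hs)
          have hsubSt' : cyl (d (j + 1)) u' ⊆ cyl (dt (j + 1)) u₀ :=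
            cyl_subset_cyl (hdtd j) (fun s hs => hu' s hs)
          obtain ⟨V, hV, hVuniq⟩ := huniq j _ hSt
          have h8 : cyl (d (j + 1)) u = V := hVuniq _ ⟨hU.2, hsubSt⟩
          have h9 : cyl (d (j + 1)) u' = V := hVuniq _ ⟨hU'.2, hsubSt'⟩
          have h10 : agr (d (j + 1)) u u' := agr_of_cyl_eq (h8.trans h9.symm)
          have h11 : dt (j + 1) + (d (j + 1) - dt (j + 1)) = d (j + 1) := by
            have := hdtd j; omega
          rw [h11]
          exact h10
      have hUsubC : cyl (d (j + 1)) xw ⊆ cyl ((c i).1) (c i).2 := by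
        refine cyl_subset_cyl hn2 (fun s hs => ?_)
        rcases le_or_gt s (dt (j + 1)) with h1 | h1
        · rcases le_or_gt s (d 0) with h2 | h2
          · rw [hxwagr s h1, hu₀, splice_agr_low s h2]
            exact hP0 s h2
          · rw [hxwagr s h1, hu₀, splice_mid s h2 h1]
        · exact hxw.1 s h1 hs
      have hplo := chainLo (j + 1) xw hxw.2
      have hpC : ENNReal.ofReal (Real.exp (-Ar (j + 1))) * ρ ≤ μ (cyl ((c i).1) (c i).2) :=
        hplo.trans (measure_mono hUsubC)
      calc massA μ d dt J Jt e (2 * j + 1) u₀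
            * ES (fun w => if rng (dt (j + 1)) ((c i).1) (c i).2 w
                ∧ cyl (d (j + 1)) w ∈ J (j + 1) then 1 else 0)
              (d (j + 1) - dt (j + 1)) (dt (j + 1)) u₀
          ≤ massA μ d dt J Jt e (2 * j + 1) u₀ * 1 := mul_le_mul_right hle1 _
        _ = massA μ d dt J Jt e (2 * j + 1) u₀ := mul_one _
        _ ≤ ENNReal.ofReal (Real.exp (-Br (j + 1) + Dr (j + 1))) := (hmassUB j).2 u₀
        _ ≤ c₀ * (μ (cyl ((c i).1) (c i).2)) ^ a := by
            have h12 : (ENNReal.ofReal (Real.exp (-Ar (j + 1))) * ρ) ^ a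
                ≤ (μ (cyl ((c i).1) (c i).2)) ^ a := ENNReal.rpow_le_rpow hpC ha0
            have h13 : (ENNReal.ofReal (Real.exp (-Ar (j + 1))) * ρ) ^ a
                = ENNReal.ofReal (Real.exp (-(a * Ar (j + 1)))) * ρ ^ a := by
              rw [ENNReal.mul_rpow_of_nonneg _ _ ha0, hexprpowE]
              congr 2
              ring
            calc ENNReal.ofReal (Real.exp (-Br (j + 1) + Dr (j + 1)))
                = ENNReal.ofReal (Real.exp (-Br (j + 1) + Dr (j + 1) + a * Ar (j + 1)))
                  * ENNReal.ofReal (Real.exp (-(a * Ar (j + 1)))) * ((ρ ^ a)⁻¹ * ρ ^ a) := by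
                  rw [ENNReal.inv_mul_cancel hρa0 hρatop, mul_one, hexpmul]
                  congr 1
                  ring
              _ ≤ ENNReal.ofReal Creal
                  * ENNReal.ofReal (Real.exp (-(a * Ar (j + 1)))) * ((ρ ^ a)⁻¹ * ρ ^ a) := by
                  exact mul_le_mul_left (mul_le_mul_left
                    (ENNReal.ofReal_le_ofReal (hKEY2 j)) _) _
              _ = c₀ * (ENNReal.ofReal (Real.exp (-(a * Ar (j + 1)))) * ρ ^ a) := by
                  rw [hc₀def]
                  ring
              _ ≤ c₀ * (μ (cyl ((c i).1) (c i).2)) ^ a := by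
                  exact mul_le_mul_right (h13 ▸ h12) _
    · -- ODD capture level : K i = 2 j + 1, flow capture
      have hKeq : K i = 2 * j + 1 := by omega
      have hlevK : levA d dt (K i) = dt (j + 1) := by rw [hKeq, levA_odd]
      have hn2 : (c i).1 ≤ dt (j + 1) := by rw [← hlevK]; exact hup
      have hn1 : d j < (c i).1 := by
        have h4 := hlo
        rw [hKeq, show 2 * j + 1 - 1 = 2 * j by omega, levA_even] at h4
        exact h4
      have hd0j : d 0 ≤ d j := hdmono.monotone (Nat.zero_le j)
      have hdjt : d j < dt (j + 1) := hd_lt j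
      rw [hlevK]
      set h1fun : (ℕ → I) → ℝ≥0∞ := fun u =>
        massA μ d dt J Jt e (2 * j) u / vA μ (dt (j + 1)) (Jt (j + 1)) (dt (j + 1) - d j) u
          * FA μ (dt (j + 1)) (Jt (j + 1)) e (d j) ((c i).1 - d j)
            (splice (d j) ((c i).1) ((c i).2) u) with hh1
      have hBu : ∀ u, agr (d 0) u z₀ →
          ES (gg i) (dt (j + 1) - d j) (d j) u
            = if rng (d 0) (d j) (c i).2 u then h1fun u else 0 := by
        intro u hu
        by_cases hP1 : rng (d 0) (d j) (c i).2 u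
        swap
        · rw [if_neg hP1]
          rw [ES_congr (g₂ := fun _ => 0) _ _ _ ?_, ES_zero]
          intro w hw
          rw [hgg]
          refine if_neg (fun hsub => hP1 ?_)
          rw [hlevK] at hsub
          have ha1' : agr ((c i).1) w (c i).2 := (cyl_subset_iff hn2).1 hsub
          intro s h1 h2
          rw [← hw s (by omega)]
          exact ha1' s (by omega)
        rw [if_pos hP1]
        have hE1 : ES (gg i) (dt (j + 1) - d j) (d j) u
            = ES (fun w => (massA μ d dt J Jt e (2 * j) u
                / vA μ (dt (j + 1)) (Jt (j + 1)) (dt (j + 1) - d j) u)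
                * (if rng (d j) ((c i).1) (c i).2 w
                    then FA μ (dt (j + 1)) (Jt (j + 1)) e (d j) (dt (j + 1) - d j) w else 0))
              (dt (j + 1) - d j) (d j) u := by
          refine ES_congr _ _ _ (fun w hw => ?_)
          simp only [hgg, hKeq]
          rw [levA_odd d dt j]
          by_cases hsub : cyl (dt (j + 1)) w ⊆ cyl ((c i).1) (c i).2
          · rw [if_pos hsub]
            have hr2 : rng (d j) ((c i).1) (c i).2 w := by
              intro s h1 h2
              exact ((cyl_subset_iff hn2).1 hsub) s (by omega)
            rw [if_pos hr2, massA_odd]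
            have hm1 : massA μ d dt J Jt e (2 * j) w = massA μ d dt J Jt e (2 * j) u :=
              hminv (2 * j) w u (by rw [levA_even]; exact hw)
            have hm2 : vA μ (dt (j + 1)) (Jt (j + 1)) (dt (j + 1) - d j) w
                = vA μ (dt (j + 1)) (Jt (j + 1)) (dt (j + 1) - d j) u :=
              vA_invariant μ (dt (j + 1)) (Jt (j + 1)) (dt (j + 1) - d j) (d j) w u
                (by omega) hw
            rw [hm1, hm2, div_eq_mul_inv, div_eq_mul_inv]
            ring
          · rw [if_neg hsub]
            by_cases hr2 : rng (d j) ((c i).1) (c i).2 w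
            · exfalso
              apply hsub
              refine cyl_subset_cyl hn2 ?_
              intro s hs
              rcases le_or_gt s (d 0) with h1 | h1
              · rw [hw s (le_trans h1 hd0j), hu s h1]
                exact hP0 s h1
              rcases le_or_gt s (d j) with h2 | h2
              · rw [hw s h2]
                exact hP1 s h1 h2
              · exact hr2 s h2 hs
            · rw [if_neg hr2, mul_zero]
        rw [hE1, ES_mul_left]
        simp only [hh1]
        congr 1
        rw [ES_comp' _ (dt (j + 1) - d j) ((c i).1 - d j) (dt (j + 1) - (c i).1)
          (d j) ((c i).1) u (by omega) (by omega)]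
        have htel : ∀ xr : ℕ → I,
            ES (FA μ (dt (j + 1)) (Jt (j + 1)) e (d j) (dt (j + 1) - d j))
              (dt (j + 1) - (c i).1) ((c i).1) xr
            = FA μ (dt (j + 1)) (Jt (j + 1)) e (d j) ((c i).1 - d j) xr := by
          intro xr
          have h20 := FA_telescope μ (dt (j + 1)) (Jt (j + 1)) e (d j) he (by omega)
            (dt (j + 1) - (c i).1) ((c i).1 - d j) xr (by omega)
          rwa [show d j + ((c i).1 - d j) = (c i).1 by omega] at h20
        have hE2 : ES (ES (fun w => if rng (d j) ((c i).1) (c i).2 w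
              then FA μ (dt (j + 1)) (Jt (j + 1)) e (d j) (dt (j + 1) - d j) w else 0)
              (dt (j + 1) - (c i).1) ((c i).1)) ((c i).1 - d j) (d j) u
            = ES (fun xr => if rng (d j) ((c i).1) (c i).2 xr
                then FA μ (dt (j + 1)) (Jt (j + 1)) e (d j) ((c i).1 - d j) xr else 0)
              ((c i).1 - d j) (d j) u := by
          refine ES_congr _ _ _ (fun xr _ => ?_)
          rw [ES_pullout (P := rng (d j) ((c i).1) (c i).2) _ (dt (j + 1) - (c i).1)
            ((c i).1) xr ?_]
          · split
            · exact htel xr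
            · rfl
          · intro w hw
            constructor
            · intro hr s h1 h2
              rw [← hw s (by omega)]
              exact hr s h1 h2
            · intro hr s h1 h2
              rw [hw s (by omega)]
              exact hr s h1 h2
        rw [hE2, ES_rng' ((c i).2) _ ((c i).1 - d j) (d j) ((c i).1) u (by omega)]
      have hcomp := ES_comp' (gg i) (dt (j + 1) - d 0) (d j - d 0)
        (dt (j + 1) - d j) (d 0) (d j) z₀ (by omega) (by omega)
      rw [hcomp]
      have hEq := ES_congr (g₁ := ES (gg i) (dt (j + 1) - d j) (d j))
        (g₂ := fun u => if rng (d 0) (d j) (c i).2 u then h1fun u else 0)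
        (d j - d 0) (d 0) z₀ hBu
      rw [hEq, ES_rng' ((c i).2) h1fun (d j - d 0) (d 0) (d j) z₀ (by omega)]
      set u₀ := splice (d 0) (d j) ((c i).2) z₀ with hu₀
      simp only [hh1]
      by_cases hm : massA μ d dt J Jt e (2 * j) u₀ = 0
      · simp [hm]
      have hSp : cyl (d j) u₀ ∈ J j := hsupJ j u₀ hm
      have hagru₀ : agr (d j) u₀ ((c i).2) := by
        intro s hs
        rcases le_or_gt s (d 0) with h1 | h1
        · rw [hu₀, splice_agr_low s h1]
          exact hP0 s h1
        · rw [hu₀, splice_mid s h1 hs]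
      have hcylw₁ : cyl ((c i).1) (splice (d j) ((c i).1) ((c i).2) u₀)
          = cyl ((c i).1) (c i).2 := by
        refine cyl_congr ?_
        intro s hs
        rcases le_or_gt s (d j) with h1 | h1
        · rw [splice_agr_low s h1]
          exact hagru₀ s h1
        · rw [splice_mid s h1 hs]
      have hF : FA μ (dt (j + 1)) (Jt (j + 1)) e (d j) ((c i).1 - d j)
          (splice (d j) ((c i).1) ((c i).2) u₀) ≤ μ (cyl ((c i).1) (c i).2) := by
        refine le_trans (FA_le_vA μ (dt (j + 1)) (Jt (j + 1)) e (d j) he ((c i).1 - d j)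
          _ (by omega)) ?_
        have h5 : dt (j + 1) - (d j + ((c i).1 - d j)) = dt (j + 1) - (c i).1 := by omega
        rw [h5]
        refine le_trans (vA_le μ (dt (j + 1)) (Jt (j + 1)) (dt (j + 1) - (c i).1)
          ((c i).1) _ (by omega)) ?_
        rw [hcylw₁]
      have hq0 : μ (cyl (d j) u₀) ≠ 0 := hJpos j u₀ hSp
      have hqtop : μ (cyl (d j) u₀) ≠ ⊤ := (measure_lt_top μ _).ne
      have hVge' := hVge j u₀ hSp
      have hUB := (hmassUB j).1 u₀
      have hCsubSp : cyl ((c i).1) ((c i).2) ⊆ cyl (d j) u₀ :=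
        cyl_subset_cyl (by omega) (fun s hs => (hagru₀ s hs).symm)
      have hpq : μ (cyl ((c i).1) (c i).2) ≤ μ (cyl (d j) u₀) := measure_mono hCsubSp
      by_cases hp0 : μ (cyl ((c i).1) (c i).2) = 0
      · have hF0 : FA μ (dt (j + 1)) (Jt (j + 1)) e (d j) ((c i).1 - d j)
            (splice (d j) ((c i).1) ((c i).2) u₀) = 0 :=
          le_antisymm (hp0 ▸ hF) (zero_le)
        rw [hF0, mul_zero]
        exact zero_le
      have hptop : μ (cyl ((c i).1) (c i).2) ≠ ⊤ := (measure_lt_top μ _).ne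
      have hBnum : massA μ d dt J Jt e (2 * j) u₀
          / vA μ (dt (j + 1)) (Jt (j + 1)) (dt (j + 1) - d j) u₀
          ≤ ENNReal.ofReal (Real.exp (-Br j + Dr (j + 1))) / μ (cyl (d j) u₀) := by
        refine le_trans (ENNReal.div_le_div hUB hVge') ?_
        have hδ0 : ENNReal.ofReal (δs (j + 1)) ≠ 0 := by
          simp only [ne_eq, ENNReal.ofReal_eq_zero, not_le]
          exact (hpos (j + 1)).2.2.2.1
        have hδtop : ENNReal.ofReal (δs (j + 1)) ≠ ⊤ := ENNReal.ofReal_ne_top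
        have hdd : ENNReal.ofReal (Real.exp (-Br j + Dr j))
            / (ENNReal.ofReal (δs (j + 1)) * μ (cyl (d j) u₀))
            = ENNReal.ofReal (Real.exp (-Br j + Dr j)) / ENNReal.ofReal (δs (j + 1))
              / μ (cyl (d j) u₀) := by
          rw [div_eq_mul_inv, div_eq_mul_inv, div_eq_mul_inv,
            ENNReal.mul_inv (Or.inl hδ0) (Or.inl hδtop), mul_assoc]
        rw [hdd, hAB j]
      have hqinv : (μ (cyl (d j) u₀)) ^ (-a)
          ≤ ENNReal.ofReal (Real.exp (a * Ar j)) * (ρ ^ a)⁻¹ := by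
        have hchain' := chainLo j u₀ hSp
        have h6 : (ENNReal.ofReal (Real.exp (-Ar j)) * ρ) ^ a ≤ (μ (cyl (d j) u₀)) ^ a :=
          ENNReal.rpow_le_rpow hchain' ha0
        have h7 : (ENNReal.ofReal (Real.exp (-Ar j)) * ρ) ^ a
            = ENNReal.ofReal (Real.exp (-(a * Ar j))) * ρ ^ a := by
          rw [ENNReal.mul_rpow_of_nonneg _ _ ha0, hexprpowE]
          congr 2
          ring
        rw [ENNReal.rpow_neg]
        calc ((μ (cyl (d j) u₀)) ^ a)⁻¹
            ≤ ((ENNReal.ofReal (Real.exp (-Ar j)) * ρ) ^ a)⁻¹ := ENNReal.inv_le_inv.2 h6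
          _ = (ENNReal.ofReal (Real.exp (-(a * Ar j))) * ρ ^ a)⁻¹ := by rw [h7]
          _ = ENNReal.ofReal (Real.exp (a * Ar j)) * (ρ ^ a)⁻¹ := by
              rw [ENNReal.mul_inv (Or.inr hρatop) (Or.inr hρa0), hofinv]
              congr 2
              ring
      calc massA μ d dt J Jt e (2 * j) u₀
            / vA μ (dt (j + 1)) (Jt (j + 1)) (dt (j + 1) - d j) u₀
            * FA μ (dt (j + 1)) (Jt (j + 1)) e (d j) ((c i).1 - d j)
              (splice (d j) ((c i).1) ((c i).2) u₀)
          ≤ ENNReal.ofReal (Real.exp (-Br j + Dr (j + 1))) / μ (cyl (d j) u₀)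
            * μ (cyl ((c i).1) (c i).2) := mul_le_mul' hBnum hF
        _ = (μ (cyl ((c i).1) (c i).2)) ^ a * ((μ (cyl ((c i).1) (c i).2)) ^ (1 - a)
            * (ENNReal.ofReal (Real.exp (-Br j + Dr (j + 1))) / μ (cyl (d j) u₀))) := by
            have hps : (μ (cyl ((c i).1) (c i).2)) ^ a * (μ (cyl ((c i).1) (c i).2)) ^ (1 - a)
                = μ (cyl ((c i).1) (c i).2) := by
              rw [← ENNReal.rpow_add _ _ hp0 hptop]
              norm_num
            rw [← mul_assoc, hps, mul_comm]
        _ ≤ (μ (cyl ((c i).1) (c i).2)) ^ a * ((μ (cyl (d j) u₀)) ^ (1 - a)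
            * (ENNReal.ofReal (Real.exp (-Br j + Dr (j + 1))) / μ (cyl (d j) u₀))) := by
            refine mul_le_mul_right (mul_le_mul_left ?_ _) _
            exact ENNReal.rpow_le_rpow hpq (by linarith)
        _ ≤ (μ (cyl ((c i).1) (c i).2)) ^ a * c₀ := ?_
        _ = c₀ * (μ (cyl ((c i).1) (c i).2)) ^ a := mul_comm _ _
      refine mul_le_mul_right ?_ _
      have hsq : (μ (cyl (d j) u₀)) ^ (1 - a) = μ (cyl (d j) u₀) * (μ (cyl (d j) u₀)) ^ (-a) := by
        have h21 : (μ (cyl (d j) u₀)) ^ (1 + -a)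
            = (μ (cyl (d j) u₀)) ^ (1:ℝ) * (μ (cyl (d j) u₀)) ^ (-a) :=
          ENNReal.rpow_add _ _ hq0 hqtop
        rw [ENNReal.rpow_one] at h21
        rw [← h21, sub_eq_add_neg]
      rw [hsq]
      calc μ (cyl (d j) u₀) * (μ (cyl (d j) u₀)) ^ (-a)
            * (ENNReal.ofReal (Real.exp (-Br j + Dr (j + 1))) / μ (cyl (d j) u₀))
          = (μ (cyl (d j) u₀)) ^ (-a) * ENNReal.ofReal (Real.exp (-Br j + Dr (j + 1)))
            * (μ (cyl (d j) u₀) * (μ (cyl (d j) u₀))⁻¹) := by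
            rw [div_eq_mul_inv]
            ring
        _ = (μ (cyl (d j) u₀)) ^ (-a) * ENNReal.ofReal (Real.exp (-Br j + Dr (j + 1))) := by
            rw [ENNReal.mul_inv_cancel hq0 hqtop, mul_one]
        _ ≤ ENNReal.ofReal (Real.exp (a * Ar j)) * (ρ ^ a)⁻¹
            * ENNReal.ofReal (Real.exp (-Br j + Dr (j + 1))) := mul_le_mul_left hqinv _
        _ = ENNReal.ofReal (Real.exp (a * Ar j)) * ENNReal.ofReal (Real.exp (-Br j + Dr (j + 1)))
            * (ρ ^ a)⁻¹ := by ring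
        _ = ENNReal.ofReal (Real.exp (-Br j + Dr (j + 1) + a * Ar j)) * (ρ ^ a)⁻¹ := by
            rw [hexpmul]
            congr 2
            ring
        _ ≤ ENNReal.ofReal Creal * (ρ ^ a)⁻¹ :=
            mul_le_mul_left (ENNReal.ofReal_le_ofReal (hKEY1 j)) _
        _ = c₀ := hc₀def.symm

  have hsumCAP : ∑' i, (c₀ * (μ (cyl (c i).1 (c i).2)) ^ a) < 1 := by
    rw [ENNReal.tsum_mul_left]
    exact hWlt
  by_cases hroot : ∃ i, K i = 0 ∧ cyl (d 0) z₀ ⊆ cyl (c i).1 (c i).2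
  · obtain ⟨i, hKi, hsub⟩ := hroot
    have h2 := CAP i
    rw [hKi, hlev0, Nat.sub_self] at h2
    have h3 : ES (gg i) 0 (d 0) z₀ = gg i z₀ := rfl
    rw [h3, hgg] at h2
    simp only [hKi, hlev0] at h2
    rw [if_pos hsub, hmass0] at h2
    have h4 : c₀ * (μ (cyl (c i).1 (c i).2)) ^ a
        ≤ ∑' i', c₀ * (μ (cyl (c i').1 (c i').2)) ^ a := ENNReal.le_tsum i
    exact absurd (lt_of_le_of_lt (h2.trans h4) hsumCAP) (by norm_num)
  push_neg at hroot
  set κ : ℕ → (ℕ → I) → ℝ≥0∞ := fun k z => ∑' i, if k < K i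
    then ES (gg i) (levA d dt (K i) - levA d dt k) (levA d dt k) z else 0 with hκ
  have hκ0 : κ 0 z₀ < 1 := by
    have hterm : ∀ i, (if 0 < K i
        then ES (gg i) (levA d dt (K i) - levA d dt 0) (levA d dt 0) z₀ else 0)
        ≤ c₀ * (μ (cyl (c i).1 (c i).2)) ^ a := by
      intro i
      split
      · rw [hlev0]
        exact CAP i
      · exact zero_le
    calc κ 0 z₀ ≤ ∑' i, c₀ * (μ (cyl (c i).1 (c i).2)) ^ a := by
          rw [hκ]
          exact ENNReal.tsum_le_tsum hterm
      _ < 1 := hsumCAP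
  -- the level-by-level decomposition of κ
  have hκsplit : ∀ k z, κ k z = ES (fun u =>
      (∑' i, if K i = k + 1 then gg i u else 0) + κ (k + 1) u)
      (levA d dt (k + 1) - levA d dt k) (levA d dt k) z := by
    intro k z
    have hik : ∀ i : ℕ, (if k < K i
        then ES (gg i) (levA d dt (K i) - levA d dt k) (levA d dt k) z else 0)
        = ES (fun u => (if K i = k + 1 then gg i u else 0)
            + (if k + 1 < K i
              then ES (gg i) (levA d dt (K i) - levA d dt (k + 1)) (levA d dt (k + 1)) u
              else 0)) (levA d dt (k + 1) - levA d dt k) (levA d dt k) z := by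
      intro i
      rcases lt_trichotomy (K i) (k + 1) with h | h | h
      · rw [if_neg (by omega)]
        rw [ES_congr (g₂ := fun _ => 0) _ _ _ (fun u _ => by rw [if_neg (by omega),
          if_neg (by omega), add_zero])]
        rw [ES_zero]
      · rw [if_pos (by omega), h]
        refine (ES_congr _ _ _ (fun u _ => ?_)).symm
        rw [if_pos rfl, if_neg (by omega), add_zero]
      · rw [if_pos (by omega)]
        have h1 := hlev_le k (k + 1) (by omega)
        have h2 := hlev_le (k + 1) (K i) (by omega)
        rw [ES_comp' (gg i) _ (levA d dt (k + 1) - levA d dt k)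
          (levA d dt (K i) - levA d dt (k + 1)) (levA d dt k) (levA d dt (k + 1)) z
          (by omega) (by omega)]
        refine ES_congr _ _ _ (fun u _ => ?_)
        rw [if_neg (by omega), zero_add, if_pos h]
    rw [hκ]
    simp only
    rw [tsum_congr hik, ← ES_tsum]
    refine ES_congr _ _ _ (fun u _ => ?_)
    rw [ENNReal.tsum_add]
  -- the step lemma
  have hstep : ∀ k z, κ k z < massA μ d dt J Jt e k z →
      ∃ u, agr (levA d dt k) u z ∧ κ (k + 1) u < massA μ d dt J Jt e (k + 1) u ∧
        ∀ i, K i = k + 1 → ¬ cyl (levA d dt (k + 1)) u ⊆ cyl (c i).1 (c i).2 := by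
    intro k z halive
    by_contra hcon
    push_neg at hcon
    have hpay : ∀ u, agr (levA d dt k) u z → massA μ d dt J Jt e (k + 1) u
        ≤ (∑' i, if K i = k + 1 then gg i u else 0) + κ (k + 1) u := by
      intro u hu
      by_cases hdirty : κ (k + 1) u < massA μ d dt J Jt e (k + 1) u
      · obtain ⟨i, hKi, hsub⟩ := hcon u hu hdirty
        have h1 : gg i u = massA μ d dt J Jt e (k + 1) u := by
          rw [hgg]
          simp only [hKi]
          rw [if_pos hsub]
        have h2 : massA μ d dt J Jt e (k + 1) u
            ≤ ∑' i', if K i' = k + 1 then gg i' u else 0 := by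
          rw [← h1]
          have h3 := ENNReal.le_tsum (f := fun i' => if K i' = k + 1 then gg i' u else 0) i
          rwa [if_pos hKi] at h3
        exact le_add_right h2
      · push_neg at hdirty
        exact le_add_left hdirty
    have hges : massA μ d dt J Jt e k z ≤ κ k z := by
      rw [hκsplit k z]
      exact le_trans (hsuper k z) (ES_mono _ _ _ hpay)
    exact absurd halive (not_lt.2 hges)
  -- the surviving branch
  have hGood0 : κ 0 z₀ < massA μ d dt J Jt e 0 z₀ := by
    rw [hmass0]; exact hκ0
  have hseq : ∃ zs : ℕ → (ℕ → I), zs 0 = z₀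
      ∧ (∀ k, κ k (zs k) < massA μ d dt J Jt e k (zs k)
          ∧ ∀ i, K i = k → ¬ cyl (levA d dt k) (zs k) ⊆ cyl (c i).1 (c i).2)
      ∧ ∀ k, agr (levA d dt k) (zs (k + 1)) (zs k) := by
    have base : κ 0 z₀ < massA μ d dt J Jt e 0 z₀
        ∧ ∀ i, K i = 0 → ¬ cyl (levA d dt 0) z₀ ⊆ cyl (c i).1 (c i).2 := by
      refine ⟨hGood0, fun i hKi hsub => hroot i hKi ?_⟩
      rwa [hlev0] at hsub
    have hGoodstep : ∀ k u, (κ k u < massA μ d dt J Jt e k u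
          ∧ ∀ i, K i = k → ¬ cyl (levA d dt k) u ⊆ cyl (c i).1 (c i).2) →
        ∃ u', (κ (k + 1) u' < massA μ d dt J Jt e (k + 1) u'
          ∧ ∀ i, K i = k + 1 → ¬ cyl (levA d dt (k + 1)) u' ⊆ cyl (c i).1 (c i).2)
          ∧ agr (levA d dt k) u' u := by
      intro k u hu
      obtain ⟨u', h1, h2, h3⟩ := hstep k u hu.1
      exact ⟨u', ⟨h2, h3⟩, h1⟩
    let T : ∀ k : ℕ, {u : ℕ → I // κ k u < massA μ d dt J Jt e k u
        ∧ ∀ i, K i = k → ¬ cyl (levA d dt k) u ⊆ cyl (c i).1 (c i).2} := fun k =>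
      Nat.rec ⟨z₀, base⟩
        (fun k p => ⟨(hGoodstep k p.1 p.2).choose, (hGoodstep k p.1 p.2).choose_spec.1⟩) k
    refine ⟨fun k => (T k).1, rfl, fun k => (T k).2, fun k => ?_⟩
    exact (hGoodstep k (T k).1 (T k).2).choose_spec.2
  obtain ⟨zs, hzs0, hzsGood, hzsAgr⟩ := hseq
  have hchain : ∀ k k', k ≤ k' → agr (levA d dt k) (zs k') (zs k) := by
    intro k k' h
    induction k' with
    | zero =>
      have hk0 : k = 0 := by omega
      subst hk0
      exact agr_refl _ _
    | succ k' ih =>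
      rcases Nat.lt_or_ge k (k' + 1) with h1 | h2
      · exact ((hzsAgr k').mono (hlev_le k k' (by omega))).trans (ih (by omega))
      · have hk : k = k' + 1 := by omega
        subst hk
        exact agr_refl _ _
  have hxin : ∀ k, (fun n => zs (Nat.find (hexists n)) n) ∈ cyl (levA d dt k) (zs k) := by
    intro k s hs
    rcases le_total (Nat.find (hexists s)) k with h | h
    · exact ((hchain _ k h) s (Nat.find_spec (hexists s))).symm ▸
        ((hchain _ k h) s (Nat.find_spec (hexists s)))
    · exact (hchain k _ h) s hs
  set x : ℕ → I := fun n => zs (Nat.find (hexists n)) n with hxdef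
  have hxE : x ∈ ⋂ j, ⋃₀ (J j) := by
    refine Set.mem_iInter.2 fun j => ?_
    have hmassj : massA μ d dt J Jt e (2 * j) (zs (2 * j)) ≠ 0 := by
      intro h0
      have h1 := (hzsGood (2 * j)).1
      rw [h0] at h1
      exact absurd h1 (not_lt.2 (zero_le))
    have hJj := hsupJ j _ hmassj
    refine ⟨cyl (d j) (zs (2 * j)), hJj, ?_⟩
    have h2 := hxin (2 * j)
    rwa [levA_even d dt j] at h2
  obtain ⟨-, ⟨i, rfl⟩, hxi⟩ := hcov hxE
  rcases Nat.eq_zero_or_pos (K i) with hKi | hKi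
  · refine hroot i hKi ?_
    have h1 : x ∈ cyl (d 0) z₀ := by
      have h2 := hxin 0
      rwa [hlev0, hzs0] at h2
    have h2 : (c i).1 ≤ d 0 := by
      have h3 := hKspec i
      rwa [hKi, hlev0] at h3
    exact cyl_subset_of_mem h2 h1 hxi
  · refine (hzsGood (K i)).2 i rfl ?_
    exact cyl_subset_of_mem (hKspec i) (hxin (K i)) hxi
end
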